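/- arXiv:1012.2630 — 5 statements merged into one kernel-verified Lean document; each statement's English description precedes it below -/
import Mathlib

section
/- Let M : Matrix (Fin m) (Fin n) ℝ and let r be a natural number. Suppose M i j = ∑_{k : Fin r} w k i * w' k j = ∑_{k : Fin r} u k i * u' k j, where w, u : Fin r → (Fin m → ℝ) are each linearly independent families and w', u' : Fin r → (Fin n → ℝ) are each linearly independent families. Then there exist r×r real matrices B and B' with Bᵀ * B' = 1 (in particular both invertible) such that w k = ∑_{l} B k l • u l and w' k = ∑_{l} B' k l • u' l for all k. (Uniqueness of the decomposition of a state into decomposable terms, up to linear transformations B, B' with BᵀB' = 1.) -/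
theorem exists_dual_family {V : Type*} [AddCommGroup V] [Module ℝ V] {r : ℕ}
    {v : Fin r → V} (hv : LinearIndependent ℝ v) :
    ∃ f : Fin r → (V →ₗ[ℝ] ℝ), ∀ l k, f l (v k) = if k = l then 1 else 0 := by
  set T : (Fin r → ℝ) →ₗ[ℝ] V := Fintype.linearCombination ℝ v with hT
  have hker : LinearMap.ker T = ⊥ := by
    rw [LinearMap.ker_eq_bot']
    intro c hc
    have := (Fintype.linearIndependent_iff.mp hv) c (by
      simpa [hT, Fintype.linearCombination_apply] using hc)
    funext i; exact this i
  obtain ⟨g, hg⟩ := T.exists_leftInverse_of_injective hker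
  refine ⟨fun l => (LinearMap.proj l).comp g, fun l k => ?_⟩
  have h1 : T (Pi.single k 1) = v k := by
    simp [hT, Fintype.linearCombination_apply_single]
  have h2 : g (T (Pi.single k 1)) = Pi.single k 1 := by
    have := congrArg (fun F => F (Pi.single k (1:ℝ))) hg
    simpa using this
  simp only [LinearMap.comp_apply, LinearMap.proj_apply, ← h1, h2]
  simp [Pi.single_apply, eq_comm]



/-- **Uniqueness of the decomposition into decomposable terms.**
If a matrix `M` admits two decompositions `M i j = ∑ k, w k i * w' k j
= ∑ k, u k i * u' k j` into `r` terms with linearly independent families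
`w, u` (on the left) and `w', u'` (on the right), then the two
decompositions are related by matrices `B, B'` with `Bᵀ * B' = 1`. -/
theorem decomposition_unique (m n r : ℕ) (M : Matrix (Fin m) (Fin n) ℝ)
    (w u : Fin r → (Fin m → ℝ)) (w' u' : Fin r → (Fin n → ℝ))
    (hw : LinearIndependent ℝ w) (hw' : LinearIndependent ℝ w')
    (hu : LinearIndependent ℝ u) (hu' : LinearIndependent ℝ u')
    (hM : ∀ i j, M i j = ∑ k : Fin r, w k i * w' k j)
    (hM' : ∀ i j, M i j = ∑ k : Fin r, u k i * u' k j) :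
    ∃ B B' : Matrix (Fin r) (Fin r) ℝ,
      B.transpose * B' = 1 ∧
      (∀ k, w k = ∑ l : Fin r, B k l • u l) ∧
      (∀ k, w' k = ∑ l : Fin r, B' k l • u' l) := by
  obtain ⟨φ, hφ⟩ := exists_dual_family hw
  obtain ⟨ψ, hψ⟩ := exists_dual_family hw'
  obtain ⟨ψu, hψu⟩ := exists_dual_family hu'
  -- the two scalar identities, as vector identities
  have hvec : ∀ i, ∑ k : Fin r, w k i • w' k = ∑ k : Fin r, u k i • u' k := by
    intro i; funext j
    simpa [Finset.sum_apply] using (hM i j).symm.trans (hM' i j)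
  have hvec2 : ∀ j, ∑ k : Fin r, w' k j • w k = ∑ k : Fin r, u' k j • u k := by
    intro j; funext i
    have := (hM i j).symm.trans (hM' i j)
    simpa [Finset.sum_apply, mul_comm] using this
  set B : Matrix (Fin r) (Fin r) ℝ := Matrix.of fun l k => ψ l (u' k) with hBdef
  set B' : Matrix (Fin r) (Fin r) ℝ := Matrix.of fun l k => φ l (u k) with hB'def
  have hB : ∀ l, w l = ∑ k : Fin r, B l k • u k := by
    intro l; funext i
    have h1 : ψ l (∑ k : Fin r, w k i • w' k) = w l i := by
      rw [map_sum]
      simp [hψ, Finset.sum_ite_eq, map_smul]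
    have h2 : ψ l (∑ k : Fin r, u k i • u' k) = ∑ k : Fin r, B l k * u k i := by
      rw [map_sum]
      simp [hBdef, map_smul, smul_eq_mul, mul_comm]
    rw [hvec i] at h1
    rw [Finset.sum_apply]
    simp only [Pi.smul_apply, smul_eq_mul]
    rw [← h1, h2]
  have hB' : ∀ l, w' l = ∑ k : Fin r, B' l k • u' k := by
    intro l; funext j
    have h1 : φ l (∑ k : Fin r, w' k j • w k) = w' l j := by
      rw [map_sum]
      simp [hφ, Finset.sum_ite_eq, map_smul]
    have h2 : φ l (∑ k : Fin r, u' k j • u k) = ∑ k : Fin r, B' l k * u' k j := by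
      rw [map_sum]
      simp [hB'def, map_smul, smul_eq_mul, mul_comm]
    rw [hvec2 j] at h1
    rw [Finset.sum_apply]
    simp only [Pi.smul_apply, smul_eq_mul]
    rw [← h1, h2]
  refine ⟨B, B', ?_, hB, hB'⟩
  -- u b = ∑ l, B' l b • w l
  have hub : ∀ b i, ∑ l : Fin r, B' l b * w l i = u b i := by
    intro b i
    have h1 : ψu b (∑ k : Fin r, w k i • w' k) = ∑ l : Fin r, B' l b * w l i := by
      rw [map_sum]
      have : ∀ l, ψu b (w' l) = B' l b := by
        intro l
        rw [hB' l, map_sum]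
        simp [hψu, map_smul, Finset.sum_ite_eq]
      simp only [map_smul, smul_eq_mul, this]
      exact Finset.sum_congr rfl fun l _ => mul_comm _ _
    have h2 : ψu b (∑ k : Fin r, u k i • u' k) = u b i := by
      rw [map_sum]
      simp [hψu, map_smul, Finset.sum_ite_eq]
    rw [← h1, hvec i, h2]
  -- substitute w l i = ∑ a, B l a * u a i and use lin. indep. of u
  have key : ∀ b, ∑ a : Fin r, (∑ l : Fin r, B l a * B' l b) • u a = u b := by
    intro b; funext i
    have : ∑ l : Fin r, B' l b * (∑ a : Fin r, B l a * u a i) = u b i := by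
      rw [← hub b i]
      refine Finset.sum_congr rfl fun l _ => ?_
      rw [hB l]
      simp [Finset.sum_apply]
    rw [Finset.sum_apply]
    simp only [Pi.smul_apply, smul_eq_mul]
    rw [← this]
    simp_rw [Finset.mul_sum]
    rw [Finset.sum_comm]
    refine Finset.sum_congr rfl fun a _ => ?_
    rw [Finset.sum_mul]
    exact Finset.sum_congr rfl fun l _ => by ring
  ext a b
  have hcoef : ∀ c : Fin r → ℝ, ∑ a : Fin r, c a • u a = 0 → ∀ a, c a = 0 :=
    Fintype.linearIndependent_iff.mp hu
  have hz := hcoef (fun a => (∑ l : Fin r, B l a * B' l b) - if a = b then 1 else 0) ?_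
  · have := hz a
    have h1 : (Matrix.transpose B * B') a b = ∑ l : Fin r, B l a * B' l b := by
      simp [Matrix.mul_apply, Matrix.transpose_apply]
    rw [h1, Matrix.one_apply]
    linarith [this]
  · simp only [sub_smul, ite_smul, one_smul, zero_smul, Finset.sum_sub_distrib]
    rw [key b]
    simp
end

section
/- For every three-qubit array v : Fin 2 → Fin 2 → Fin 2 → ℝ and all invertible 2×2 real matrices g₁, g₂, g₃, the invariant tuple is unchanged under the action: N(g·v) = N(v), i.e. n₁(g·v) = n₁(v), n₂(g·v) = n₂(v), n₃(g·v) = n₃(v), and ñ₄(g·v) = ñ₄(v). -/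
variable {d₁ d₂ d₃ : ℕ}

/-- Solution space `{w | ∀ j₂ j₃, ∑ j₁, v j₁ j₂ j₃ * w j₁ = 0}`. -/
def S₁ (v : Fin d₁ → Fin d₂ → Fin d₃ → ℝ) : Submodule ℝ (Fin d₁ → ℝ) where
  carrier := { w | ∀ j₂ j₃, ∑ j₁, v j₁ j₂ j₃ * w j₁ = 0 }
  zero_mem' := by intro j₂ j₃; simp
  add_mem' := by
    intro a b ha hb j₂ j₃
    simp only [Pi.add_apply, mul_add, Finset.sum_add_distrib]
    rw [ha j₂ j₃, hb j₂ j₃, add_zero]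
  smul_mem' := by
    intro c a ha j₂ j₃
    have hc : ∀ x y : ℝ, x * (c * y) = c * (x * y) := fun x y => mul_left_comm x c y
    simp only [Pi.smul_apply, smul_eq_mul, hc, ← Finset.mul_sum]
    rw [ha j₂ j₃, mul_zero]

/-- Solution space `{w | ∀ j₁ j₃, ∑ j₂, v j₁ j₂ j₃ * w j₂ = 0}`. -/
def S₂ (v : Fin d₁ → Fin d₂ → Fin d₃ → ℝ) : Submodule ℝ (Fin d₂ → ℝ) where
  carrier := { w | ∀ j₁ j₃, ∑ j₂, v j₁ j₂ j₃ * w j₂ = 0 }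
  zero_mem' := by intro j₁ j₃; simp
  add_mem' := by
    intro a b ha hb j₁ j₃
    simp only [Pi.add_apply, mul_add, Finset.sum_add_distrib]
    rw [ha j₁ j₃, hb j₁ j₃, add_zero]
  smul_mem' := by
    intro c a ha j₁ j₃
    have hc : ∀ x y : ℝ, x * (c * y) = c * (x * y) := fun x y => mul_left_comm x c y
    simp only [Pi.smul_apply, smul_eq_mul, hc, ← Finset.mul_sum]
    rw [ha j₁ j₃, mul_zero]

/-- Solution space `{w | ∀ j₁ j₂, ∑ j₃, v j₁ j₂ j₃ * w j₃ = 0}`. -/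
def S₃ (v : Fin d₁ → Fin d₂ → Fin d₃ → ℝ) : Submodule ℝ (Fin d₃ → ℝ) where
  carrier := { w | ∀ j₁ j₂, ∑ j₃, v j₁ j₂ j₃ * w j₃ = 0 }
  zero_mem' := by intro j₁ j₂; simp
  add_mem' := by
    intro a b ha hb j₁ j₂
    simp only [Pi.add_apply, mul_add, Finset.sum_add_distrib]
    rw [ha j₁ j₂, hb j₁ j₂, add_zero]
  smul_mem' := by
    intro c a ha j₁ j₂
    have hc : ∀ x y : ℝ, x * (c * y) = c * (x * y) := fun x y => mul_left_comm x c y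
    simp only [Pi.smul_apply, smul_eq_mul, hc, ← Finset.mul_sum]
    rw [ha j₁ j₂, mul_zero]

/-- Solution space of the three simultaneous pairwise contraction conditions
defining the intersection invariant `ñ₄`. -/
def S₄ (v : Fin d₁ → Fin d₂ → Fin d₃ → ℝ) :
    Submodule ℝ (Fin d₁ → Fin d₂ → Fin d₃ → ℝ) where
  carrier := { w |
    (∀ j₃ k₃, ∑ j₁, ∑ j₂, v j₁ j₂ j₃ * w j₁ j₂ k₃ = 0) ∧
    (∀ j₂ k₂, ∑ j₁, ∑ j₃, v j₁ j₂ j₃ * w j₁ k₂ j₃ = 0) ∧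
    (∀ j₁ k₁, ∑ j₂, ∑ j₃, v j₁ j₂ j₃ * w k₁ j₂ j₃ = 0) }
  zero_mem' := by
    refine ⟨?_, ?_, ?_⟩ <;> intro a b <;> simp
  add_mem' := by
    rintro a b ⟨ha1, ha2, ha3⟩ ⟨hb1, hb2, hb3⟩
    refine ⟨fun p q => ?_, fun p q => ?_, fun p q => ?_⟩ <;>
      simp only [Pi.add_apply, mul_add, Finset.sum_add_distrib]
    · rw [ha1 p q, hb1 p q, add_zero]
    · rw [ha2 p q, hb2 p q, add_zero]
    · rw [ha3 p q, hb3 p q, add_zero]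
  smul_mem' := by
    rintro c a ⟨ha1, ha2, ha3⟩
    have hc : ∀ x y : ℝ, x * (c * y) = c * (x * y) := fun x y => mul_left_comm x c y
    refine ⟨fun p q => ?_, fun p q => ?_, fun p q => ?_⟩ <;>
      simp only [Pi.smul_apply, smul_eq_mul, hc, ← Finset.mul_sum]
    · rw [ha1 p q, mul_zero]
    · rw [ha2 p q, mul_zero]
    · rw [ha3 p q, mul_zero]

/-- `n₁(v)`: the dimension of `S₁ v`. -/
noncomputable def n₁ (v : Fin d₁ → Fin d₂ → Fin d₃ → ℝ) : ℕ :=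
  Module.finrank ℝ (S₁ v)

/-- `n₂(v)`: the dimension of `S₂ v`. -/
noncomputable def n₂ (v : Fin d₁ → Fin d₂ → Fin d₃ → ℝ) : ℕ :=
  Module.finrank ℝ (S₂ v)

/-- `n₃(v)`: the dimension of `S₃ v`. -/
noncomputable def n₃ (v : Fin d₁ → Fin d₂ → Fin d₃ → ℝ) : ℕ :=
  Module.finrank ℝ (S₃ v)

/-- `ñ₄(v)`: the dimension of `S₄ v`. -/
noncomputable def n₄ (v : Fin d₁ → Fin d₂ → Fin d₃ → ℝ) : ℕ :=
  Module.finrank ℝ (S₄ v)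

/-- Action of a triple of matrices on a three-qubit coordinate array:
`(g·v) j₁ j₂ j₃ = ∑ k₁ k₂ k₃, v k₁ k₂ k₃ * g₁ k₁ j₁ * g₂ k₂ j₂ * g₃ k₃ j₃`. -/
def act (g₁ g₂ g₃ : Matrix (Fin 2) (Fin 2) ℝ) (v : Fin 2 → Fin 2 → Fin 2 → ℝ) :
    Fin 2 → Fin 2 → Fin 2 → ℝ :=
  fun j₁ j₂ j₃ => ∑ k₁, ∑ k₂, ∑ k₃, v k₁ k₂ k₃ * g₁ k₁ j₁ * g₂ k₂ j₂ * g₃ k₃ j₃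

section AuxInvariance

open Matrix Finset

/-- Row cancellation: if `A * B = 1` then `f ᵥ* A = 0` implies `f = 0`. -/
lemma row_iff_aux (A B : Matrix (Fin 2) (Fin 2) ℝ) (h : A * B = 1) (f : Fin 2 → ℝ) :
    (∀ j, ∑ k, f k * A k j = 0) ↔ ∀ k, f k = 0 := by
  constructor
  · intro hf k
    have h0 : f ᵥ* A = 0 := by
      funext j
      simpa [Matrix.vecMul, dotProduct] using hf j
    have : f ᵥ* (A * B) = 0 ᵥ* B := by rw [← Matrix.vecMul_vecMul, h0]
    simpa [h] using congrFun this k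
  · intro hf j
    simp [hf]

/-- Column cancellation: if `B * A = 1` then `A *ᵥ f = 0` implies `f = 0`. -/
lemma col_iff_aux (A B : Matrix (Fin 2) (Fin 2) ℝ) (h : B * A = 1) (f : Fin 2 → ℝ) :
    (∀ j, ∑ k, A j k * f k = 0) ↔ ∀ k, f k = 0 := by
  constructor
  · intro hf k
    have h0 : A *ᵥ f = 0 := by
      funext j
      simpa [Matrix.mulVec, dotProduct] using hf j
    have : (B * A) *ᵥ f = B *ᵥ 0 := by rw [← Matrix.mulVec_mulVec, h0]
    simpa [h] using congrFun this k
  · intro hf j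
    simp [hf]

/-- Two-index row cancellation. -/
lemma row2_iff_aux (A₂ B₂ A₃ B₃ : Matrix (Fin 2) (Fin 2) ℝ)
    (h₂ : A₂ * B₂ = 1) (h₃ : A₃ * B₃ = 1) (F : Fin 2 → Fin 2 → ℝ) :
    (∀ j₂ j₃, ∑ b, ∑ c, F b c * A₂ b j₂ * A₃ c j₃ = 0) ↔ ∀ b c, F b c = 0 := by
  have step1 : ∀ j₂ j₃, (∑ b, ∑ c, F b c * A₂ b j₂ * A₃ c j₃)
      = ∑ c, (∑ b, F b c * A₂ b j₂) * A₃ c j₃ := by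
    intro j₂ j₃
    simp [Fin.sum_univ_two]; ring
  calc (∀ j₂ j₃, ∑ b, ∑ c, F b c * A₂ b j₂ * A₃ c j₃ = 0)
      ↔ ∀ j₂ c, ∑ b, F b c * A₂ b j₂ = 0 := by
        refine forall_congr' fun j₂ => ?_
        rw [← row_iff_aux A₃ B₃ h₃ (fun c => ∑ b, F b c * A₂ b j₂)]
        exact forall_congr' fun j₃ => by rw [step1]
    _ ↔ ∀ c j₂, ∑ b, F b c * A₂ b j₂ = 0 := forall_comm
    _ ↔ ∀ c b, F b c = 0 := forall_congr' fun c => row_iff_aux A₂ B₂ h₂ _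
    _ ↔ ∀ b c, F b c = 0 := forall_comm

lemma leg_cancel_aux {V : Type*} [AddCommGroup V] [Module ℝ V]
    (A B : Matrix (Fin 2) (Fin 2) ℝ) (h : A * B = 1) (w : Fin 2 → V) (a : Fin 2) :
    ∑ j, A a j • ∑ k, B j k • w k = w a := by
  have : ∑ j, A a j • ∑ k, B j k • w k = ∑ k, ((A * B) a k) • w k := by
    simp only [Finset.smul_sum, smul_smul, Matrix.mul_apply, Finset.sum_smul]
    exact Finset.sum_comm
  rw [this, h]
  simp [Matrix.one_apply]

/-- The linear equivalence acting by an invertible matrix on one tensor leg. -/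
noncomputable def legEquiv (g : (Matrix (Fin 2) (Fin 2) ℝ)ˣ) (V : Type*) [AddCommGroup V] [Module ℝ V] :
    (Fin 2 → V) ≃ₗ[ℝ] (Fin 2 → V) where
  toFun w := fun a => ∑ j, ((g : Matrix (Fin 2) (Fin 2) ℝ) a j) • w j
  invFun w := fun a => ∑ j, (((g⁻¹ : _ˣ) : Matrix (Fin 2) (Fin 2) ℝ) a j) • w j
  map_add' w₁ w₂ := by
    funext a
    simp [smul_add, Finset.sum_add_distrib]
  map_smul' c w := by
    funext a
    simp only [Pi.smul_apply, RingHom.id_apply, Finset.smul_sum]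
    exact Finset.sum_congr rfl fun j _ => smul_comm _ _ _
  left_inv w := by
    funext a
    exact leg_cancel_aux _ _ (by rw [← Units.val_mul, inv_mul_cancel, Units.val_one]) w a
  right_inv w := by
    funext a
    exact leg_cancel_aux _ _ (by rw [← Units.val_mul, mul_inv_cancel, Units.val_one]) w a

@[simp] lemma legEquiv_apply (g : (Matrix (Fin 2) (Fin 2) ℝ)ˣ) {V : Type*} [AddCommGroup V]
    [Module ℝ V] (w : Fin 2 → V) (a : Fin 2) :
    legEquiv g V w a = ∑ j, ((g : Matrix (Fin 2) (Fin 2) ℝ) a j) • w j := rfl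

/-- Triple-leg linear equivalence. -/
noncomputable def tripleEquiv (g₁ g₂ g₃ : (Matrix (Fin 2) (Fin 2) ℝ)ˣ) :
    (Fin 2 → Fin 2 → Fin 2 → ℝ) ≃ₗ[ℝ] (Fin 2 → Fin 2 → Fin 2 → ℝ) :=
  (LinearEquiv.piCongrRight fun _ => LinearEquiv.piCongrRight fun _ => legEquiv g₃ ℝ).trans
    ((LinearEquiv.piCongrRight fun _ => legEquiv g₂ (Fin 2 → ℝ)).trans
      (legEquiv g₁ (Fin 2 → Fin 2 → ℝ)))

lemma tripleEquiv_apply (g₁ g₂ g₃ : (Matrix (Fin 2) (Fin 2) ℝ)ˣ)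
    (w : Fin 2 → Fin 2 → Fin 2 → ℝ) (a b c : Fin 2) :
    tripleEquiv g₁ g₂ g₃ w a b c
      = ∑ j₁, ∑ j₂, ∑ j₃, (g₁ : Matrix (Fin 2) (Fin 2) ℝ) a j₁
          * (g₂ : Matrix (Fin 2) (Fin 2) ℝ) b j₂
          * (g₃ : Matrix (Fin 2) (Fin 2) ℝ) c j₃ * w j₁ j₂ j₃ := by
  simp [tripleEquiv, legEquiv, LinearEquiv.piCongrRight, Fin.sum_univ_two, smul_eq_mul]
  ring

lemma finrank_comap_equiv {V : Type*} [AddCommGroup V] [Module ℝ V]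
    (e : V ≃ₗ[ℝ] V) (p : Submodule ℝ V) :
    Module.finrank ℝ (p.comap (e : V →ₗ[ℝ] V)) = Module.finrank ℝ p := by
  rw [Submodule.comap_equiv_eq_map_symm]
  exact LinearEquiv.finrank_map_eq e.symm p

end AuxInvariance

/-- **Invariance** -/
theorem three_qubit_invariants_are_invariant
    (v : Fin 2 → Fin 2 → Fin 2 → ℝ)
    (g₁ g₂ g₃ : Matrix.GeneralLinearGroup (Fin 2) ℝ) :
    n₁ (act (g₁ : Matrix (Fin 2) (Fin 2) ℝ) (g₂ : Matrix (Fin 2) (Fin 2) ℝ)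
          (g₃ : Matrix (Fin 2) (Fin 2) ℝ) v) = n₁ v ∧
    n₂ (act (g₁ : Matrix (Fin 2) (Fin 2) ℝ) (g₂ : Matrix (Fin 2) (Fin 2) ℝ)
          (g₃ : Matrix (Fin 2) (Fin 2) ℝ) v) = n₂ v ∧
    n₃ (act (g₁ : Matrix (Fin 2) (Fin 2) ℝ) (g₂ : Matrix (Fin 2) (Fin 2) ℝ)
          (g₃ : Matrix (Fin 2) (Fin 2) ℝ) v) = n₃ v ∧
    n₄ (act (g₁ : Matrix (Fin 2) (Fin 2) ℝ) (g₂ : Matrix (Fin 2) (Fin 2) ℝ)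
          (g₃ : Matrix (Fin 2) (Fin 2) ℝ) v) = n₄ v := by
  set G₁ : Matrix (Fin 2) (Fin 2) ℝ := (g₁ : Matrix (Fin 2) (Fin 2) ℝ) with hG₁
  set G₂ : Matrix (Fin 2) (Fin 2) ℝ := (g₂ : Matrix (Fin 2) (Fin 2) ℝ) with hG₂
  set G₃ : Matrix (Fin 2) (Fin 2) ℝ := (g₃ : Matrix (Fin 2) (Fin 2) ℝ) with hG₃
  have h₁ : G₁ * ((g₁⁻¹ : _ˣ) : Matrix (Fin 2) (Fin 2) ℝ) = 1 := by
    rw [hG₁, ← Units.val_mul, mul_inv_cancel, Units.val_one]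
  have h₂ : G₂ * ((g₂⁻¹ : _ˣ) : Matrix (Fin 2) (Fin 2) ℝ) = 1 := by
    rw [hG₂, ← Units.val_mul, mul_inv_cancel, Units.val_one]
  have h₃ : G₃ * ((g₃⁻¹ : _ˣ) : Matrix (Fin 2) (Fin 2) ℝ) = 1 := by
    rw [hG₃, ← Units.val_mul, mul_inv_cancel, Units.val_one]
  have h₁' : ((g₁⁻¹ : _ˣ) : Matrix (Fin 2) (Fin 2) ℝ) * G₁ = 1 := by
    rw [hG₁, ← Units.val_mul, inv_mul_cancel, Units.val_one]
  have h₂' : ((g₂⁻¹ : _ˣ) : Matrix (Fin 2) (Fin 2) ℝ) * G₂ = 1 := by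
    rw [hG₂, ← Units.val_mul, inv_mul_cancel, Units.val_one]
  have h₃' : ((g₃⁻¹ : _ˣ) : Matrix (Fin 2) (Fin 2) ℝ) * G₃ = 1 := by
    rw [hG₃, ← Units.val_mul, inv_mul_cancel, Units.val_one]
  refine ⟨?_, ?_, ?_, ?_⟩
  · -- n₁
    have hS : S₁ (act G₁ G₂ G₃ v) = (S₁ v).comap (legEquiv g₁ ℝ : _ →ₗ[ℝ] _) := by
      ext w
      set u : Fin 2 → ℝ := legEquiv g₁ ℝ w with hu
      have key : ∀ j₂ j₃, (∑ j₁, act G₁ G₂ G₃ v j₁ j₂ j₃ * w j₁)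
          = ∑ b, ∑ c, (∑ a, v a b c * u a) * G₂ b j₂ * G₃ c j₃ := by
        intro j₂ j₃
        simp only [hu, act, legEquiv_apply, smul_eq_mul, Fin.sum_univ_two]
        ring
      show (∀ j₂ j₃, ∑ j₁, act G₁ G₂ G₃ v j₁ j₂ j₃ * w j₁ = 0) ↔
        (∀ j₂ j₃, ∑ j₁, v j₁ j₂ j₃ * u j₁ = 0)
      calc (∀ j₂ j₃, ∑ j₁, act G₁ G₂ G₃ v j₁ j₂ j₃ * w j₁ = 0)
          ↔ (∀ j₂ j₃, ∑ b, ∑ c, (∑ a, v a b c * u a) * G₂ b j₂ * G₃ c j₃ = 0) :=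
            forall₂_congr fun j₂ j₃ => by rw [key j₂ j₃]
        _ ↔ ∀ b c, (∑ a, v a b c * u a) = 0 := row2_iff_aux _ _ _ _ h₂ h₃ _
    show n₁ _ = n₁ v
    rw [n₁, n₁, hS, finrank_comap_equiv]
  · -- n₂
    have hS : S₂ (act G₁ G₂ G₃ v) = (S₂ v).comap (legEquiv g₂ ℝ : _ →ₗ[ℝ] _) := by
      ext w
      set u : Fin 2 → ℝ := legEquiv g₂ ℝ w with hu
      have key : ∀ j₁ j₃, (∑ j₂, act G₁ G₂ G₃ v j₁ j₂ j₃ * w j₂)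
          = ∑ a, ∑ c, (∑ b, v a b c * u b) * G₁ a j₁ * G₃ c j₃ := by
        intro j₁ j₃
        simp only [hu, act, legEquiv_apply, smul_eq_mul, Fin.sum_univ_two]
        ring
      show (∀ j₁ j₃, ∑ j₂, act G₁ G₂ G₃ v j₁ j₂ j₃ * w j₂ = 0) ↔
        (∀ j₁ j₃, ∑ j₂, v j₁ j₂ j₃ * u j₂ = 0)
      calc (∀ j₁ j₃, ∑ j₂, act G₁ G₂ G₃ v j₁ j₂ j₃ * w j₂ = 0)
          ↔ (∀ j₁ j₃, ∑ a, ∑ c, (∑ b, v a b c * u b) * G₁ a j₁ * G₃ c j₃ = 0) :=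
            forall₂_congr fun j₁ j₃ => by rw [key j₁ j₃]
        _ ↔ ∀ a c, (∑ b, v a b c * u b) = 0 := row2_iff_aux _ _ _ _ h₁ h₃ _
    show n₂ _ = n₂ v
    rw [n₂, n₂, hS, finrank_comap_equiv]
  · -- n₃
    have hS : S₃ (act G₁ G₂ G₃ v) = (S₃ v).comap (legEquiv g₃ ℝ : _ →ₗ[ℝ] _) := by
      ext w
      set u : Fin 2 → ℝ := legEquiv g₃ ℝ w with hu
      have key : ∀ j₁ j₂, (∑ j₃, act G₁ G₂ G₃ v j₁ j₂ j₃ * w j₃)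
          = ∑ a, ∑ b, (∑ c, v a b c * u c) * G₁ a j₁ * G₂ b j₂ := by
        intro j₁ j₂
        simp only [hu, act, legEquiv_apply, smul_eq_mul, Fin.sum_univ_two]
        ring
      show (∀ j₁ j₂, ∑ j₃, act G₁ G₂ G₃ v j₁ j₂ j₃ * w j₃ = 0) ↔
        (∀ j₁ j₂, ∑ j₃, v j₁ j₂ j₃ * u j₃ = 0)
      calc (∀ j₁ j₂, ∑ j₃, act G₁ G₂ G₃ v j₁ j₂ j₃ * w j₃ = 0)
          ↔ (∀ j₁ j₂, ∑ a, ∑ b, (∑ c, v a b c * u c) * G₁ a j₁ * G₂ b j₂ = 0) :=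
            forall₂_congr fun j₁ j₂ => by rw [key j₁ j₂]
        _ ↔ ∀ a b, (∑ c, v a b c * u c) = 0 := row2_iff_aux _ _ _ _ h₁ h₂ _
    show n₃ _ = n₃ v
    rw [n₃, n₃, hS, finrank_comap_equiv]
  · -- n₄
    have hS : S₄ (act G₁ G₂ G₃ v) = (S₄ v).comap (tripleEquiv g₁ g₂ g₃ : _ →ₗ[ℝ] _) := by
      ext w
      set u : Fin 2 → Fin 2 → Fin 2 → ℝ := tripleEquiv g₁ g₂ g₃ w with hu
      have huapp : ∀ a b c, u a b c = ∑ j₁, ∑ j₂, ∑ j₃,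
          G₁ a j₁ * G₂ b j₂ * G₃ c j₃ * w j₁ j₂ j₃ := fun a b c =>
        tripleEquiv_apply g₁ g₂ g₃ w a b c
      show ((∀ j₃ k₃, ∑ j₁, ∑ j₂, act G₁ G₂ G₃ v j₁ j₂ j₃ * w j₁ j₂ k₃ = 0) ∧
            (∀ j₂ k₂, ∑ j₁, ∑ j₃, act G₁ G₂ G₃ v j₁ j₂ j₃ * w j₁ k₂ j₃ = 0) ∧
            (∀ j₁ k₁, ∑ j₂, ∑ j₃, act G₁ G₂ G₃ v j₁ j₂ j₃ * w k₁ j₂ j₃ = 0)) ↔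
           ((∀ j₃ k₃, ∑ j₁, ∑ j₂, v j₁ j₂ j₃ * u j₁ j₂ k₃ = 0) ∧
            (∀ j₂ k₂, ∑ j₁, ∑ j₃, v j₁ j₂ j₃ * u j₁ k₂ j₃ = 0) ∧
            (∀ j₁ k₁, ∑ j₂, ∑ j₃, v j₁ j₂ j₃ * u k₁ j₂ j₃ = 0))
      have part1 : (∀ j₃ k₃, ∑ j₁, ∑ j₂, act G₁ G₂ G₃ v j₁ j₂ j₃ * w j₁ j₂ k₃ = 0) ↔
          (∀ j₃ k₃, ∑ j₁, ∑ j₂, v j₁ j₂ j₃ * u j₁ j₂ k₃ = 0) := by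
        set M : Fin 2 → Fin 2 → ℝ := fun c k₃ => ∑ a, ∑ b, v a b c *
          (∑ p, ∑ q, G₁ a p * G₂ b q * w p q k₃) with hM
        have keyL : ∀ j₃ k₃, (∑ j₁, ∑ j₂, act G₁ G₂ G₃ v j₁ j₂ j₃ * w j₁ j₂ k₃)
            = ∑ c, M c k₃ * G₃ c j₃ := by
          intro j₃ k₃
          simp only [hM, act, Fin.sum_univ_two]
          ring
        have keyR : ∀ c γ, (∑ a, ∑ b, v a b c * u a b γ)
            = ∑ k₃, G₃ γ k₃ * M c k₃ := by
          intro c γ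
          simp only [hM, huapp, Fin.sum_univ_two]
          ring
        calc (∀ j₃ k₃, ∑ j₁, ∑ j₂, act G₁ G₂ G₃ v j₁ j₂ j₃ * w j₁ j₂ k₃ = 0)
            ↔ (∀ j₃ k₃, ∑ c, M c k₃ * G₃ c j₃ = 0) :=
              forall₂_congr fun j₃ k₃ => by rw [keyL j₃ k₃]
          _ ↔ (∀ k₃ j₃, ∑ c, M c k₃ * G₃ c j₃ = 0) := forall_comm
          _ ↔ (∀ k₃ c, M c k₃ = 0) :=
              forall_congr' fun k₃ => row_iff_aux G₃ _ h₃ fun c => M c k₃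
          _ ↔ (∀ c k₃, M c k₃ = 0) := forall_comm
          _ ↔ (∀ c γ, ∑ k₃, G₃ γ k₃ * M c k₃ = 0) :=
              (forall_congr' fun c => col_iff_aux G₃ _ h₃' fun k => M c k).symm
          _ ↔ (∀ c γ, ∑ a, ∑ b, v a b c * u a b γ = 0) :=
              (forall₂_congr fun c γ => by rw [keyR c γ]).symm
      have part2 : (∀ j₂ k₂, ∑ j₁, ∑ j₃, act G₁ G₂ G₃ v j₁ j₂ j₃ * w j₁ k₂ j₃ = 0) ↔
          (∀ j₂ k₂, ∑ j₁, ∑ j₃, v j₁ j₂ j₃ * u j₁ k₂ j₃ = 0) := by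
        set M : Fin 2 → Fin 2 → ℝ := fun b k₂ => ∑ a, ∑ c, v a b c *
          (∑ p, ∑ q, G₁ a p * G₃ c q * w p k₂ q) with hM
        have keyL : ∀ j₂ k₂, (∑ j₁, ∑ j₃, act G₁ G₂ G₃ v j₁ j₂ j₃ * w j₁ k₂ j₃)
            = ∑ b, M b k₂ * G₂ b j₂ := by
          intro j₂ k₂
          simp only [hM, act, Fin.sum_univ_two]
          ring
        have keyR : ∀ b γ, (∑ a, ∑ c, v a b c * u a γ c)
            = ∑ k₂, G₂ γ k₂ * M b k₂ := by
          intro b γ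
          simp only [hM, huapp, Fin.sum_univ_two]
          ring
        calc (∀ j₂ k₂, ∑ j₁, ∑ j₃, act G₁ G₂ G₃ v j₁ j₂ j₃ * w j₁ k₂ j₃ = 0)
            ↔ (∀ j₂ k₂, ∑ b, M b k₂ * G₂ b j₂ = 0) :=
              forall₂_congr fun j₂ k₂ => by rw [keyL j₂ k₂]
          _ ↔ (∀ k₂ j₂, ∑ b, M b k₂ * G₂ b j₂ = 0) := forall_comm
          _ ↔ (∀ k₂ b, M b k₂ = 0) :=
              forall_congr' fun k₂ => row_iff_aux G₂ _ h₂ fun b => M b k₂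
          _ ↔ (∀ b k₂, M b k₂ = 0) := forall_comm
          _ ↔ (∀ b γ, ∑ k₂, G₂ γ k₂ * M b k₂ = 0) :=
              (forall_congr' fun b => col_iff_aux G₂ _ h₂' fun k => M b k).symm
          _ ↔ (∀ b γ, ∑ a, ∑ c, v a b c * u a γ c = 0) :=
              (forall₂_congr fun b γ => by rw [keyR b γ]).symm
      have part3 : (∀ j₁ k₁, ∑ j₂, ∑ j₃, act G₁ G₂ G₃ v j₁ j₂ j₃ * w k₁ j₂ j₃ = 0) ↔
          (∀ j₁ k₁, ∑ j₂, ∑ j₃, v j₁ j₂ j₃ * u k₁ j₂ j₃ = 0) := by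
        set M : Fin 2 → Fin 2 → ℝ := fun a k₁ => ∑ b, ∑ c, v a b c *
          (∑ p, ∑ q, G₂ b p * G₃ c q * w k₁ p q) with hM
        have keyL : ∀ j₁ k₁, (∑ j₂, ∑ j₃, act G₁ G₂ G₃ v j₁ j₂ j₃ * w k₁ j₂ j₃)
            = ∑ a, M a k₁ * G₁ a j₁ := by
          intro j₁ k₁
          simp only [hM, act, Fin.sum_univ_two]
          ring
        have keyR : ∀ a γ, (∑ b, ∑ c, v a b c * u γ b c)
            = ∑ k₁, G₁ γ k₁ * M a k₁ := by
          intro a γ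
          simp only [hM, huapp, Fin.sum_univ_two]
          ring
        calc (∀ j₁ k₁, ∑ j₂, ∑ j₃, act G₁ G₂ G₃ v j₁ j₂ j₃ * w k₁ j₂ j₃ = 0)
            ↔ (∀ j₁ k₁, ∑ a, M a k₁ * G₁ a j₁ = 0) :=
              forall₂_congr fun j₁ k₁ => by rw [keyL j₁ k₁]
          _ ↔ (∀ k₁ j₁, ∑ a, M a k₁ * G₁ a j₁ = 0) := forall_comm
          _ ↔ (∀ k₁ a, M a k₁ = 0) :=
              forall_congr' fun k₁ => row_iff_aux G₁ _ h₁ fun a => M a k₁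
          _ ↔ (∀ a k₁, M a k₁ = 0) := forall_comm
          _ ↔ (∀ a γ, ∑ k₁, G₁ γ k₁ * M a k₁ = 0) :=
              (forall_congr' fun a => col_iff_aux G₁ _ h₁' fun k => M a k).symm
          _ ↔ (∀ a γ, ∑ b, ∑ c, v a b c * u γ b c = 0) :=
              (forall₂_congr fun a γ => by rw [keyR a γ]).symm
      exact and_congr part1 (and_congr part2 part3)
    show n₄ _ = n₄ v
    rw [n₄, n₄, hS, finrank_comap_equiv]
end

section
/- For every three-qubit array v : Fin 2 → Fin 2 → Fin 2 → ℝ, the invariant tuple N(v) = (n₁(v), n₂(v), n₃(v), ñ₄(v)) is one of the following seven tuples: (2,2,2,8), (1,1,1,4), (0,0,1,3), (0,1,0,3), (1,0,0,3), (0,0,0,1), (0,0,0,0). (Completeness of the entanglement classification of three qubits: there are exactly these seven possible values of the algebraic invariants.) -/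
variable {d₁ d₂ d₃ : ℕ}

namespace TQ

abbrev V3 := Fin 2 → Fin 2 → Fin 2 → ℝ

lemma mem_S₄ {v w : V3} : w ∈ S₄ v ↔
    ((∀ j₃ k₃, ∑ j₁, ∑ j₂, v j₁ j₂ j₃ * w j₁ j₂ k₃ = 0) ∧
     (∀ j₂ k₂, ∑ j₁, ∑ j₃, v j₁ j₂ j₃ * w j₁ k₂ j₃ = 0) ∧
     (∀ j₁ k₁, ∑ j₂, ∑ j₃, v j₁ j₂ j₃ * w k₁ j₂ j₃ = 0)) := Iff.rfl

lemma mem_S₁ {v : V3} {w : Fin 2 → ℝ} : w ∈ S₁ v ↔ ∀ j₂ j₃, ∑ j₁, v j₁ j₂ j₃ * w j₁ = 0 := Iff.rfl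
lemma mem_S₂ {v : V3} {w : Fin 2 → ℝ} : w ∈ S₂ v ↔ ∀ j₁ j₃, ∑ j₂, v j₁ j₂ j₃ * w j₂ = 0 := Iff.rfl
lemma mem_S₃ {v : V3} {w : Fin 2 → ℝ} : w ∈ S₃ v ↔ ∀ j₁ j₂, ∑ j₃, v j₁ j₂ j₃ * w j₃ = 0 := Iff.rfl

def act₁ (g : Fin 2 → Fin 2 → ℝ) (v : V3) : V3 := fun i j k => ∑ l, g i l * v l j k
def act₂ (g : Fin 2 → Fin 2 → ℝ) (v : V3) : V3 := fun i j k => ∑ l, g j l * v i l k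
def act₃ (g : Fin 2 → Fin 2 → ℝ) (v : V3) : V3 := fun i j k => ∑ l, g k l * v i j l

def tr (g : Fin 2 → Fin 2 → ℝ) : Fin 2 → Fin 2 → ℝ := fun i j => g j i

def IsInv (g h : Fin 2 → Fin 2 → ℝ) : Prop :=
  (∀ i j, ∑ l, g i l * h l j = if i = j then (1:ℝ) else 0) ∧
  (∀ i j, ∑ l, h i l * g l j = if i = j then (1:ℝ) else 0)

lemma IsInv.symm {g h} (hI : IsInv g h) : IsInv h g := ⟨hI.2, hI.1⟩

lemma IsInv.tr {g h} (hI : IsInv g h) : IsInv (tr g) (tr h) := by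
  constructor <;> intro i j <;>
    [have := hI.2 j i; have := hI.1 j i] <;>
    simp only [Fin.sum_univ_two, TQ.tr] at this ⊢ <;>
    · rcases eq_or_ne i j with h | h
      · simp only [h, if_pos rfl] at this ⊢; linarith
      · simp only [if_neg h, if_neg (Ne.symm h)] at this ⊢; linarith

lemma act₁_act₁ {g h : Fin 2 → Fin 2 → ℝ} (hhg : ∀ i j, ∑ l, h i l * g l j = if i = j then (1:ℝ) else 0)
    (v : V3) : act₁ h (act₁ g v) = v := by
  funext i j k
  have q1 := hhg i 0; have q2 := hhg i 1
  simp only [act₁, Fin.sum_univ_two] at q1 q2 ⊢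
  fin_cases i <;> norm_num at q1 q2 ⊢ <;>
    linear_combination v 0 j k * q1 + v 1 j k * q2

/-- `L₁ g` : the linear map `w ↦ act₁ g w`. -/
def L₁ (g : Fin 2 → Fin 2 → ℝ) : V3 →ₗ[ℝ] V3 where
  toFun w := act₁ g w
  map_add' a b := by
    funext i j k; simp [act₁, Pi.add_apply, mul_add, Finset.sum_add_distrib]
  map_smul' c a := by
    funext i j k
    simp only [act₁, Pi.smul_apply, smul_eq_mul, RingHom.id_apply, Finset.mul_sum]
    exact Finset.sum_congr rfl fun x _ => by ring

/-- Linear equivalence given by an invertible `g` acting on the first leg. -/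
noncomputable def E₁ (g h : Fin 2 → Fin 2 → ℝ) (hI : IsInv g h) : V3 ≃ₗ[ℝ] V3 :=
  LinearEquiv.ofLinear (L₁ g) (L₁ h)
    (LinearMap.ext fun w => act₁_act₁ hI.1 w)
    (LinearMap.ext fun w => act₁_act₁ hI.2 w)

end TQ

namespace TQ

lemma kill_left {g h : Fin 2 → Fin 2 → ℝ}
    (hI : ∀ i j, ∑ l, h i l * g l j = if i = j then (1:ℝ) else 0)
    (E : Fin 2 → Fin 2 → ℝ)
    (hE : ∀ i k, ∑ l, g i l * E l k = 0) : ∀ i k, E i k = 0 := by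
  intro i k
  have h1 := hE 0 k; have h2 := hE 1 k
  have q1 := hI i 0; have q2 := hI i 1
  simp only [Fin.sum_univ_two] at h1 h2 q1 q2
  fin_cases i <;> simp only [Fin.zero_eta, Fin.mk_one] at q1 q2 ⊢
  · norm_num at q1 q2
    linear_combination h 0 0 * h1 + h 0 1 * h2 - E 0 k * q1 - E 1 k * q2
  · norm_num at q1 q2
    linear_combination h 1 0 * h1 + h 1 1 * h2 - E 0 k * q1 - E 1 k * q2

lemma S4_act₁_mem {g h : Fin 2 → Fin 2 → ℝ} (hI : IsInv g h) (v w : V3)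
    (hw : w ∈ S₄ (act₁ g v)) : act₁ (tr g) w ∈ S₄ v := by
  obtain ⟨h1, h2, h3⟩ := hw
  refine ⟨fun j₃ k₃ => ?_, fun j₂ k₂ => ?_, fun j₁ k₁ => ?_⟩
  · have := h1 j₃ k₃
    simp only [act₁, tr, Fin.sum_univ_two] at this ⊢
    linear_combination this
  · have := h2 j₂ k₂
    simp only [act₁, tr, Fin.sum_univ_two] at this ⊢
    linear_combination this
  · have hE : ∀ i k, ∑ l, g i l * (∑ j₂, ∑ j₃, v l j₂ j₃ * w k j₂ j₃) = 0 := by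
      intro i k
      have := h3 i k
      simp only [act₁, Fin.sum_univ_two] at this ⊢
      linear_combination this
    have hE0 := kill_left hI.2 _ hE
    have e0 := hE0 j₁ 0; have e1 := hE0 j₁ 1
    simp only [Fin.sum_univ_two] at e0 e1
    simp only [act₁, tr, Fin.sum_univ_two]
    linear_combination g 0 k₁ * e0 + g 1 k₁ * e1

lemma S4_act₁ {g h : Fin 2 → Fin 2 → ℝ} (hI : IsInv g h) (v : V3) :
    S₄ (act₁ g v) = (S₄ v).comap (E₁ (tr g) (tr h) hI.tr).toLinearMap := by
  ext w
  rw [Submodule.mem_comap]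
  show _ ↔ act₁ (tr g) w ∈ S₄ v
  constructor
  · exact S4_act₁_mem hI v w
  · intro hw
    have h2 := S4_act₁_mem hI.symm (act₁ g v) (act₁ (tr g) w)
      (by rwa [act₁_act₁ hI.2 v])
    rwa [show TQ.tr h = tr h from rfl, act₁_act₁ hI.tr.2 w] at h2

lemma n₄_act₁ {g h : Fin 2 → Fin 2 → ℝ} (hI : IsInv g h) (v : V3) :
    n₄ (act₁ g v) = n₄ v := by
  unfold n₄
  rw [S4_act₁ hI v, Submodule.comap_equiv_eq_map_symm, LinearEquiv.finrank_map_eq]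

end TQ

namespace TQ

def σ₁₂ (v : V3) : V3 := fun i j k => v j i k
def σ₁₃ (v : V3) : V3 := fun i j k => v k j i

noncomputable def P₁₂ : V3 ≃ₗ[ℝ] V3 :=
  LinearEquiv.ofLinear
    { toFun := σ₁₂, map_add' := fun _ _ => rfl, map_smul' := fun _ _ => rfl }
    { toFun := σ₁₂, map_add' := fun _ _ => rfl, map_smul' := fun _ _ => rfl }
    (LinearMap.ext fun w => rfl) (LinearMap.ext fun w => rfl)

noncomputable def P₁₃ : V3 ≃ₗ[ℝ] V3 :=
  LinearEquiv.ofLinear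
    { toFun := σ₁₃, map_add' := fun _ _ => rfl, map_smul' := fun _ _ => rfl }
    { toFun := σ₁₃, map_add' := fun _ _ => rfl, map_smul' := fun _ _ => rfl }
    (LinearMap.ext fun w => rfl) (LinearMap.ext fun w => rfl)

lemma S4_σ₁₂ (v : V3) : S₄ (σ₁₂ v) = (S₄ v).comap P₁₂.toLinearMap := by
  ext w
  rw [Submodule.mem_comap]
  show _ ↔ σ₁₂ w ∈ S₄ v
  constructor <;> rintro ⟨h1, h2, h3⟩ <;>
    refine ⟨fun a b => ?_, fun a b => ?_, fun a b => ?_⟩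
  · have := h1 a b; simp only [σ₁₂, Fin.sum_univ_two] at this ⊢; linear_combination this
  · have := h3 a b; simp only [σ₁₂, Fin.sum_univ_two] at this ⊢; linear_combination this
  · have := h2 a b; simp only [σ₁₂, Fin.sum_univ_two] at this ⊢; linear_combination this
  · have := h1 a b; simp only [σ₁₂, Fin.sum_univ_two] at this ⊢; linear_combination this
  · have := h3 a b; simp only [σ₁₂, Fin.sum_univ_two] at this ⊢; linear_combination this
  · have := h2 a b; simp only [σ₁₂, Fin.sum_univ_two] at this ⊢; linear_combination this

lemma S4_σ₁₃ (v : V3) : S₄ (σ₁₃ v) = (S₄ v).comap P₁₃.toLinearMap := by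
  ext w
  rw [Submodule.mem_comap]
  show _ ↔ σ₁₃ w ∈ S₄ v
  constructor <;> rintro ⟨h1, h2, h3⟩ <;>
    refine ⟨fun a b => ?_, fun a b => ?_, fun a b => ?_⟩
  · have := h3 a b; simp only [σ₁₃, Fin.sum_univ_two] at this ⊢; linear_combination this
  · have := h2 a b; simp only [σ₁₃, Fin.sum_univ_two] at this ⊢; linear_combination this
  · have := h1 a b; simp only [σ₁₃, Fin.sum_univ_two] at this ⊢; linear_combination this
  · have := h3 a b; simp only [σ₁₃, Fin.sum_univ_two] at this ⊢; linear_combination this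
  · have := h2 a b; simp only [σ₁₃, Fin.sum_univ_two] at this ⊢; linear_combination this
  · have := h1 a b; simp only [σ₁₃, Fin.sum_univ_two] at this ⊢; linear_combination this

lemma n₄_σ₁₂ (v : V3) : n₄ (σ₁₂ v) = n₄ v := by
  unfold n₄
  rw [S4_σ₁₂ v, Submodule.comap_equiv_eq_map_symm, LinearEquiv.finrank_map_eq]

lemma n₄_σ₁₃ (v : V3) : n₄ (σ₁₃ v) = n₄ v := by
  unfold n₄
  rw [S4_σ₁₃ v, Submodule.comap_equiv_eq_map_symm, LinearEquiv.finrank_map_eq]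

lemma act₂_eq (g : Fin 2 → Fin 2 → ℝ) (v : V3) : act₂ g v = σ₁₂ (act₁ g (σ₁₂ v)) := rfl
lemma act₃_eq (g : Fin 2 → Fin 2 → ℝ) (v : V3) : act₃ g v = σ₁₃ (act₁ g (σ₁₃ v)) := rfl

lemma n₄_act₂ {g h : Fin 2 → Fin 2 → ℝ} (hI : IsInv g h) (v : V3) :
    n₄ (act₂ g v) = n₄ v := by
  rw [act₂_eq, n₄_σ₁₂, n₄_act₁ hI, n₄_σ₁₂]

lemma n₄_act₃ {g h : Fin 2 → Fin 2 → ℝ} (hI : IsInv g h) (v : V3) :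
    n₄ (act₃ g v) = n₄ v := by
  rw [act₃_eq, n₄_σ₁₃, n₄_act₁ hI, n₄_σ₁₃]

/-- `S₃` is unchanged by an invertible action on the first leg. -/
lemma S3_act₁ {g h : Fin 2 → Fin 2 → ℝ} (hI : IsInv g h) (v : V3) :
    S₃ (act₁ g v) = S₃ v := by
  ext w
  rw [mem_S₃, mem_S₃]
  constructor
  · intro hw
    have hE : ∀ i j, ∑ l, g i l * (∑ k, v l j k * w k) = 0 := by
      intro i j
      have := hw i j
      simp only [act₁, Fin.sum_univ_two] at this ⊢
      linear_combination this
    have hE0 : ∀ l j, (fun l j => ∑ k, v l j k * w k) l j = 0 := kill_left hI.2 _ hE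
    intro i j
    exact hE0 i j
  · intro hw i j
    have e0 := hw 0 j; have e1 := hw 1 j
    simp only [Fin.sum_univ_two] at e0 e1 ⊢
    simp only [act₁, Fin.sum_univ_two]
    linear_combination g i 0 * e0 + g i 1 * e1

lemma n₃_act₁ {g h : Fin 2 → Fin 2 → ℝ} (hI : IsInv g h) (v : V3) :
    n₃ (act₁ g v) = n₃ v := by
  unfold n₃; rw [S3_act₁ hI]

def M₂ (g : Fin 2 → Fin 2 → ℝ) : (Fin 2 → ℝ) →ₗ[ℝ] (Fin 2 → ℝ) where
  toFun w := fun i => ∑ l, g i l * w l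
  map_add' a b := by
    funext i; simp [Pi.add_apply, mul_add, Finset.sum_add_distrib]
  map_smul' c a := by
    funext i
    simp only [Pi.smul_apply, smul_eq_mul, RingHom.id_apply, Finset.mul_sum]
    exact Finset.sum_congr rfl fun x _ => by ring

lemma M₂_M₂ {g h : Fin 2 → Fin 2 → ℝ}
    (hhg : ∀ i j, ∑ l, h i l * g l j = if i = j then (1:ℝ) else 0) (w : Fin 2 → ℝ) :
    M₂ h (M₂ g w) = w := by
  funext i
  have q1 := hhg i 0; have q2 := hhg i 1
  simp only [M₂, Fin.sum_univ_two, LinearMap.coe_mk, AddHom.coe_mk] at q1 q2 ⊢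
  fin_cases i <;> norm_num at q1 q2 ⊢ <;>
    linear_combination w 0 * q1 + w 1 * q2

noncomputable def E₂ (g h : Fin 2 → Fin 2 → ℝ) (hI : IsInv g h) : (Fin 2 → ℝ) ≃ₗ[ℝ] (Fin 2 → ℝ) :=
  LinearEquiv.ofLinear (M₂ g) (M₂ h)
    (LinearMap.ext fun w => M₂_M₂ hI.1 w)
    (LinearMap.ext fun w => M₂_M₂ hI.2 w)

lemma S3_act₃ {g h : Fin 2 → Fin 2 → ℝ} (hI : IsInv g h) (v : V3) :
    S₃ (act₃ g v) = (S₃ v).comap (E₂ (tr g) (tr h) hI.tr).toLinearMap := by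
  ext w
  rw [Submodule.mem_comap]
  show _ ↔ M₂ (tr g) w ∈ S₃ v
  rw [mem_S₃, mem_S₃]
  constructor <;> intro hw i j <;> have := hw i j <;>
    simp only [act₃, M₂, tr, Fin.sum_univ_two, LinearMap.coe_mk, AddHom.coe_mk] at this ⊢ <;>
    linear_combination this

lemma n₃_act₃ {g h : Fin 2 → Fin 2 → ℝ} (hI : IsInv g h) (v : V3) :
    n₃ (act₃ g v) = n₃ v := by
  unfold n₃
  rw [S3_act₃ hI v, Submodule.comap_equiv_eq_map_symm, LinearEquiv.finrank_map_eq]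

end TQ

namespace TQ

/-- product normal form `e₀⊗e₀⊗e₀`. -/
def base₁ : V3 := fun i j k => if i = 0 ∧ j = 0 ∧ k = 0 then 1 else 0
/-- biseparable normal form `e₀ ⊗ Id`. -/
def baseB1 : V3 := fun i j k => if i = 0 ∧ j = k then 1 else 0

lemma mem_S4_base₁ (w : V3) : w ∈ S₄ base₁ ↔
    (w 0 0 0 = 0 ∧ w 0 0 1 = 0 ∧ w 0 1 0 = 0 ∧ w 1 0 0 = 0) := by
  constructor
  · rintro ⟨h1, h2, h3⟩
    have a1 := h1 0 0; have a2 := h1 0 1; have a3 := h2 0 1; have a4 := h3 0 1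
    simp [base₁, Fin.sum_univ_two] at a1 a2 a3 a4
    exact ⟨a1, a2, a3, a4⟩
  · rintro ⟨e1, e2, e3, e4⟩
    refine ⟨fun a b => ?_, fun a b => ?_, fun a b => ?_⟩ <;>
      fin_cases a <;> fin_cases b <;>
      simp [base₁, Fin.sum_univ_two, e1, e2, e3, e4]

def wof₁ (y : Fin 4 → ℝ) : V3 := fun i j k =>
  if i = 0 then (if j = 1 ∧ k = 1 then y 0 else 0)
  else if j = 0 then (if k = 1 then y 1 else 0)
  else if k = 0 then y 2 else y 3

lemma wof₁_mem (y : Fin 4 → ℝ) : wof₁ y ∈ S₄ base₁ := by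
  rw [mem_S4_base₁]
  refine ⟨?_, ?_, ?_, ?_⟩ <;> simp [wof₁]

noncomputable def fwd₁ : (S₄ base₁) →ₗ[ℝ] (Fin 4 → ℝ) where
  toFun w := ![w.1 0 1 1, w.1 1 0 1, w.1 1 1 0, w.1 1 1 1]
  map_add' a b := by funext i; fin_cases i <;> simp
  map_smul' c a := by funext i; fin_cases i <;> simp

noncomputable def bwd₁ : (Fin 4 → ℝ) →ₗ[ℝ] (S₄ base₁) where
  toFun y := ⟨wof₁ y, wof₁_mem y⟩
  map_add' a b := by
    apply Subtype.ext; funext i j k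
    simp only [wof₁, Submodule.coe_add, Pi.add_apply]
    split_ifs <;> simp
  map_smul' c a := by
    apply Subtype.ext; funext i j k
    simp only [wof₁, SetLike.val_smul, Pi.smul_apply, smul_eq_mul, RingHom.id_apply]
    split_ifs <;> simp

noncomputable def eqv₁ : (S₄ base₁) ≃ₗ[ℝ] (Fin 4 → ℝ) :=
  LinearEquiv.ofLinear fwd₁ bwd₁
    (LinearMap.ext fun y => by
      funext i; fin_cases i <;> simp [fwd₁, bwd₁, wof₁])
    (LinearMap.ext fun w => by
      apply Subtype.ext
      obtain ⟨m1, m2, m3, m4⟩ := (mem_S4_base₁ w.1).1 w.2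
      funext i j k
      fin_cases i <;> fin_cases j <;> fin_cases k <;>
        simp [fwd₁, bwd₁, wof₁, m1, m2, m3, m4])

lemma n₄_base₁ : n₄ (base₁ : V3) = 4 := by
  unfold n₄
  rw [eqv₁.finrank_eq]
  simp

lemma mem_S4_baseB1 (w : V3) : w ∈ S₄ baseB1 ↔
    (w 0 0 0 = 0 ∧ w 0 0 1 = 0 ∧ w 0 1 0 = 0 ∧ w 0 1 1 = 0 ∧ w 1 0 0 + w 1 1 1 = 0) := by
  constructor
  · rintro ⟨h1, h2, h3⟩
    have a1 := h1 0 0; have a2 := h1 0 1; have a3 := h1 1 0; have a4 := h1 1 1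
    have a5 := h3 0 1
    simp [baseB1, Fin.sum_univ_two] at a1 a2 a3 a4 a5
    refine ⟨a1, a2, a3, a4, by linarith⟩
  · rintro ⟨e1, e2, e3, e4, e5⟩
    refine ⟨fun a b => ?_, fun a b => ?_, fun a b => ?_⟩ <;>
      fin_cases a <;> fin_cases b <;>
      simp [baseB1, Fin.sum_univ_two, e1, e2, e3, e4] <;> linarith

def wofB (y : Fin 3 → ℝ) : V3 := fun i j k =>
  if i = 0 then 0
  else if j = 0 then (if k = 0 then -(y 2) else y 0)
  else if k = 0 then y 1 else y 2

lemma wofB_mem (y : Fin 3 → ℝ) : wofB y ∈ S₄ baseB1 := by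
  rw [mem_S4_baseB1]
  refine ⟨?_, ?_, ?_, ?_, ?_⟩ <;> simp [wofB]

noncomputable def fwdB : (S₄ baseB1) →ₗ[ℝ] (Fin 3 → ℝ) where
  toFun w := ![w.1 1 0 1, w.1 1 1 0, w.1 1 1 1]
  map_add' a b := by funext i; fin_cases i <;> simp
  map_smul' c a := by funext i; fin_cases i <;> simp

noncomputable def bwdB : (Fin 3 → ℝ) →ₗ[ℝ] (S₄ baseB1) where
  toFun y := ⟨wofB y, wofB_mem y⟩
  map_add' a b := by
    apply Subtype.ext; funext i j k
    simp only [wofB, Submodule.coe_add, Pi.add_apply]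
    split_ifs <;> simp <;> ring
  map_smul' c a := by
    apply Subtype.ext; funext i j k
    simp only [wofB, SetLike.val_smul, Pi.smul_apply, smul_eq_mul, RingHom.id_apply]
    split_ifs <;> simp <;> ring

noncomputable def eqvB : (S₄ baseB1) ≃ₗ[ℝ] (Fin 3 → ℝ) :=
  LinearEquiv.ofLinear fwdB bwdB
    (LinearMap.ext fun y => by
      funext i; fin_cases i <;> simp [fwdB, bwdB, wofB])
    (LinearMap.ext fun w => by
      apply Subtype.ext
      obtain ⟨m1, m2, m3, m4, m5⟩ := (mem_S4_baseB1 w.1).1 w.2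
      funext i j k
      fin_cases i <;> fin_cases j <;> fin_cases k <;>
        simp [fwdB, bwdB, wofB, m1, m2, m3, m4] <;> linarith)

lemma n₄_baseB1 : n₄ (baseB1 : V3) = 3 := by
  unfold n₄
  rw [eqvB.finrank_eq]
  simp

def baseB2 : V3 := fun i j k => if j = 0 ∧ i = k then 1 else 0
def baseB3 : V3 := fun i j k => if k = 0 ∧ i = j then 1 else 0

lemma n₄_baseB2 : n₄ (baseB2 : V3) = 3 := by
  have : baseB2 = σ₁₂ baseB1 := by
    funext i j k; simp [baseB2, σ₁₂, baseB1, and_comm]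
  rw [this, n₄_σ₁₂, n₄_baseB1]

lemma n₄_baseB3 : n₄ (baseB3 : V3) = 3 := by
  have : baseB3 = σ₁₃ baseB1 := by
    funext i j k
    have : (i = j) = (j = i) := by ext; exact eq_comm
    simp [baseB3, σ₁₃, baseB1, this]
  rw [this, n₄_σ₁₃, n₄_baseB1]

end TQ

namespace TQ

lemma w_eq_zero {w : V3} (h0 : w 0 0 0 = 0) (h1 : w 0 0 1 = 0) (h2 : w 0 1 0 = 0)
    (h3 : w 0 1 1 = 0) (h4 : w 1 0 0 = 0) (h5 : w 1 0 1 = 0) (h6 : w 1 1 0 = 0)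
    (h7 : w 1 1 1 = 0) : w = 0 := by
  funext i j k
  fin_cases i <;> fin_cases j <;> fin_cases k <;> simp only [Pi.zero_apply] <;> assumption

/-- For `v` with slices `(I, C)` and `w ∈ S₄ v`, if the three coordinates
`w 0 0 1, w 0 1 1, w 1 0 1` vanish, then `w = 0`. -/
lemma slice_zero (v w : V3) (hA : ∀ i j, v i j 0 = if i = j then (1:ℝ) else 0)
    (hw : w ∈ S₄ v) (hb : w 0 0 1 = 0) (he : w 0 1 1 = 0) (hg : w 1 0 1 = 0) :
    w = 0 := by
  obtain ⟨h1, h2, h3⟩ := hw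
  have hv00 : v 0 0 0 = 1 := by simpa using hA 0 0
  have hv01 : v 0 1 0 = 0 := by simpa using hA 0 1
  have hv10 : v 1 0 0 = 0 := by simpa using hA 1 0
  have hv11 : v 1 1 0 = 1 := by simpa using hA 1 1
  have e1 := h1 0 0; have e2 := h1 0 1; have e6 := h2 0 1
  have e9 := h3 0 0; have e10 := h3 0 1
  simp only [Fin.sum_univ_two] at e1 e2 e6 e9 e10
  have F1 : w 0 0 0 + w 1 1 0 = 0 := by
    linear_combination e1 - w 0 0 0 * hv00 - w 0 1 0 * hv01 - w 1 0 0 * hv10 - w 1 1 0 * hv11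
  have F2 : w 0 0 1 + w 1 1 1 = 0 := by
    linear_combination e2 - w 0 0 1 * hv00 - w 0 1 1 * hv01 - w 1 0 1 * hv10 - w 1 1 1 * hv11
  have F3 : w 0 1 0 + v 0 0 1 * w 0 1 1 + v 1 0 1 * w 1 1 1 = 0 := by
    linear_combination e6 - w 0 1 0 * hv00 - w 1 1 0 * hv10
  have F4 : w 0 0 0 + v 0 0 1 * w 0 0 1 + v 0 1 1 * w 0 1 1 = 0 := by
    linear_combination e9 - w 0 0 0 * hv00 - w 0 1 0 * hv01
  have F5 : w 1 0 0 + v 0 0 1 * w 1 0 1 + v 0 1 1 * w 1 1 1 = 0 := by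
    linear_combination e10 - w 1 0 0 * hv00 - w 1 1 0 * hv01
  have hi : w 1 1 1 = 0 := by linarith
  have ha : w 0 0 0 = 0 := by
    linear_combination F4 - v 0 0 1 * hb - v 0 1 1 * he
  have hh : w 1 1 0 = 0 := by linarith
  have hc : w 0 1 0 = 0 := by
    linear_combination F3 - v 0 0 1 * he - v 1 0 1 * hi
  have hf : w 1 0 0 = 0 := by
    linear_combination F5 - v 0 0 1 * hg - v 0 1 1 * hi
  exact w_eq_zero ha hb hc he hf hg hh hi

/-- The key combination identities for `w ∈ S₄ v` with slices `(I, C)`. -/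
lemma slice_combos (v w : V3) (hA : ∀ i j, v i j 0 = if i = j then (1:ℝ) else 0)
    (hw : w ∈ S₄ v) :
    (v 0 1 1 * w 0 1 1 - v 1 0 1 * w 1 0 1 = 0) ∧
    ((v 0 0 1 - v 1 1 1) * w 0 1 1 - 2 * (v 1 0 1 * w 0 0 1) = 0) ∧
    ((v 0 0 1 - v 1 1 1) * w 1 0 1 - 2 * (v 0 1 1 * w 0 0 1) = 0) := by
  obtain ⟨h1, h2, h3⟩ := hw
  have hv00 : v 0 0 0 = 1 := by simpa using hA 0 0
  have hv01 : v 0 1 0 = 0 := by simpa using hA 0 1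
  have hv10 : v 1 0 0 = 0 := by simpa using hA 1 0
  have hv11 : v 1 1 0 = 1 := by simpa using hA 1 1
  have e2 := h1 0 1; have e5 := h2 0 0; have e6 := h2 0 1; have e7 := h2 1 0
  have e9 := h3 0 0; have e10 := h3 0 1; have e11 := h3 1 0
  simp only [Fin.sum_univ_two] at e2 e5 e6 e7 e9 e10 e11
  have F2 : w 0 0 1 + w 1 1 1 = 0 := by
    linear_combination e2 - w 0 0 1 * hv00 - w 0 1 1 * hv01 - w 1 0 1 * hv10 - w 1 1 1 * hv11
  have F3 : w 0 1 0 + v 0 0 1 * w 0 1 1 + v 1 0 1 * w 1 1 1 = 0 := by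
    linear_combination e6 - w 0 1 0 * hv00 - w 1 1 0 * hv10
  have F5 : w 1 0 0 + v 0 0 1 * w 1 0 1 + v 0 1 1 * w 1 1 1 = 0 := by
    linear_combination e10 - w 1 0 0 * hv00 - w 1 1 0 * hv01
  have F6 : v 1 0 1 * w 0 0 1 + w 0 1 0 + v 1 1 1 * w 0 1 1 = 0 := by
    linear_combination e11 - w 0 0 0 * hv10 - w 0 1 0 * hv11
  have F7 : v 0 1 1 * w 0 0 1 + w 1 0 0 + v 1 1 1 * w 1 0 1 = 0 := by
    linear_combination e7 - w 0 0 0 * hv01 - w 1 0 0 * hv11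
  refine ⟨?_, ?_, ?_⟩
  · linear_combination e9 - e5 - w 0 1 0 * hv01 + w 1 0 0 * hv10
  · linear_combination F3 - F6 - v 1 0 1 * F2
  · linear_combination F5 - F7 - v 0 1 1 * F2

lemma n₄_le_one_of_slice (v : V3) (hA : ∀ i j, v i j 0 = if i = j then (1:ℝ) else 0)
    (hns : v 0 1 1 ≠ 0 ∨ v 1 0 1 ≠ 0 ∨ v 0 0 1 ≠ v 1 1 1) :
    n₄ v ≤ 1 := by
  obtain ⟨c₁, c₂, c₃, hinj⟩ :
      ∃ c₁ c₂ c₃ : Fin 2, ∀ w, w ∈ S₄ v → w c₁ c₂ c₃ = 0 → w = 0 := by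
    rcases hns with hq | hr | hps
    · refine ⟨1, 0, 1, fun w hw hg => ?_⟩
      obtain ⟨K1, K2, K3⟩ := slice_combos v w hA hw
      have hqe : v 0 1 1 * w 0 1 1 = 0 := by linear_combination K1 + v 1 0 1 * hg
      have hqb : v 0 1 1 * w 0 0 1 = 0 := by
        linear_combination (-(1:ℝ)/2) * K3 + ((v 0 0 1 - v 1 1 1)/2) * hg
      exact slice_zero v w hA hw ((mul_eq_zero.mp hqb).resolve_left hq)
        ((mul_eq_zero.mp hqe).resolve_left hq) hg
    · refine ⟨0, 1, 1, fun w hw he => ?_⟩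
      obtain ⟨K1, K2, K3⟩ := slice_combos v w hA hw
      have hrg : v 1 0 1 * w 1 0 1 = 0 := by linear_combination -K1 + v 0 1 1 * he
      have hrb : v 1 0 1 * w 0 0 1 = 0 := by
        linear_combination (-(1:ℝ)/2) * K2 + ((v 0 0 1 - v 1 1 1)/2) * he
      exact slice_zero v w hA hw ((mul_eq_zero.mp hrb).resolve_left hr) he
        ((mul_eq_zero.mp hrg).resolve_left hr)
    · refine ⟨0, 0, 1, fun w hw hb => ?_⟩
      obtain ⟨K1, K2, K3⟩ := slice_combos v w hA hw
      have hps' : v 0 0 1 - v 1 1 1 ≠ 0 := sub_ne_zero.mpr hps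
      have h1 : (v 0 0 1 - v 1 1 1) * w 0 1 1 = 0 := by
        linear_combination K2 + 2 * v 1 0 1 * hb
      have h2 : (v 0 0 1 - v 1 1 1) * w 1 0 1 = 0 := by
        linear_combination K3 + 2 * v 0 1 1 * hb
      exact slice_zero v w hA hw hb ((mul_eq_zero.mp h1).resolve_left hps')
        ((mul_eq_zero.mp h2).resolve_left hps')
  let φ : (S₄ v) →ₗ[ℝ] ℝ :=
    { toFun := fun w => w.1 c₁ c₂ c₃
      map_add' := fun a b => rfl
      map_smul' := fun c a => rfl }
  have hker : Function.Injective φ := by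
    rw [← LinearMap.ker_eq_bot]
    apply (Submodule.eq_bot_iff _).2
    intro x hx
    exact Subtype.ext (hinj x.1 x.2 hx)
  calc n₄ v = Module.finrank ℝ (S₄ v) := rfl
    _ ≤ Module.finrank ℝ ℝ := LinearMap.finrank_le_finrank_of_injective hker
    _ = 1 := Module.finrank_self ℝ

end TQ

namespace TQ

lemma vec_ne {w : Fin 2 → ℝ} (h : w ≠ 0) : w 0 ≠ 0 ∨ w 1 ≠ 0 := by
  by_contra hc
  push_neg at hc
  exact h (by funext i; fin_cases i <;> simp [hc.1, hc.2])

/-- rotation-type invertible matrix with first column `a`. -/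
def rot (a : Fin 2 → ℝ) : Fin 2 → Fin 2 → ℝ :=
  fun i l => if l = 0 then a i else (if i = 0 then -(a 1) else a 0)

noncomputable def rotInv (a : Fin 2 → ℝ) : Fin 2 → Fin 2 → ℝ :=
  fun i l =>
    (if i = 0 then (if l = 0 then a 0 else a 1) else (if l = 0 then -(a 1) else a 0)) /
      (a 0 ^ 2 + a 1 ^ 2)

lemma rot_isInv (a : Fin 2 → ℝ) (ha : a ≠ 0) : IsInv (rot a) (rotInv a) := by
  have hd : a 0 ^ 2 + a 1 ^ 2 ≠ 0 := by
    rcases vec_ne ha with h | h <;> positivity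
  constructor <;> intro i j <;> fin_cases i <;> fin_cases j <;>
    simp [rot, rotInv, Fin.sum_univ_two] <;> field_simp <;> ring

def det2 (m : Fin 2 → Fin 2 → ℝ) : ℝ := m 0 0 * m 1 1 - m 0 1 * m 1 0

noncomputable def inv2 (m : Fin 2 → Fin 2 → ℝ) : Fin 2 → Fin 2 → ℝ :=
  fun i j =>
    (if i = 0 then (if j = 0 then m 1 1 else -(m 0 1)) else
      (if j = 0 then -(m 1 0) else m 0 0)) / det2 m

lemma inv2_isInv (m : Fin 2 → Fin 2 → ℝ) (hd : det2 m ≠ 0) : IsInv m (inv2 m) := by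
  have hd' : m 0 0 * m 1 1 - m 0 1 * m 1 0 ≠ 0 := by rw [det2] at hd; exact hd
  have hd'' : -(m 1 0 * m 0 1) + m 0 0 * m 1 1 ≠ 0 := by intro h; apply hd'; linarith
  have hd3 : m 1 1 * m 0 0 - m 0 1 * m 1 0 ≠ 0 := by intro h; apply hd'; linarith
  constructor <;> intro i j <;> fin_cases i <;> fin_cases j <;>
    simp [inv2, det2, Fin.sum_univ_two] <;>
    first
      | tauto
      | (have hx := mul_inv_cancel₀ hd''; linear_combination hx)
      | (field_simp; first | ring | skip)

lemma S2_eq_S1 (v : V3) : S₂ v = S₁ (σ₁₂ v) := by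
  ext w
  rw [mem_S₂, mem_S₁]
  constructor <;> intro h a b <;> exact h a b

lemma S3_eq_S1 (v : V3) : S₃ v = S₁ (σ₁₃ v) := by
  ext w
  rw [mem_S₃, mem_S₁]
  constructor <;> intro h a b <;> exact h b a

lemma decomp₁ (v : V3) (w : Fin 2 → ℝ) (hw : w ∈ S₁ v) (h0 : w ≠ 0) :
    ∃ (a : Fin 2 → ℝ) (m : Fin 2 → Fin 2 → ℝ),
      (∀ i j k, v i j k = a i * m j k) ∧ a ≠ 0 := by
  rw [mem_S₁] at hw
  simp only [Fin.sum_univ_two] at hw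
  by_cases hq : w 1 = 0
  · have hp : w 0 ≠ 0 := (vec_ne h0).resolve_right (by simpa using hq)
    refine ⟨fun i => if i = 0 then 0 else 1, fun j k => v 1 j k, fun i j k => ?_, ?_⟩
    · fin_cases i
      · have := hw j k
        rw [hq] at this
        simp only [mul_zero, add_zero] at this
        simp only [if_pos rfl]
        have := mul_eq_zero.mp this
        rcases this with h | h
        · simp [h]
        · exact absurd h hp
      · norm_num
    · intro hcon
      have := congrFun hcon 1
      norm_num at this
  · refine ⟨fun i => if i = 0 then w 1 else -(w 0), fun j k => v 0 j k / w 1,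
      fun i j k => ?_, ?_⟩
    · fin_cases i
      · simp only [Fin.zero_eta, if_pos rfl, if_true]
        field_simp
      · have := hw j k
        simp only [Fin.mk_one, show ((1 : Fin 2) = 0) = False by simp, if_false]
        field_simp
        linarith [this]
    · intro hcon
      have := congrFun hcon 0
      norm_num at this
      exact hq this

lemma decomp₂ (v : V3) (w : Fin 2 → ℝ) (hw : w ∈ S₂ v) (h0 : w ≠ 0) :
    ∃ (b : Fin 2 → ℝ) (m : Fin 2 → Fin 2 → ℝ),
      (∀ i j k, v i j k = b j * m i k) ∧ b ≠ 0 := by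
  rw [S2_eq_S1] at hw
  obtain ⟨a, m, hm, ha⟩ := decomp₁ (σ₁₂ v) w hw h0
  exact ⟨a, m, fun i j k => hm j i k, ha⟩

lemma decomp₃ (v : V3) (w : Fin 2 → ℝ) (hw : w ∈ S₃ v) (h0 : w ≠ 0) :
    ∃ (c : Fin 2 → ℝ) (m : Fin 2 → Fin 2 → ℝ),
      (∀ i j k, v i j k = c k * m i j) ∧ c ≠ 0 := by
  rw [S3_eq_S1] at hw
  obtain ⟨a, m, hm, ha⟩ := decomp₁ (σ₁₃ v) w hw h0
  exact ⟨a, fun i j => m j i, fun i j k => hm k j i, ha⟩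

/-- 2D decomposition, contraction over the first index of `m`. -/
lemma dec2fst (m : Fin 2 → Fin 2 → ℝ) (w : Fin 2 → ℝ) (h0 : w ≠ 0)
    (hc : ∀ k, m 0 k * w 0 + m 1 k * w 1 = 0) :
    ∃ (b c : Fin 2 → ℝ), ∀ j k, m j k = b j * c k := by
  by_cases hq : w 1 = 0
  · have hp : w 0 ≠ 0 := (vec_ne h0).resolve_right (by simpa using hq)
    refine ⟨fun j => if j = 0 then 0 else 1, fun k => m 1 k, fun j k => ?_⟩
    fin_cases j
    · have := hc k
      rw [hq] at this
      simp only [mul_zero, add_zero] at this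
      simp only [if_pos rfl]
      rcases mul_eq_zero.mp this with h | h
      · simp [h]
      · exact absurd h hp
    · norm_num
  · refine ⟨fun j => if j = 0 then w 1 else -(w 0), fun k => m 0 k / w 1, fun j k => ?_⟩
    fin_cases j
    · simp only [Fin.zero_eta, if_pos rfl, if_true]; field_simp
    · have := hc k
      simp only [Fin.mk_one, show ((1 : Fin 2) = 0) = False by simp, if_false]
      field_simp
      linarith [this]

/-- 2D decomposition, contraction over the second index of `m`. -/
lemma dec2snd (m : Fin 2 → Fin 2 → ℝ) (w : Fin 2 → ℝ) (h0 : w ≠ 0)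
    (hc : ∀ j, m j 0 * w 0 + m j 1 * w 1 = 0) :
    ∃ (b c : Fin 2 → ℝ), ∀ j k, m j k = b j * c k := by
  obtain ⟨b, c, h⟩ := dec2fst (fun j k => m k j) w h0 hc
  exact ⟨c, b, fun j k => by have := h k j; simpa [mul_comm] using this⟩

/-- rank-one factorisation of a singular nonzero 2×2 matrix. -/
lemma rank1 (m : Fin 2 → Fin 2 → ℝ) (hm : ¬∀ i j, m i j = 0) (hd : det2 m = 0) :
    ∃ p q : Fin 2 → ℝ, (∀ i j, m i j = p i * q j) ∧ p ≠ 0 ∧ q ≠ 0 := by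
  by_cases h0 : m 0 0 = 0 ∧ m 1 0 = 0
  · refine ⟨fun i => m i 1, fun j => if j = 0 then 0 else 1, fun i j => ?_, ?_, ?_⟩
    · fin_cases j
      · fin_cases i <;> simp [h0.1, h0.2]
      · norm_num
    · intro hcon
      apply hm
      intro i j
      have h1 : m i 1 = 0 := by
        have := congrFun hcon i; simpa using this
      fin_cases i <;> fin_cases j <;> simp [h0.1, h0.2, *] at h1 ⊢ <;> assumption
    · intro hcon
      have := congrFun hcon 1
      norm_num at this
  · push_neg at h0
    by_cases h00 : m 0 0 = 0
    · have h10 : m 1 0 ≠ 0 := h0 h00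
      have h01 : m 0 1 = 0 := by
        rw [det2, h00] at hd
        simp only [zero_mul, zero_sub, neg_eq_zero] at hd
        exact (mul_eq_zero.mp hd).resolve_right h10
      refine ⟨fun i => if i = 0 then 0 else 1,
        fun j => m 1 j, fun i j => ?_, ?_, ?_⟩
      · fin_cases i
        · fin_cases j <;> simp [h00, h01]
        · norm_num
      · intro hcon; have := congrFun hcon 1; norm_num at this
      · intro hcon; have := congrFun hcon 0; norm_num at this; exact h10 this
    · refine ⟨fun i => m i 0, fun j => if j = 0 then 1 else m 0 1 / m 0 0,
        fun i j => ?_, ?_, ?_⟩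
      · fin_cases i <;> fin_cases j <;> simp
        · field_simp
        · field_simp
          rw [det2] at hd
          linarith [hd]
      · intro hcon; have := congrFun hcon 0; norm_num at this; exact h00 this
      · intro hcon; have := congrFun hcon 0; norm_num at this

end TQ

namespace TQ

lemma finrank_pos_of_mem {M : Type*} [AddCommGroup M] [Module ℝ M] [Module.Finite ℝ M]
    {p : Submodule ℝ M} {w : M} (hw : w ∈ p) (h0 : w ≠ 0) :
    0 < Module.finrank ℝ p :=
  Module.finrank_pos_iff_exists_ne_zero.mpr ⟨⟨w, hw⟩, fun h => h0 (congrArg Subtype.val h)⟩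

lemma exists_mem_ne_zero {M : Type*} [AddCommGroup M] [Module ℝ M] [Module.Finite ℝ M]
    {p : Submodule ℝ M} (h : 0 < Module.finrank ℝ p) : ∃ w, w ∈ p ∧ w ≠ 0 := by
  obtain ⟨x, hx⟩ := Module.finrank_pos_iff_exists_ne_zero.mp h
  exact ⟨x.1, x.2, fun hh => hx (Subtype.ext hh)⟩

/-- a product tensor with a nonzero first factor gives a nonzero element of `S₁`. -/
lemma prod_n₁_pos {v : V3} {a b c : Fin 2 → ℝ} (hp : ∀ i j k, v i j k = a i * b j * c k)
    (ha : a ≠ 0) : 0 < n₁ v := by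
  refine finrank_pos_of_mem (w := fun i => if i = 0 then a 1 else -(a 0)) ?_ ?_
  · rw [mem_S₁]
    intro j k
    simp only [Fin.sum_univ_two, hp]
    norm_num
    ring
  · intro h
    rcases vec_ne ha with h0 | h0
    · have := congrFun h 1; norm_num at this; exact h0 this
    · have := congrFun h 0; norm_num at this; exact h0 this

lemma prod_n₂_pos {v : V3} {a b c : Fin 2 → ℝ} (hp : ∀ i j k, v i j k = a i * b j * c k)
    (hb : b ≠ 0) : 0 < n₂ v := by
  refine finrank_pos_of_mem (w := fun j => if j = 0 then b 1 else -(b 0)) ?_ ?_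
  · rw [mem_S₂]
    intro i k
    simp only [Fin.sum_univ_two, hp]
    norm_num
    ring
  · intro h
    rcases vec_ne hb with h0 | h0
    · have := congrFun h 1; norm_num at this; exact h0 this
    · have := congrFun h 0; norm_num at this; exact h0 this

lemma prod_n₃_pos {v : V3} {a b c : Fin 2 → ℝ} (hp : ∀ i j k, v i j k = a i * b j * c k)
    (hc : c ≠ 0) : 0 < n₃ v := by
  refine finrank_pos_of_mem (w := fun k => if k = 0 then c 1 else -(c 0)) ?_ ?_
  · rw [mem_S₃]
    intro i j
    simp only [Fin.sum_univ_two, hp]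
    norm_num
    ring
  · intro h
    rcases vec_ne hc with h0 | h0
    · have := congrFun h 1; norm_num at this; exact h0 this
    · have := congrFun h 0; norm_num at this; exact h0 this

/-- If `n₁ > 0` and `n₂ > 0` and `v ≠ 0` then `v` is a product of three nonzero vectors. -/
lemma prod_of_n₁_n₂ {v : V3} (hv : v ≠ 0) (h1 : 0 < n₁ v) (h2 : 0 < n₂ v) :
    ∃ a b c : Fin 2 → ℝ, (∀ i j k, v i j k = a i * b j * c k) ∧ a ≠ 0 ∧ b ≠ 0 ∧ c ≠ 0 := by
  obtain ⟨w1, hw1, hw1n⟩ := exists_mem_ne_zero h1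
  obtain ⟨a, m, hm, ha⟩ := decomp₁ v w1 hw1 hw1n
  obtain ⟨w2, hw2, hw2n⟩ := exists_mem_ne_zero h2
  have hai : ∃ i0, a i0 ≠ 0 := by rcases vec_ne ha with h | h; exacts [⟨0, h⟩, ⟨1, h⟩]
  obtain ⟨i0, hai0⟩ := hai
  have hcm : ∀ k, m 0 k * w2 0 + m 1 k * w2 1 = 0 := by
    intro k
    have hx := (mem_S₂.mp hw2) i0 k
    simp only [Fin.sum_univ_two, hm] at hx
    have h' : a i0 * (m 0 k * w2 0 + m 1 k * w2 1) = 0 := by linear_combination hx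
    exact (mul_eq_zero.mp h').resolve_left hai0
  obtain ⟨b, c, hbc⟩ := dec2fst m w2 hw2n hcm
  have hb : b ≠ 0 := by
    intro h
    apply hv
    funext i j k
    rw [hm, hbc, congrFun h j]
    simp
  have hc : c ≠ 0 := by
    intro h
    apply hv
    funext i j k
    rw [hm, hbc, congrFun h k]
    simp
  exact ⟨a, b, c, fun i j k => by rw [hm, hbc]; ring, ha, hb, hc⟩

lemma prod_of_n₁_n₃ {v : V3} (hv : v ≠ 0) (h1 : 0 < n₁ v) (h3 : 0 < n₃ v) :
    ∃ a b c : Fin 2 → ℝ, (∀ i j k, v i j k = a i * b j * c k) ∧ a ≠ 0 ∧ b ≠ 0 ∧ c ≠ 0 := by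
  obtain ⟨w1, hw1, hw1n⟩ := exists_mem_ne_zero h1
  obtain ⟨a, m, hm, ha⟩ := decomp₁ v w1 hw1 hw1n
  obtain ⟨w3, hw3, hw3n⟩ := exists_mem_ne_zero h3
  have hai : ∃ i0, a i0 ≠ 0 := by rcases vec_ne ha with h | h; exacts [⟨0, h⟩, ⟨1, h⟩]
  obtain ⟨i0, hai0⟩ := hai
  have hcm : ∀ j, m j 0 * w3 0 + m j 1 * w3 1 = 0 := by
    intro j
    have hx := (mem_S₃.mp hw3) i0 j
    simp only [Fin.sum_univ_two, hm] at hx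
    have h' : a i0 * (m j 0 * w3 0 + m j 1 * w3 1) = 0 := by linear_combination hx
    exact (mul_eq_zero.mp h').resolve_left hai0
  obtain ⟨b, c, hbc⟩ := dec2snd m w3 hw3n hcm
  have hb : b ≠ 0 := by
    intro h; apply hv; funext i j k; rw [hm, hbc, congrFun h j]; simp
  have hc : c ≠ 0 := by
    intro h; apply hv; funext i j k; rw [hm, hbc, congrFun h k]; simp
  exact ⟨a, b, c, fun i j k => by rw [hm, hbc]; ring, ha, hb, hc⟩

lemma prod_of_n₂_n₃ {v : V3} (hv : v ≠ 0) (h2 : 0 < n₂ v) (h3 : 0 < n₃ v) :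
    ∃ a b c : Fin 2 → ℝ, (∀ i j k, v i j k = a i * b j * c k) ∧ a ≠ 0 ∧ b ≠ 0 ∧ c ≠ 0 := by
  obtain ⟨w2, hw2, hw2n⟩ := exists_mem_ne_zero h2
  obtain ⟨b, m, hm, hb⟩ := decomp₂ v w2 hw2 hw2n
  obtain ⟨w3, hw3, hw3n⟩ := exists_mem_ne_zero h3
  have hbj : ∃ j0, b j0 ≠ 0 := by rcases vec_ne hb with h | h; exacts [⟨0, h⟩, ⟨1, h⟩]
  obtain ⟨j0, hbj0⟩ := hbj
  have hcm : ∀ i, m i 0 * w3 0 + m i 1 * w3 1 = 0 := by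
    intro i
    have hx := (mem_S₃.mp hw3) i j0
    simp only [Fin.sum_univ_two, hm] at hx
    have h' : b j0 * (m i 0 * w3 0 + m i 1 * w3 1) = 0 := by linear_combination hx
    exact (mul_eq_zero.mp h').resolve_left hbj0
  obtain ⟨a, c, hac⟩ := dec2snd m w3 hw3n hcm
  have ha : a ≠ 0 := by
    intro h; apply hv; funext i j k; rw [hm, hac, congrFun h i]; simp
  have hc : c ≠ 0 := by
    intro h; apply hv; funext i j k; rw [hm, hac, congrFun h k]; simp
  exact ⟨a, b, c, fun i j k => by rw [hm, hac]; ring, ha, hb, hc⟩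

end TQ

namespace TQ

lemma n₄_of_prod {v : V3} {a b c : Fin 2 → ℝ} (hp : ∀ i j k, v i j k = a i * b j * c k)
    (ha : a ≠ 0) (hb : b ≠ 0) (hc : c ≠ 0) : n₄ v = 4 := by
  have hv : v = act₁ (rot a) (act₂ (rot b) (act₃ (rot c) base₁)) := by
    funext i j k
    rw [hp]
    simp only [act₁, act₂, act₃, rot, base₁, Fin.sum_univ_two]
    fin_cases i <;> fin_cases j <;> fin_cases k <;> norm_num <;> ring
  rw [hv, n₄_act₁ (rot_isInv a ha), n₄_act₂ (rot_isInv b hb),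
    n₄_act₃ (rot_isInv c hc), n₄_base₁]

lemma n₄_of_bisep₁ {v : V3} {a : Fin 2 → ℝ} {m : Fin 2 → Fin 2 → ℝ}
    (hp : ∀ i j k, v i j k = a i * m j k) (ha : a ≠ 0) (hd : det2 m ≠ 0) : n₄ v = 3 := by
  have hv : v = act₁ (rot a) (act₂ m baseB1) := by
    funext i j k
    rw [hp]
    simp only [act₁, act₂, rot, baseB1, Fin.sum_univ_two]
    fin_cases i <;> fin_cases j <;> fin_cases k <;> norm_num <;> ring
  rw [hv, n₄_act₁ (rot_isInv a ha), n₄_act₂ (inv2_isInv m hd), n₄_baseB1]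

lemma n₄_of_bisep₂ {v : V3} {b : Fin 2 → ℝ} {m : Fin 2 → Fin 2 → ℝ}
    (hp : ∀ i j k, v i j k = b j * m i k) (hb : b ≠ 0) (hd : det2 m ≠ 0) : n₄ v = 3 := by
  have hv : v = act₂ (rot b) (act₁ m baseB2) := by
    funext i j k
    rw [hp]
    simp only [act₁, act₂, rot, baseB2, Fin.sum_univ_two]
    fin_cases i <;> fin_cases j <;> fin_cases k <;> norm_num <;> ring
  rw [hv, n₄_act₂ (rot_isInv b hb), n₄_act₁ (inv2_isInv m hd), n₄_baseB2]

lemma n₄_of_bisep₃ {v : V3} {c : Fin 2 → ℝ} {m : Fin 2 → Fin 2 → ℝ}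
    (hp : ∀ i j k, v i j k = c k * m i j) (hc : c ≠ 0) (hd : det2 m ≠ 0) : n₄ v = 3 := by
  have hv : v = act₃ (rot c) (act₁ m baseB3) := by
    funext i j k
    rw [hp]
    simp only [act₁, act₃, rot, baseB3, Fin.sum_univ_two]
    fin_cases i <;> fin_cases j <;> fin_cases k <;> norm_num <;> ring
  rw [hv, n₄_act₃ (rot_isInv c hc), n₄_act₁ (inv2_isInv m hd), n₄_baseB3]

end TQ

namespace TQ

lemma case100 {v : V3} (hv : v ≠ 0) (h1 : 0 < n₁ v) (h2 : n₂ v = 0) : n₄ v = 3 := by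
  obtain ⟨w1, hw1, hw1n⟩ := exists_mem_ne_zero h1
  obtain ⟨a, m, hm, ha⟩ := decomp₁ v w1 hw1 hw1n
  have hm0 : ¬∀ j k, m j k = 0 := by
    intro hz; apply hv; funext i j k; rw [hm, hz]; simp
  by_cases hd : det2 m = 0
  · exfalso
    obtain ⟨p, q, hpq, hp, hq⟩ := rank1 m hm0 hd
    have hmem : (fun j : Fin 2 => if j = 0 then p 1 else -(p 0)) ∈ S₂ v := by
      rw [mem_S₂]; intro i k
      simp only [Fin.sum_univ_two, hm, hpq]
      norm_num; ring
    have hne : (fun j : Fin 2 => if j = 0 then p 1 else -(p 0)) ≠ 0 := by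
      intro h
      rcases vec_ne hp with h0 | h0
      · have := congrFun h 1; norm_num at this; exact h0 this
      · have := congrFun h 0; norm_num at this; exact h0 this
    have hpos := finrank_pos_of_mem hmem hne
    rw [show Module.finrank ℝ ↥(S₂ v) = n₂ v from rfl, h2] at hpos
    exact lt_irrefl 0 hpos
  · exact n₄_of_bisep₁ hm ha hd

lemma case010 {v : V3} (hv : v ≠ 0) (h2 : 0 < n₂ v) (h1 : n₁ v = 0) : n₄ v = 3 := by
  obtain ⟨w2, hw2, hw2n⟩ := exists_mem_ne_zero h2
  obtain ⟨b, m, hm, hb⟩ := decomp₂ v w2 hw2 hw2n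
  have hm0 : ¬∀ i k, m i k = 0 := by
    intro hz; apply hv; funext i j k; rw [hm, hz]; simp
  by_cases hd : det2 m = 0
  · exfalso
    obtain ⟨p, q, hpq, hp, hq⟩ := rank1 m hm0 hd
    have hmem : (fun i : Fin 2 => if i = 0 then p 1 else -(p 0)) ∈ S₁ v := by
      rw [mem_S₁]; intro j k
      simp only [Fin.sum_univ_two, hm, hpq]
      norm_num; ring
    have hne : (fun i : Fin 2 => if i = 0 then p 1 else -(p 0)) ≠ 0 := by
      intro h
      rcases vec_ne hp with h0 | h0
      · have := congrFun h 1; norm_num at this; exact h0 this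
      · have := congrFun h 0; norm_num at this; exact h0 this
    have hpos := finrank_pos_of_mem hmem hne
    rw [show Module.finrank ℝ ↥(S₁ v) = n₁ v from rfl, h1] at hpos
    exact lt_irrefl 0 hpos
  · exact n₄_of_bisep₂ hm hb hd

lemma case001 {v : V3} (hv : v ≠ 0) (h3 : 0 < n₃ v) (h1 : n₁ v = 0) : n₄ v = 3 := by
  obtain ⟨w3, hw3, hw3n⟩ := exists_mem_ne_zero h3
  obtain ⟨c, m, hm, hc⟩ := decomp₃ v w3 hw3 hw3n
  have hm0 : ¬∀ i j, m i j = 0 := by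
    intro hz; apply hv; funext i j k; rw [hm, hz]; simp
  by_cases hd : det2 m = 0
  · exfalso
    obtain ⟨p, q, hpq, hp, hq⟩ := rank1 m hm0 hd
    have hmem : (fun i : Fin 2 => if i = 0 then p 1 else -(p 0)) ∈ S₁ v := by
      rw [mem_S₁]; intro j k
      simp only [Fin.sum_univ_two, hm, hpq]
      norm_num; ring
    have hne : (fun i : Fin 2 => if i = 0 then p 1 else -(p 0)) ≠ 0 := by
      intro h
      rcases vec_ne hp with h0 | h0
      · have := congrFun h 1; norm_num at this; exact h0 this
      · have := congrFun h 0; norm_num at this; exact h0 this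
    have hpos := finrank_pos_of_mem hmem hne
    rw [show Module.finrank ℝ ↥(S₁ v) = n₁ v from rfl, h1] at hpos
    exact lt_irrefl 0 hpos
  · exact n₄_of_bisep₃ hm hc hd

end TQ

namespace TQ

lemma case000 {v : V3} (h1 : n₁ v = 0) (h2 : n₂ v = 0) (h3 : n₃ v = 0) : n₄ v ≤ 1 := by
  have hS1 : ∀ x, x ∈ S₁ v → x = 0 := by
    intro x hx
    have hbot : S₁ v = ⊥ := Submodule.finrank_eq_zero.mp h1
    rw [hbot] at hx; simpa using hx
  have hS2 : ∀ x, x ∈ S₂ v → x = 0 := by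
    intro x hx
    have hbot : S₂ v = ⊥ := Submodule.finrank_eq_zero.mp h2
    rw [hbot] at hx; simpa using hx
  have hS3 : ∀ x, x ∈ S₃ v → x = 0 := by
    intro x hx
    have hbot : S₃ v = ⊥ := Submodule.finrank_eq_zero.mp h3
    rw [hbot] at hx; simpa using hx
  -- the two slices are nonzero
  have hA0 : ¬∀ i j, v i j 0 = 0 := by
    intro hz
    have hmem : (fun k : Fin 2 => if k = 0 then (1:ℝ) else 0) ∈ S₃ v := by
      rw [mem_S₃]; intro i j; simp [Fin.sum_univ_two, hz]
    have := congrFun (hS3 _ hmem) 0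
    norm_num at this
  have hB0 : ¬∀ i j, v i j 1 = 0 := by
    intro hz
    have hmem : (fun k : Fin 2 => if k = 0 then (0:ℝ) else 1) ∈ S₃ v := by
      rw [mem_S₃]; intro i j; simp [Fin.sum_univ_two, hz]
    have := congrFun (hS3 _ hmem) 1
    norm_num at this
  -- some combination of the slices is invertible
  have hcombo : ∃ α β : ℝ, det2 (fun i j => α * v i j 0 + β * v i j 1) ≠ 0 := by
    by_contra hno
    push_neg at hno
    have hdA : det2 (fun i j => v i j 0) = 0 := by
      have := hno 1 0; simp only [det2] at this ⊢; linear_combination this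
    have hdB : det2 (fun i j => v i j 1) = 0 := by
      have := hno 0 1; simp only [det2] at this ⊢; linear_combination this
    obtain ⟨p, q, hpq0, hp, hq⟩ := rank1 _ hA0 hdA
    obtain ⟨r, u, hru0, hr, hu⟩ := rank1 _ hB0 hdB
    have hpq : ∀ i j, v i j 0 = p i * q j := hpq0
    have hru : ∀ i j, v i j 1 = r i * u j := hru0
    have key : (p 0 * r 1 - p 1 * r 0) * (q 0 * u 1 - q 1 * u 0) = 0 := by
      have h1 := hno 1 1
      simp only [det2] at h1
      rw [hpq 0 0, hpq 1 1, hpq 0 1, hpq 1 0, hru 0 0, hru 1 1, hru 0 1, hru 1 0] at h1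
      linear_combination h1
    rcases mul_eq_zero.mp key with hf | hf
    · -- common left kernel : element of S₁
      have hmem : (fun i : Fin 2 => if i = 0 then -(p 1) else p 0) ∈ S₁ v := by
        rw [mem_S₁]; intro j k
        fin_cases k <;>
          simp only [Fin.sum_univ_two, hpq, hru, Fin.zero_eta, Fin.mk_one] <;> norm_num
        · ring
        · first
          | linear_combination (-(u j)) * hf
          | linear_combination (u j) * hf
          | linear_combination (-2*(u j)) * hf
          | linear_combination (2*(u j)) * hf
      have hz := hS1 _ hmem
      rcases vec_ne hp with h0 | h0
      · have := congrFun hz 1; norm_num at this; exact h0 this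
      · have := congrFun hz 0; norm_num at this; exact h0 this
    · -- common right kernel : element of S₂
      have hmem : (fun j : Fin 2 => if j = 0 then -(q 1) else q 0) ∈ S₂ v := by
        rw [mem_S₂]; intro i k
        fin_cases k <;>
          simp only [Fin.sum_univ_two, hpq, hru, Fin.zero_eta, Fin.mk_one] <;> norm_num
        · ring
        · first
          | linear_combination (-(r i)) * hf
          | linear_combination (r i) * hf
          | linear_combination (-2*(r i)) * hf
          | linear_combination (2*(r i)) * hf
      have hz := hS2 _ hmem
      rcases vec_ne hq with h0 | h0
      · have := congrFun hz 1; norm_num at this; exact h0 this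
      · have := congrFun hz 0; norm_num at this; exact h0 this
  obtain ⟨α, β, hd⟩ := hcombo
  set M : Fin 2 → Fin 2 → ℝ := fun i j => α * v i j 0 + β * v i j 1 with hM
  have hab : ¬(α = 0 ∧ β = 0) := by
    rintro ⟨ha, hb⟩
    apply hd
    simp [det2, hM, ha, hb]
  set a : Fin 2 → ℝ := fun i => if i = 0 then α else -β with haa
  have ha : a ≠ 0 := by
    intro h
    have h0 := congrFun h 0; have h1 := congrFun h 1
    norm_num [haa] at h0 h1
    exact hab ⟨h0, h1⟩
  have hI : IsInv M (inv2 M) := inv2_isInv M hd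
  set v₂ : V3 := act₁ (inv2 M) (act₃ (rot a) v) with hv₂
  have hv₁ : ∀ i j, (act₃ (rot a) v) i j 0 = M i j := by
    intro i j
    simp only [act₃, rot, Fin.sum_univ_two, hM, haa]
    norm_num
  have hA : ∀ i j, v₂ i j 0 = if i = j then (1:ℝ) else 0 := by
    intro i j
    have hδ := hI.2 i j
    simp only [Fin.sum_univ_two] at hδ
    have hstep : v₂ i j 0 = inv2 M i 0 * M 0 j + inv2 M i 1 * M 1 j := by
      rw [hv₂]
      simp only [act₁, Fin.sum_univ_two]
      rw [hv₁ 0 j, hv₁ 1 j]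
    rw [hstep]
    exact hδ
  have h3' : n₃ v₂ = 0 := by
    rw [hv₂, n₃_act₁ hI.symm, n₃_act₃ (rot_isInv a ha)]
    exact h3
  have hns : v₂ 0 1 1 ≠ 0 ∨ v₂ 1 0 1 ≠ 0 ∨ v₂ 0 0 1 ≠ v₂ 1 1 1 := by
    by_contra hcon
    push_neg at hcon
    obtain ⟨hq0, hr0, hps⟩ := hcon
    have hx : (fun k : Fin 2 => if k = 0 then v₂ 0 0 1 else -1) ∈ S₃ v₂ := by
      rw [mem_S₃]
      intro i j
      fin_cases i <;> fin_cases j <;>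
        simp only [Fin.sum_univ_two, Fin.zero_eta, Fin.mk_one] <;> norm_num <;>
        rw [hA] <;> norm_num
      · exact hq0
      · exact hr0
      · linarith [hps]
    have hxne : (fun k : Fin 2 => if k = 0 then v₂ 0 0 1 else -1) ≠ 0 := by
      intro h; have := congrFun h 1; norm_num at this
    have hpos := finrank_pos_of_mem hx hxne
    rw [show Module.finrank ℝ ↥(S₃ v₂) = n₃ v₂ from rfl, h3'] at hpos
    exact lt_irrefl 0 hpos
  have hle := n₄_le_one_of_slice v₂ hA hns
  have : n₄ v₂ = n₄ v := by
    rw [hv₂, n₄_act₁ hI.symm, n₄_act₃ (rot_isInv a ha)]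
  rw [← this]
  exact hle

end TQ

namespace TQ

lemma n₁_zero : n₁ (0 : V3) = 2 := by
  have htop : S₁ (0 : V3) = ⊤ := by
    ext w
    constructor
    · intro _; trivial
    · intro _
      rw [mem_S₁]
      intro j k
      simp
  unfold n₁
  rw [htop, finrank_top]
  simp

lemma n₂_zero : n₂ (0 : V3) = 2 := by
  have htop : S₂ (0 : V3) = ⊤ := by
    ext w
    constructor
    · intro _; trivial
    · intro _
      rw [mem_S₂]
      intro j k
      simp
  unfold n₂
  rw [htop, finrank_top]
  simp

lemma n₃_zero : n₃ (0 : V3) = 2 := by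
  have htop : S₃ (0 : V3) = ⊤ := by
    ext w
    constructor
    · intro _; trivial
    · intro _
      rw [mem_S₃]
      intro j k
      simp
  unfold n₃
  rw [htop, finrank_top]
  simp

lemma n₄_zero : n₄ (0 : V3) = 8 := by
  have htop : S₄ (0 : V3) = ⊤ := by
    ext w
    constructor
    · intro _; trivial
    · intro _
      refine ⟨fun a b => ?_, fun a b => ?_, fun a b => ?_⟩ <;> simp
  unfold n₄
  rw [htop, finrank_top]
  simp [Module.finrank_pi_fintype]

lemma v_zero_of_n₁ {v : V3} (h : n₁ v = 2) : v = 0 := by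
  have htop : S₁ v = ⊤ := by
    apply Submodule.eq_top_of_finrank_eq
    rw [show Module.finrank ℝ ↥(S₁ v) = n₁ v from rfl, h]
    simp
  funext i j k
  have hmem : (fun x : Fin 2 => if x = i then (1:ℝ) else 0) ∈ S₁ v := by
    rw [htop]; trivial
  have hc := (mem_S₁.mp hmem) j k
  simp only [Fin.sum_univ_two] at hc
  fin_cases i <;> norm_num at hc <;> exact hc

lemma v_zero_of_n₂ {v : V3} (h : n₂ v = 2) : v = 0 := by
  have h' : n₁ (σ₁₂ v) = 2 := by
    unfold n₁
    rw [← S2_eq_S1]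
    exact h
  have hz := v_zero_of_n₁ h'
  funext i j k
  exact congrFun (congrFun (congrFun hz j) i) k

lemma v_zero_of_n₃ {v : V3} (h : n₃ v = 2) : v = 0 := by
  have h' : n₁ (σ₁₃ v) = 2 := by
    unfold n₁
    rw [← S3_eq_S1]
    exact h
  have hz := v_zero_of_n₁ h'
  funext i j k
  exact congrFun (congrFun (congrFun hz k) j) i

lemma n₁_le {v : V3} : n₁ v ≤ 2 :=
  le_trans (Submodule.finrank_le _) (by simp)

lemma n₂_le {v : V3} : n₂ v ≤ 2 :=
  le_trans (Submodule.finrank_le _) (by simp)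

lemma n₃_le {v : V3} : n₃ v ≤ 2 :=
  le_trans (Submodule.finrank_le _) (by simp)

end TQ

/-- **Completeness of the three-qubit classification.**
For every three-qubit array `v`, the invariant tuple
`N(v) = (n₁ v, n₂ v, n₃ v, ñ₄ v)` takes one of exactly seven values. -/
theorem three_qubit_invariant_values (v : Fin 2 → Fin 2 → Fin 2 → ℝ) :
    (n₁ v, n₂ v, n₃ v, n₄ v) ∈
      ({(2, 2, 2, 8), (1, 1, 1, 4), (0, 0, 1, 3), (0, 1, 0, 3),
        (1, 0, 0, 3), (0, 0, 0, 1), (0, 0, 0, 0)} : Set (ℕ × ℕ × ℕ × ℕ)) := by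
  by_cases hv : v = 0
  · subst hv
    rw [TQ.n₁_zero, TQ.n₂_zero, TQ.n₃_zero, TQ.n₄_zero]
    exact Set.mem_insert _ _
  · have hb1 : n₁ v ≤ 2 := TQ.n₁_le
    have hb2 : n₂ v ≤ 2 := TQ.n₂_le
    have hb3 : n₃ v ≤ 2 := TQ.n₃_le
    have hn1 : n₁ v = 0 ∨ n₁ v = 1 := by
      rcases Nat.lt_or_ge (n₁ v) 2 with h | h
      · omega
      · exact absurd (TQ.v_zero_of_n₁ (le_antisymm hb1 h)) hv
    have hn2 : n₂ v = 0 ∨ n₂ v = 1 := by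
      rcases Nat.lt_or_ge (n₂ v) 2 with h | h
      · omega
      · exact absurd (TQ.v_zero_of_n₂ (le_antisymm hb2 h)) hv
    have hn3 : n₃ v = 0 ∨ n₃ v = 1 := by
      rcases Nat.lt_or_ge (n₃ v) 2 with h | h
      · omega
      · exact absurd (TQ.v_zero_of_n₃ (le_antisymm hb3 h)) hv
    rcases hn1 with h1 | h1 <;> rcases hn2 with h2 | h2 <;> rcases hn3 with h3 | h3
    · -- (0,0,0)
      have h4 := TQ.case000 h1 h2 h3
      have : n₄ v = 0 ∨ n₄ v = 1 := by omega
      rcases this with h4' | h4' <;> rw [h1, h2, h3, h4'] <;> simp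
    · -- (0,0,1)
      have h4 := TQ.case001 hv (by omega) h1
      rw [h1, h2, h3, h4]; simp
    · -- (0,1,0)
      have h4 := TQ.case010 hv (by omega) h1
      rw [h1, h2, h3, h4]; simp
    · -- (0,1,1) : impossible
      exfalso
      obtain ⟨a, b, c, hp, ha, hb, hc⟩ := TQ.prod_of_n₂_n₃ hv (by omega) (by omega)
      have := TQ.prod_n₁_pos hp ha
      omega
    · -- (1,0,0)
      have h4 := TQ.case100 hv (by omega) h2
      rw [h1, h2, h3, h4]; simp
    · -- (1,0,1) : impossible
      exfalso
      obtain ⟨a, b, c, hp, ha, hb, hc⟩ := TQ.prod_of_n₁_n₃ hv (by omega) (by omega)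
      have := TQ.prod_n₂_pos hp hb
      omega
    · -- (1,1,0) : impossible
      exfalso
      obtain ⟨a, b, c, hp, ha, hb, hc⟩ := TQ.prod_of_n₁_n₂ hv (by omega) (by omega)
      have := TQ.prod_n₃_pos hp hc
      omega
    · -- (1,1,1)
      obtain ⟨a, b, c, hp, ha, hb, hc⟩ := TQ.prod_of_n₁_n₂ hv (by omega) (by omega)
      have h4 := TQ.n₄_of_prod hp ha hb hc
      rw [h1, h2, h3, h4]; simp
end

section
/- The seven representative three-qubit arrays realize the seven invariant tuples: N(0) = (2,2,2,8); N([1,1,1]) = (1,1,1,4); N([1,1,1]+[2,2,1]) = (0,0,1,3); N([1,1,1]+[2,1,2]) = (0,1,0,3); N([1,1,1]+[1,2,2]) = (1,0,0,3); N([1,1,1]+[1,2,2]+[2,1,2]) = (0,0,0,1); and N([1,1,1]+[2,2,2]) = (0,0,0,0). -/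
variable {d₁ d₂ d₃ : ℕ}

/-- The basis array `[a,b,c]`: equal to `1` at index `(a,b,c)` and `0`
elsewhere.  The paper's indices `1, 2` correspond to `0, 1 : Fin 2`. -/
def e (a b c : Fin 2) : Fin 2 → Fin 2 → Fin 2 → ℝ :=
  fun i j k => if i = a ∧ j = b ∧ k = c then 1 else 0
section Aux

open Submodule Module

lemma mem_S₁' {v : Fin d₁ → Fin d₂ → Fin d₃ → ℝ} {w : Fin d₁ → ℝ} :
    w ∈ S₁ v ↔ ∀ j₂ j₃, ∑ j₁, v j₁ j₂ j₃ * w j₁ = 0 := Iff.rfl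

lemma mem_S₂' {v : Fin d₁ → Fin d₂ → Fin d₃ → ℝ} {w : Fin d₂ → ℝ} :
    w ∈ S₂ v ↔ ∀ j₁ j₃, ∑ j₂, v j₁ j₂ j₃ * w j₂ = 0 := Iff.rfl

lemma mem_S₃' {v : Fin d₁ → Fin d₂ → Fin d₃ → ℝ} {w : Fin d₃ → ℝ} :
    w ∈ S₃ v ↔ ∀ j₁ j₂, ∑ j₃, v j₁ j₂ j₃ * w j₃ = 0 := Iff.rfl

lemma mem_S₄' {v w : Fin d₁ → Fin d₂ → Fin d₃ → ℝ} :
    w ∈ S₄ v ↔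
    (∀ j₃ k₃, ∑ j₁, ∑ j₂, v j₁ j₂ j₃ * w j₁ j₂ k₃ = 0) ∧
    (∀ j₂ k₂, ∑ j₁, ∑ j₃, v j₁ j₂ j₃ * w j₁ k₂ j₃ = 0) ∧
    (∀ j₁ k₁, ∑ j₂, ∑ j₃, v j₁ j₂ j₃ * w k₁ j₂ j₃ = 0) := Iff.rfl

/-- The vector `(0,1)`. -/
noncomputable def u1 : Fin 2 → ℝ := ![0, 1]

lemma u1_ne : u1 ≠ 0 := by
  intro h; have := congrFun h 1; simp [u1] at this

lemma finrank_of_span {k : ℕ} {V : Type*} [AddCommGroup V] [Module ℝ V]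
    {S : Submodule ℝ V} {b : Fin k → V}
    (hspan : S = Submodule.span ℝ (Set.range b)) (hind : LinearIndependent ℝ b) :
    Module.finrank ℝ S = k := by
  rw [hspan, finrank_span_eq_card hind, Fintype.card_fin]

-- ### v = 0
lemma n1_v1 : n₁ (0 : Fin 2 → Fin 2 → Fin 2 → ℝ) = 2 := by
  have h : S₁ (0 : Fin 2 → Fin 2 → Fin 2 → ℝ) = ⊤ := by
    ext w; simp [mem_S₁']
  rw [n₁, h, finrank_top]; simp [Module.finrank_pi]

lemma n2_v1 : n₂ (0 : Fin 2 → Fin 2 → Fin 2 → ℝ) = 2 := by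
  have h : S₂ (0 : Fin 2 → Fin 2 → Fin 2 → ℝ) = ⊤ := by
    ext w; simp [mem_S₂']
  rw [n₂, h, finrank_top]; simp [Module.finrank_pi]

lemma n3_v1 : n₃ (0 : Fin 2 → Fin 2 → Fin 2 → ℝ) = 2 := by
  have h : S₃ (0 : Fin 2 → Fin 2 → Fin 2 → ℝ) = ⊤ := by
    ext w; simp [mem_S₃']
  rw [n₃, h, finrank_top]; simp [Module.finrank_pi]

lemma n4_v1 : n₄ (0 : Fin 2 → Fin 2 → Fin 2 → ℝ) = 8 := by
  have h : S₄ (0 : Fin 2 → Fin 2 → Fin 2 → ℝ) = ⊤ := by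
    ext w; simp [mem_S₄']
  rw [n₄, h, finrank_top]
  simp [Module.finrank_pi_fintype, Module.finrank_pi]

end Aux
section Aux2
open Submodule Module

-- ### generic 1-dim helper for S₁/S₂/S₃ : solution space {w | w 0 = 0}

-- ### v2 = e 0 0 0
lemma n1_v2 : n₁ (e 0 0 0) = 1 := by
  have h : S₁ (e 0 0 0) = Submodule.span ℝ {u1} := by
    ext w
    rw [mem_S₁', Submodule.mem_span_singleton]
    constructor
    · intro hw
      have h0 := hw 0 0
      simp [e, Fin.sum_univ_two] at h0
      exact ⟨w 1, by funext i; fin_cases i <;> simp [u1, h0]⟩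
    · rintro ⟨a, rfl⟩ j₂ j₃
      fin_cases j₂ <;> fin_cases j₃ <;> simp [e, u1, Fin.sum_univ_two]
  rw [n₁, h, finrank_span_singleton u1_ne]

lemma n2_v2 : n₂ (e 0 0 0) = 1 := by
  have h : S₂ (e 0 0 0) = Submodule.span ℝ {u1} := by
    ext w
    rw [mem_S₂', Submodule.mem_span_singleton]
    constructor
    · intro hw
      have h0 := hw 0 0
      simp [e, Fin.sum_univ_two] at h0
      exact ⟨w 1, by funext i; fin_cases i <;> simp [u1, h0]⟩
    · rintro ⟨a, rfl⟩ j₁ j₃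
      fin_cases j₁ <;> fin_cases j₃ <;> simp [e, u1, Fin.sum_univ_two]
  rw [n₂, h, finrank_span_singleton u1_ne]

lemma n3_v2 : n₃ (e 0 0 0) = 1 := by
  have h : S₃ (e 0 0 0) = Submodule.span ℝ {u1} := by
    ext w
    rw [mem_S₃', Submodule.mem_span_singleton]
    constructor
    · intro hw
      have h0 := hw 0 0
      simp [e, Fin.sum_univ_two] at h0
      exact ⟨w 1, by funext i; fin_cases i <;> simp [u1, h0]⟩
    · rintro ⟨a, rfl⟩ j₁ j₂
      fin_cases j₁ <;> fin_cases j₂ <;> simp [e, u1, Fin.sum_univ_two]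
  rw [n₃, h, finrank_span_singleton u1_ne]

lemma n4_v2 : n₄ (e 0 0 0) = 4 := by
  have h : S₄ (e 0 0 0)
      = Submodule.span ℝ (Set.range ![e 0 1 1, e 1 0 1, e 1 1 0, e 1 1 1]) := by
    apply le_antisymm
    · intro w hw
      rw [mem_S₄'] at hw
      obtain ⟨h1, h2, h3⟩ := hw
      have a1 := h1 0 0; have a2 := h1 0 1; have a3 := h2 0 1; have a4 := h3 0 1
      simp [e, Fin.sum_univ_two] at a1 a2 a3 a4
      rw [mem_span_range_iff_exists_fun]
      refine ⟨![w 0 1 1, w 1 0 1, w 1 1 0, w 1 1 1], ?_⟩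
      funext i j k
      fin_cases i <;> fin_cases j <;> fin_cases k <;>
        simp [Fin.sum_univ_four, e, Matrix.vecHead, Matrix.vecTail] <;> linarith
    · rw [Submodule.span_le, Set.range_subset_iff]
      intro i
      fin_cases i <;>
        refine mem_S₄'.mpr ⟨?_, ?_, ?_⟩ <;> intro p q <;> fin_cases p <;> fin_cases q <;>
          simp [e, Fin.sum_univ_two, Matrix.vecHead, Matrix.vecTail]
  rw [n₄]
  refine finrank_of_span h ?_
  rw [Fintype.linearIndependent_iff]
  intro g hg
  have h0 := congrFun (congrFun (congrFun hg 0) 1) 1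
  have h1 := congrFun (congrFun (congrFun hg 1) 0) 1
  have h2 := congrFun (congrFun (congrFun hg 1) 1) 0
  have h3 := congrFun (congrFun (congrFun hg 1) 1) 1
  simp [Fin.sum_univ_four, e, Matrix.vecHead, Matrix.vecTail] at h0 h1 h2 h3
  intro i; fin_cases i <;> simp [h0, h1, h2, h3]

end Aux2
section Aux3
open Submodule Module

-- ### v3 = e000 + e110
lemma n1_v3 : n₁ (e 0 0 0 + e 1 1 0) = 0 := by
  have h : S₁ (e 0 0 0 + e 1 1 0) = ⊥ := by
    rw [eq_bot_iff]; intro w hw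
    rw [mem_S₁'] at hw
    have h0 := hw 0 0; have h1 := hw 1 0
    simp [e, Fin.sum_univ_two] at h0 h1
    simp only [Submodule.mem_bot]
    funext i; fin_cases i <;> simp <;> linarith
  rw [n₁, h, finrank_bot]

lemma n2_v3 : n₂ (e 0 0 0 + e 1 1 0) = 0 := by
  have h : S₂ (e 0 0 0 + e 1 1 0) = ⊥ := by
    rw [eq_bot_iff]; intro w hw
    rw [mem_S₂'] at hw
    have h0 := hw 0 0; have h1 := hw 1 0
    simp [e, Fin.sum_univ_two] at h0 h1
    simp only [Submodule.mem_bot]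
    funext i; fin_cases i <;> simp <;> linarith
  rw [n₂, h, finrank_bot]

lemma n3_v3 : n₃ (e 0 0 0 + e 1 1 0) = 1 := by
  have h : S₃ (e 0 0 0 + e 1 1 0) = Submodule.span ℝ {u1} := by
    ext w
    rw [mem_S₃', Submodule.mem_span_singleton]
    constructor
    · intro hw
      have h0 := hw 0 0
      simp [e, Fin.sum_univ_two] at h0
      exact ⟨w 1, by funext i; fin_cases i <;> simp [u1, h0]⟩
    · rintro ⟨a, rfl⟩ j₁ j₂
      fin_cases j₁ <;> fin_cases j₂ <;> simp [e, u1, Fin.sum_univ_two]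
  rw [n₃, h, finrank_span_singleton u1_ne]

lemma n4_v3 : n₄ (e 0 0 0 + e 1 1 0) = 3 := by
  have h : S₄ (e 0 0 0 + e 1 1 0)
      = Submodule.span ℝ (Set.range ![e 0 1 1, e 1 0 1, e 1 1 1 - e 0 0 1]) := by
    apply le_antisymm
    · intro w hw
      rw [mem_S₄'] at hw
      obtain ⟨h1, h2, h3⟩ := hw
      have a1 := h2 0 0; have a2 := h2 0 1; have a3 := h2 1 0; have a4 := h2 1 1
      have a5 := h1 0 1
      simp [e, Fin.sum_univ_two] at a1 a2 a3 a4 a5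
      rw [mem_span_range_iff_exists_fun]
      refine ⟨![w 0 1 1, w 1 0 1, w 1 1 1], ?_⟩
      funext i j k
      fin_cases i <;> fin_cases j <;> fin_cases k <;>
        simp [Fin.sum_univ_three, e, Matrix.vecHead, Matrix.vecTail] <;> linarith
    · rw [Submodule.span_le, Set.range_subset_iff]
      intro i
      fin_cases i <;>
        refine mem_S₄'.mpr ⟨?_, ?_, ?_⟩ <;> intro p q <;> fin_cases p <;> fin_cases q <;>
          simp [e, Fin.sum_univ_two, Matrix.vecHead, Matrix.vecTail]
  rw [n₄]
  refine finrank_of_span h ?_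
  rw [Fintype.linearIndependent_iff]
  intro g hg
  have h0 := congrFun (congrFun (congrFun hg 0) 1) 1
  have h1 := congrFun (congrFun (congrFun hg 1) 0) 1
  have h2 := congrFun (congrFun (congrFun hg 1) 1) 1
  simp [Fin.sum_univ_three, e, Matrix.vecHead, Matrix.vecTail] at h0 h1 h2
  intro i; fin_cases i <;> simp [h0, h1, h2]

-- ### v4 = e000 + e101
lemma n1_v4 : n₁ (e 0 0 0 + e 1 0 1) = 0 := by
  have h : S₁ (e 0 0 0 + e 1 0 1) = ⊥ := by
    rw [eq_bot_iff]; intro w hw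
    rw [mem_S₁'] at hw
    have h0 := hw 0 0; have h1 := hw 0 1
    simp [e, Fin.sum_univ_two] at h0 h1
    simp only [Submodule.mem_bot]
    funext i; fin_cases i <;> simp <;> linarith
  rw [n₁, h, finrank_bot]

lemma n2_v4 : n₂ (e 0 0 0 + e 1 0 1) = 1 := by
  have h : S₂ (e 0 0 0 + e 1 0 1) = Submodule.span ℝ {u1} := by
    ext w
    rw [mem_S₂', Submodule.mem_span_singleton]
    constructor
    · intro hw
      have h0 := hw 0 0
      simp [e, Fin.sum_univ_two] at h0
      exact ⟨w 1, by funext i; fin_cases i <;> simp [u1, h0]⟩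
    · rintro ⟨a, rfl⟩ j₁ j₃
      fin_cases j₁ <;> fin_cases j₃ <;> simp [e, u1, Fin.sum_univ_two]
  rw [n₂, h, finrank_span_singleton u1_ne]

lemma n3_v4 : n₃ (e 0 0 0 + e 1 0 1) = 0 := by
  have h : S₃ (e 0 0 0 + e 1 0 1) = ⊥ := by
    rw [eq_bot_iff]; intro w hw
    rw [mem_S₃'] at hw
    have h0 := hw 0 0; have h1 := hw 1 0
    simp [e, Fin.sum_univ_two] at h0 h1
    simp only [Submodule.mem_bot]
    funext i; fin_cases i <;> simp <;> linarith
  rw [n₃, h, finrank_bot]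

lemma n4_v4 : n₄ (e 0 0 0 + e 1 0 1) = 3 := by
  have h : S₄ (e 0 0 0 + e 1 0 1)
      = Submodule.span ℝ (Set.range ![e 0 1 1, e 1 1 0, e 1 1 1 - e 0 1 0]) := by
    apply le_antisymm
    · intro w hw
      rw [mem_S₄'] at hw
      obtain ⟨h1, h2, h3⟩ := hw
      have a1 := h3 0 0; have a2 := h3 0 1; have a3 := h3 1 0; have a4 := h3 1 1
      have a5 := h2 0 1
      simp [e, Fin.sum_univ_two] at a1 a2 a3 a4 a5
      rw [mem_span_range_iff_exists_fun]
      refine ⟨![w 0 1 1, w 1 1 0, w 1 1 1], ?_⟩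
      funext i j k
      fin_cases i <;> fin_cases j <;> fin_cases k <;>
        simp [Fin.sum_univ_three, e, Matrix.vecHead, Matrix.vecTail] <;> linarith
    · rw [Submodule.span_le, Set.range_subset_iff]
      intro i
      fin_cases i <;>
        refine mem_S₄'.mpr ⟨?_, ?_, ?_⟩ <;> intro p q <;> fin_cases p <;> fin_cases q <;>
          simp [e, Fin.sum_univ_two, Matrix.vecHead, Matrix.vecTail]
  rw [n₄]
  refine finrank_of_span h ?_
  rw [Fintype.linearIndependent_iff]
  intro g hg
  have h0 := congrFun (congrFun (congrFun hg 0) 1) 1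
  have h1 := congrFun (congrFun (congrFun hg 1) 1) 0
  have h2 := congrFun (congrFun (congrFun hg 1) 1) 1
  simp [Fin.sum_univ_three, e, Matrix.vecHead, Matrix.vecTail] at h0 h1 h2
  intro i; fin_cases i <;> simp [h0, h1, h2]

-- ### v5 = e000 + e011
lemma n1_v5 : n₁ (e 0 0 0 + e 0 1 1) = 1 := by
  have h : S₁ (e 0 0 0 + e 0 1 1) = Submodule.span ℝ {u1} := by
    ext w
    rw [mem_S₁', Submodule.mem_span_singleton]
    constructor
    · intro hw
      have h0 := hw 0 0
      simp [e, Fin.sum_univ_two] at h0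
      exact ⟨w 1, by funext i; fin_cases i <;> simp [u1, h0]⟩
    · rintro ⟨a, rfl⟩ j₂ j₃
      fin_cases j₂ <;> fin_cases j₃ <;> simp [e, u1, Fin.sum_univ_two]
  rw [n₁, h, finrank_span_singleton u1_ne]

lemma n2_v5 : n₂ (e 0 0 0 + e 0 1 1) = 0 := by
  have h : S₂ (e 0 0 0 + e 0 1 1) = ⊥ := by
    rw [eq_bot_iff]; intro w hw
    rw [mem_S₂'] at hw
    have h0 := hw 0 0; have h1 := hw 0 1
    simp [e, Fin.sum_univ_two] at h0 h1
    simp only [Submodule.mem_bot]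
    funext i; fin_cases i <;> simp <;> linarith
  rw [n₂, h, finrank_bot]

lemma n3_v5 : n₃ (e 0 0 0 + e 0 1 1) = 0 := by
  have h : S₃ (e 0 0 0 + e 0 1 1) = ⊥ := by
    rw [eq_bot_iff]; intro w hw
    rw [mem_S₃'] at hw
    have h0 := hw 0 0; have h1 := hw 0 1
    simp [e, Fin.sum_univ_two] at h0 h1
    simp only [Submodule.mem_bot]
    funext i; fin_cases i <;> simp <;> linarith
  rw [n₃, h, finrank_bot]

lemma n4_v5 : n₄ (e 0 0 0 + e 0 1 1) = 3 := by
  have h : S₄ (e 0 0 0 + e 0 1 1)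
      = Submodule.span ℝ (Set.range ![e 1 0 1, e 1 1 0, e 1 1 1 - e 1 0 0]) := by
    apply le_antisymm
    · intro w hw
      rw [mem_S₄'] at hw
      obtain ⟨h1, h2, h3⟩ := hw
      have a1 := h1 0 0; have a2 := h1 0 1; have a3 := h2 0 1; have a4 := h2 1 1
      have a5 := h3 0 1
      simp [e, Fin.sum_univ_two] at a1 a2 a3 a4 a5
      rw [mem_span_range_iff_exists_fun]
      refine ⟨![w 1 0 1, w 1 1 0, w 1 1 1], ?_⟩
      funext i j k
      fin_cases i <;> fin_cases j <;> fin_cases k <;>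
        simp [Fin.sum_univ_three, e, Matrix.vecHead, Matrix.vecTail] <;> linarith
    · rw [Submodule.span_le, Set.range_subset_iff]
      intro i
      fin_cases i <;>
        refine mem_S₄'.mpr ⟨?_, ?_, ?_⟩ <;> intro p q <;> fin_cases p <;> fin_cases q <;>
          simp [e, Fin.sum_univ_two, Matrix.vecHead, Matrix.vecTail]
  rw [n₄]
  refine finrank_of_span h ?_
  rw [Fintype.linearIndependent_iff]
  intro g hg
  have h0 := congrFun (congrFun (congrFun hg 1) 0) 1
  have h1 := congrFun (congrFun (congrFun hg 1) 1) 0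
  have h2 := congrFun (congrFun (congrFun hg 1) 1) 1
  simp [Fin.sum_univ_three, e, Matrix.vecHead, Matrix.vecTail] at h0 h1 h2
  intro i; fin_cases i <;> simp [h0, h1, h2]

-- ### v6 = e000 + e011 + e101
lemma n1_v6 : n₁ (e 0 0 0 + e 0 1 1 + e 1 0 1) = 0 := by
  have h : S₁ (e 0 0 0 + e 0 1 1 + e 1 0 1) = ⊥ := by
    rw [eq_bot_iff]; intro w hw
    rw [mem_S₁'] at hw
    have h0 := hw 0 0; have h1 := hw 0 1
    simp [e, Fin.sum_univ_two] at h0 h1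
    simp only [Submodule.mem_bot]
    funext i; fin_cases i <;> simp <;> linarith
  rw [n₁, h, finrank_bot]

lemma n2_v6 : n₂ (e 0 0 0 + e 0 1 1 + e 1 0 1) = 0 := by
  have h : S₂ (e 0 0 0 + e 0 1 1 + e 1 0 1) = ⊥ := by
    rw [eq_bot_iff]; intro w hw
    rw [mem_S₂'] at hw
    have h0 := hw 0 0; have h1 := hw 0 1
    simp [e, Fin.sum_univ_two] at h0 h1
    simp only [Submodule.mem_bot]
    funext i; fin_cases i <;> simp <;> linarith
  rw [n₂, h, finrank_bot]

lemma n3_v6 : n₃ (e 0 0 0 + e 0 1 1 + e 1 0 1) = 0 := by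
  have h : S₃ (e 0 0 0 + e 0 1 1 + e 1 0 1) = ⊥ := by
    rw [eq_bot_iff]; intro w hw
    rw [mem_S₃'] at hw
    have h0 := hw 0 0; have h1 := hw 0 1
    simp [e, Fin.sum_univ_two] at h0 h1
    simp only [Submodule.mem_bot]
    funext i; fin_cases i <;> simp <;> linarith
  rw [n₃, h, finrank_bot]

lemma e110_ne : e 1 1 0 ≠ 0 := by
  intro h
  have := congrFun (congrFun (congrFun h 1) 1) 0
  simp [e] at this

lemma n4_v6 : n₄ (e 0 0 0 + e 0 1 1 + e 1 0 1) = 1 := by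
  have h : S₄ (e 0 0 0 + e 0 1 1 + e 1 0 1) = Submodule.span ℝ {e 1 1 0} := by
    ext w
    rw [mem_S₄', Submodule.mem_span_singleton]
    constructor
    · rintro ⟨h1, h2, h3⟩
      have a1 := h1 0 0; have a2 := h1 0 1; have a3 := h1 1 0; have a4 := h2 1 1
      have a5 := h2 0 1; have a6 := h3 1 1; have a7 := h3 0 1
      simp [e, Fin.sum_univ_two] at a1 a2 a3 a4 a5 a6 a7
      refine ⟨w 1 1 0, ?_⟩
      funext i j k
      fin_cases i <;> fin_cases j <;> fin_cases k <;> simp [e] <;> linarith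
    · rintro ⟨a, rfl⟩
      refine ⟨?_, ?_, ?_⟩ <;> intro p q <;> fin_cases p <;> fin_cases q <;>
        simp [e, Fin.sum_univ_two]
  rw [n₄, h, finrank_span_singleton e110_ne]

-- ### v7 = e000 + e111
lemma n1_v7 : n₁ (e 0 0 0 + e 1 1 1) = 0 := by
  have h : S₁ (e 0 0 0 + e 1 1 1) = ⊥ := by
    rw [eq_bot_iff]; intro w hw
    rw [mem_S₁'] at hw
    have h0 := hw 0 0; have h1 := hw 1 1
    simp [e, Fin.sum_univ_two] at h0 h1
    simp only [Submodule.mem_bot]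
    funext i; fin_cases i <;> simp <;> linarith
  rw [n₁, h, finrank_bot]

lemma n2_v7 : n₂ (e 0 0 0 + e 1 1 1) = 0 := by
  have h : S₂ (e 0 0 0 + e 1 1 1) = ⊥ := by
    rw [eq_bot_iff]; intro w hw
    rw [mem_S₂'] at hw
    have h0 := hw 0 0; have h1 := hw 1 1
    simp [e, Fin.sum_univ_two] at h0 h1
    simp only [Submodule.mem_bot]
    funext i; fin_cases i <;> simp <;> linarith
  rw [n₂, h, finrank_bot]

lemma n3_v7 : n₃ (e 0 0 0 + e 1 1 1) = 0 := by
  have h : S₃ (e 0 0 0 + e 1 1 1) = ⊥ := by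
    rw [eq_bot_iff]; intro w hw
    rw [mem_S₃'] at hw
    have h0 := hw 0 0; have h1 := hw 1 1
    simp [e, Fin.sum_univ_two] at h0 h1
    simp only [Submodule.mem_bot]
    funext i; fin_cases i <;> simp <;> linarith
  rw [n₃, h, finrank_bot]

lemma n4_v7 : n₄ (e 0 0 0 + e 1 1 1) = 0 := by
  have h : S₄ (e 0 0 0 + e 1 1 1) = ⊥ := by
    rw [eq_bot_iff]; intro w hw
    rw [mem_S₄'] at hw
    obtain ⟨h1, h2, h3⟩ := hw
    have a1 := h1 0 0; have a2 := h1 0 1; have a3 := h1 1 0; have a4 := h1 1 1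
    have a5 := h2 0 1; have a6 := h2 1 0; have a7 := h3 0 1; have a8 := h3 1 0
    simp [e, Fin.sum_univ_two] at a1 a2 a3 a4 a5 a6 a7 a8
    simp only [Submodule.mem_bot]
    funext i j k
    fin_cases i <;> fin_cases j <;> fin_cases k <;> simp <;> linarith
  rw [n₄, h, finrank_bot]

end Aux3

/-- **Values of the invariants on the seven representative three-qubit states.**
`N(0) = (2,2,2,8)`, `N([1,1,1]) = (1,1,1,4)`, `N([1,1,1]+[2,2,1]) = (0,0,1,3)`,
`N([1,1,1]+[2,1,2]) = (0,1,0,3)`, `N([1,1,1]+[1,2,2]) = (1,0,0,3)`,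
`N([1,1,1]+[1,2,2]+[2,1,2]) = (0,0,0,1)`, `N([1,1,1]+[2,2,2]) = (0,0,0,0)`. -/
theorem three_qubit_representatives :
    (n₁ (0 : Fin 2 → Fin 2 → Fin 2 → ℝ), n₂ (0 : Fin 2 → Fin 2 → Fin 2 → ℝ),
      n₃ (0 : Fin 2 → Fin 2 → Fin 2 → ℝ), n₄ (0 : Fin 2 → Fin 2 → Fin 2 → ℝ))
        = (2, 2, 2, 8) ∧
    (n₁ (e 0 0 0), n₂ (e 0 0 0), n₃ (e 0 0 0), n₄ (e 0 0 0)) = (1, 1, 1, 4) ∧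
    (n₁ (e 0 0 0 + e 1 1 0), n₂ (e 0 0 0 + e 1 1 0),
      n₃ (e 0 0 0 + e 1 1 0), n₄ (e 0 0 0 + e 1 1 0)) = (0, 0, 1, 3) ∧
    (n₁ (e 0 0 0 + e 1 0 1), n₂ (e 0 0 0 + e 1 0 1),
      n₃ (e 0 0 0 + e 1 0 1), n₄ (e 0 0 0 + e 1 0 1)) = (0, 1, 0, 3) ∧
    (n₁ (e 0 0 0 + e 0 1 1), n₂ (e 0 0 0 + e 0 1 1),
      n₃ (e 0 0 0 + e 0 1 1), n₄ (e 0 0 0 + e 0 1 1)) = (1, 0, 0, 3) ∧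
    (n₁ (e 0 0 0 + e 0 1 1 + e 1 0 1), n₂ (e 0 0 0 + e 0 1 1 + e 1 0 1),
      n₃ (e 0 0 0 + e 0 1 1 + e 1 0 1), n₄ (e 0 0 0 + e 0 1 1 + e 1 0 1))
        = (0, 0, 0, 1) ∧
    (n₁ (e 0 0 0 + e 1 1 1), n₂ (e 0 0 0 + e 1 1 1),
      n₃ (e 0 0 0 + e 1 1 1), n₄ (e 0 0 0 + e 1 1 1)) = (0, 0, 0, 0) := by
  refine ⟨?_, ?_, ?_, ?_, ?_, ?_, ?_⟩ <;>
    simp [n1_v1, n2_v1, n3_v1, n4_v1, n1_v2, n2_v2, n3_v2, n4_v2,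
      n1_v3, n2_v3, n3_v3, n4_v3, n1_v4, n2_v4, n3_v4, n4_v4,
      n1_v5, n2_v5, n3_v5, n4_v5, n1_v6, n2_v6, n3_v6, n4_v6,
      n1_v7, n2_v7, n3_v7, n4_v7]
end

section
/- Let d₁, d₂, d₃ be positive integers, let v : Fin d₁ → Fin d₂ → Fin d₃ → ℝ, and let k₁, k₂ be positive integers with k₁ ≤ d₁, k₂ ≤ d₂, and k₁·k₂ ≤ d₃. Suppose the nullities satisfy n₁(v) = d₁ − k₁, n₂(v) = d₂ − k₂, and n₃(v) = d₃ − k₁·k₂. Then ñ₄(v) = d₁·d₂·d₃ − k₁·d₁ − k₂·d₂ − k₁·k₂·d₃ + k₁² + k₂². (This is the paper's claim that M_{k₁,k₂,k₁k₂} = (k₁² + k₂²) is a singleton: the value of the intersection invariant is completely determined when k₃ = k₁k₂.) -/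
variable {d₁ d₂ d₃ : ℕ}

open Module Finset
set_option maxHeartbeats 2000000

section Aux

/-- Sum of squares zero implies zero. -/
lemma sq_sum_zero {ι : Type*} [Fintype ι] (x : ι → ℝ) (h : ∑ i, x i * x i = 0) : x = 0 := by
  funext i
  have h1 : ∀ i ∈ Finset.univ, (0:ℝ) ≤ x i * x i := fun i _ => mul_self_nonneg _
  exact mul_self_eq_zero.1 ((Finset.sum_eq_zero_iff_of_nonneg h1).1 h i (Finset.mem_univ i))

lemma sq_sum2_zero {ι κ : Type*} [Fintype ι] [Fintype κ] (m : ι → κ → ℝ)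
    (h : ∑ i, ∑ k, m i k * m i k = 0) : m = 0 := by
  funext i
  have h1 : ∀ i ∈ Finset.univ, (0:ℝ) ≤ ∑ k, m i k * m i k :=
    fun i _ => Finset.sum_nonneg fun k _ => mul_self_nonneg _
  have h2 := (Finset.sum_eq_zero_iff_of_nonneg h1).1 h i (Finset.mem_univ i)
  exact sq_sum_zero (m i) h2

/-- Orthogonal-complement dimension count for the dot product on `Fin n → ℝ`. -/
lemma finrank_add_finrank_dotOrth {n : ℕ} (V W : Submodule ℝ (Fin n → ℝ))
    (hW : ∀ w, w ∈ W ↔ ∀ u ∈ V, ∑ i, u i * w i = 0) :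
    finrank ℝ V + finrank ℝ W = n := by
  set e : (Fin n → ℝ) ≃ₗ[ℝ] EuclideanSpace ℝ (Fin n) :=
    (WithLp.linearEquiv 2 ℝ (Fin n → ℝ)).symm with he
  have hmap : ∀ (U : Submodule ℝ (Fin n → ℝ)) (x : EuclideanSpace ℝ (Fin n)),
      (x ∈ U.map (e : (Fin n → ℝ) →ₗ[ℝ] EuclideanSpace ℝ (Fin n)) ↔ e.symm x ∈ U) := by
    intro U x
    exact Submodule.mem_map_equiv (e := e) U
  have horth : W.map (e : (Fin n → ℝ) →ₗ[ℝ] EuclideanSpace ℝ (Fin n)) = (V.map (e : (Fin n → ℝ) →ₗ[ℝ] EuclideanSpace ℝ (Fin n)))ᗮ := by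
    ext x
    rw [hmap]
    rw [Submodule.mem_orthogonal]
    constructor
    · intro hx u hu
      rw [hmap] at hu
      rw [PiLp.inner_apply]
      simpa [he, mul_comm] using (hW _).1 hx _ hu
    · intro hx
      rw [hW]
      intro u hu
      have := hx (e u) ((hmap V (e u)).2 (by simpa using hu))
      rw [PiLp.inner_apply] at this
      simpa [he, mul_comm] using this
  have h1 := Submodule.finrank_add_finrank_orthogonal (V.map (e : (Fin n → ℝ) →ₗ[ℝ] EuclideanSpace ℝ (Fin n)))
  rw [← horth] at h1
  have hV : Submodule.map (↑e : (Fin n → ℝ) →ₗ[ℝ] EuclideanSpace ℝ (Fin n)) V = Submodule.map (↑e : (Fin n → ℝ) →ₗ[ℝ] EuclideanSpace ℝ (Fin n)) V := rfl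
  have hWm : Submodule.map (↑e : (Fin n → ℝ) →ₗ[ℝ] EuclideanSpace ℝ (Fin n)) W = Submodule.map (↑e : (Fin n → ℝ) →ₗ[ℝ] EuclideanSpace ℝ (Fin n)) W := rfl
  rw [hV, hWm, e.finrank_map_eq V, e.finrank_map_eq W] at h1
  rw [h1, finrank_euclideanSpace_fin]

/-- Existence of an orthogonal projection (for the dot product) onto a subspace of `Fin n → ℝ`. -/
lemma exists_dot_proj {n : ℕ} (V : Submodule ℝ (Fin n → ℝ)) :
    ∃ p : (Fin n → ℝ) →ₗ[ℝ] (Fin n → ℝ),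
      (∀ x, p x ∈ V) ∧ (∀ x ∈ V, p x = x) ∧
      (∀ x, ∀ u ∈ V, ∑ i, u i * (x i - p x i) = 0) := by
  set e : (Fin n → ℝ) ≃ₗ[ℝ] EuclideanSpace ℝ (Fin n) :=
    (WithLp.linearEquiv 2 ℝ (Fin n → ℝ)).symm with he
  set K : Submodule ℝ (EuclideanSpace ℝ (Fin n)) := V.map (e : (Fin n → ℝ) →ₗ[ℝ] EuclideanSpace ℝ (Fin n)) with hK
  have hmem : ∀ x : Fin n → ℝ, e x ∈ K ↔ x ∈ V := by
    intro x
    rw [hK, Submodule.mem_map_equiv (e := e), LinearEquiv.symm_apply_apply]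
  haveI : FiniteDimensional ℝ (EuclideanSpace ℝ (Fin n)) := by infer_instance
  let q : EuclideanSpace ℝ (Fin n) →ₗ[ℝ] EuclideanSpace ℝ (Fin n) :=
    K.subtype ∘ₗ (K.orthogonalProjection : EuclideanSpace ℝ (Fin n) →ₗ[ℝ] K)
  refine ⟨(e.symm.toLinearMap ∘ₗ q ∘ₗ e.toLinearMap : (Fin n → ℝ) →ₗ[ℝ] (Fin n → ℝ)), ?_, ?_, ?_⟩
  · intro x
    have : (K.orthogonalProjection (e x) : EuclideanSpace ℝ (Fin n)) ∈ K := Submodule.coe_mem _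
    have h2 := (hmem _).1 (by rwa [LinearEquiv.apply_symm_apply])
    simpa [q] using h2
  · intro x hx
    have hxK : (e x) ∈ K := (hmem x).2 (by simpa using hx)
    have := Submodule.orthogonalProjection_mem_subspace_eq_self (K := K) ⟨e x, hxK⟩
    simp only [LinearMap.coe_comp, Function.comp_apply]
    have h3 : (K.orthogonalProjection (e x) : EuclideanSpace ℝ (Fin n)) = e x := by
      rw [show ((⟨e x, hxK⟩ : K) : EuclideanSpace ℝ (Fin n)) = e x from rfl] at this
      exact congrArg _ this
    simpa [q] using congrArg e.symm h3
  · intro x u hu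
    have h4 := Submodule.sub_starProjection_mem_orthogonal (K := K) (e x)
    have h5 : (e u) ∈ K := (hmem u).2 hu
    have h6 := (Submodule.mem_orthogonal K _).1 h4 (e u) h5
    rw [PiLp.inner_apply] at h6
    simp [q, he, mul_sub] at h6
    rw [← h6]
    refine Finset.sum_congr rfl fun i _ => ?_
    simp [q, he, mul_comm]

/-- `∑ u * p x = ∑ u * x` for `u ∈ V`. -/
lemma dot_proj_eq {n : ℕ} {V : Submodule ℝ (Fin n → ℝ)} {p : (Fin n → ℝ) →ₗ[ℝ] (Fin n → ℝ)}
    (horth : ∀ x, ∀ u ∈ V, ∑ i, u i * (x i - p x i) = 0)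
    (x : Fin n → ℝ) (u : Fin n → ℝ) (hu : u ∈ V) :
    ∑ i, u i * p x i = ∑ i, u i * x i := by
  have h := horth x u hu
  simp only [mul_sub, Finset.sum_sub_distrib] at h
  linarith

lemma proj_eq_zero_of_dot {n : ℕ} {V : Submodule ℝ (Fin n → ℝ)} {p : (Fin n → ℝ) →ₗ[ℝ] (Fin n → ℝ)}
    (hmem : ∀ x, p x ∈ V)
    (horth : ∀ x, ∀ u ∈ V, ∑ i, u i * (x i - p x i) = 0)
    (x : Fin n → ℝ) (h : ∀ u ∈ V, ∑ i, u i * x i = 0) : p x = 0 := by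
  have h1 : ∑ i, p x i * p x i = 0 := by
    rw [dot_proj_eq horth x _ (hmem x)]
    exact h _ (hmem x)
  exact sq_sum_zero _ h1

lemma dot_eq_zero_of_proj_zero {n : ℕ} {V : Submodule ℝ (Fin n → ℝ)}
    {p : (Fin n → ℝ) →ₗ[ℝ] (Fin n → ℝ)}
    (horth : ∀ x, ∀ u ∈ V, ∑ i, u i * (x i - p x i) = 0)
    {x : Fin n → ℝ} (hx : p x = 0) (u : Fin n → ℝ) (hu : u ∈ V) :
    ∑ i, u i * x i = 0 := by
  rw [← dot_proj_eq horth x u hu, hx]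
  simp

/-- Linear maps on function spaces in "matrix" form. -/
lemma linmap_pi_apply {α : Type*} [Fintype α] [DecidableEq α]
    (p : (α → ℝ) →ₗ[ℝ] (α → ℝ)) (x : α → ℝ) (a₀ : α) :
    p x a₀ = ∑ a, x a * p (Pi.single a (1:ℝ) : α → ℝ) a₀ := by
  have h1 : x = ∑ a, x a • (Pi.single a (1:ℝ) : α → ℝ) := by
    funext y; simp [Pi.single_apply]
  conv_lhs => rw [h1]
  rw [map_sum]
  simp [Finset.sum_apply]

lemma linmap_pi_comm {α β : Type*} [Fintype α] [Fintype β] [DecidableEq α] [DecidableEq β]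
    (p : (α → ℝ) →ₗ[ℝ] (α → ℝ)) (q : (β → ℝ) →ₗ[ℝ] (β → ℝ)) (M : α → β → ℝ) (a₀ : α) (b₀ : β) :
    p (fun a => q (fun b => M a b) b₀) a₀ = q (fun b => p (fun a => M a b) a₀) b₀ := by
  rw [linmap_pi_apply p _ a₀, linmap_pi_apply q _ b₀]
  have h1 : ∀ a, q (fun b => M a b) b₀ = ∑ b, M a b * q (Pi.single b (1:ℝ) : β → ℝ) b₀ :=
    fun a => linmap_pi_apply q _ b₀
  have h2 : ∀ b, p (fun a => M a b) a₀ = ∑ a, M a b * p (Pi.single a (1:ℝ) : α → ℝ) a₀ :=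
    fun b => linmap_pi_apply p _ a₀
  simp only [h1, h2, Finset.sum_mul]
  rw [Finset.sum_comm]
  congr 1; funext b
  congr 1; funext a
  ring

variable {ι : Type*} [Fintype ι] {N : Type*} [AddCommGroup N] [Module ℝ N]

/-- The space of `N`-valued families on `ι` whose "columns" lie in `U` and values lie in `Z`. -/
def funcBlock (U : Submodule ℝ (ι → ℝ)) (Z : Submodule ℝ N) : Submodule ℝ (ι → N) where
  carrier := {m | (∀ φ : N →ₗ[ℝ] ℝ, (fun i => φ (m i)) ∈ U) ∧ ∀ i, m i ∈ Z}
  zero_mem' := ⟨fun φ => by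
    have h : (fun i => φ ((0 : ι → N) i)) = (0 : ι → ℝ) := by funext i; simp
    rw [h]; exact U.zero_mem, fun i => Z.zero_mem⟩
  add_mem' := by
    rintro a b ⟨ha1, ha2⟩ ⟨hb1, hb2⟩
    refine ⟨fun φ => ?_, fun i => Z.add_mem (ha2 i) (hb2 i)⟩
    have : (fun i => φ ((a + b) i)) = (fun i => φ (a i)) + (fun i => φ (b i)) := by
      funext i; simp
    rw [this]; exact U.add_mem (ha1 φ) (hb1 φ)
  smul_mem' := by
    rintro t a ⟨ha1, ha2⟩
    refine ⟨fun φ => ?_, fun i => Z.smul_mem t (ha2 i)⟩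
    have : (fun i => φ ((t • a) i)) = t • (fun i => φ (a i)) := by
      funext i; simp
    rw [this]; exact U.smul_mem t (ha1 φ)

theorem mem_funcBlock {U : Submodule ℝ (ι → ℝ)} {Z : Submodule ℝ N} {m : ι → N} :
    m ∈ funcBlock U Z ↔ (∀ φ : N →ₗ[ℝ] ℝ, (fun i => φ (m i)) ∈ U) ∧ ∀ i, m i ∈ Z :=
  Iff.rfl

theorem finrank_funcBlock [FiniteDimensional ℝ N]
    (U : Submodule ℝ (ι → ℝ)) (Z : Submodule ℝ N) :
    finrank ℝ (funcBlock U Z) = finrank ℝ U * finrank ℝ Z := by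
  classical
  set r := finrank ℝ U with hr
  set s := finrank ℝ Z with hs
  let b : Basis (Fin r) ℝ U := finBasis ℝ U
  let c : Basis (Fin s) ℝ Z := finBasis ℝ Z
  let ψ₀ : (Fin r → Fin s → ℝ) → (ι → N) := fun a i =>
    ∑ t, ∑ l, (a t l * (b t : ι → ℝ) i) • (c l : N)
  have hψ₀' : ∀ a i, ψ₀ a i = ∑ l, (∑ t, a t l * (b t : ι → ℝ) i) • (c l : N) := by
    intro a i
    simp only [ψ₀]
    rw [Finset.sum_comm]
    congr 1; funext l
    rw [Finset.sum_smul]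
  have hmemψ : ∀ a, ψ₀ a ∈ funcBlock U Z := by
    intro a
    constructor
    · intro φ
      have : (fun i => φ (ψ₀ a i)) =
          ∑ t, (∑ l, a t l * φ (c l : N)) • ((b t : ι → ℝ)) := by
        funext i
        simp only [ψ₀, map_sum, map_smul, smul_eq_mul, Finset.sum_apply, Pi.smul_apply]
        congr 1; funext t
        rw [Finset.sum_mul]
        congr 1; funext l
        ring
      rw [this]
      exact Submodule.sum_mem _ fun t _ => U.smul_mem _ (SetLike.coe_mem (b t))
    · intro i
      exact Submodule.sum_mem _ fun t _ =>
        Submodule.sum_mem _ fun l _ => Z.smul_mem _ (SetLike.coe_mem (c l))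
  let ψ : (Fin r → Fin s → ℝ) →ₗ[ℝ] (funcBlock U Z) :=
    { toFun := fun a => ⟨ψ₀ a, hmemψ a⟩
      map_add' := by
        intro a a'
        apply Subtype.ext
        funext i
        simp only [ψ₀, Pi.add_apply, Submodule.coe_add]
        rw [← Finset.sum_add_distrib]
        congr 1; funext t
        rw [← Finset.sum_add_distrib]
        congr 1; funext l
        rw [← add_smul]
        congr 1
        ring
      map_smul' := by
        intro t a
        apply Subtype.ext
        funext i
        simp only [ψ₀, Pi.smul_apply, Submodule.coe_smul, RingHom.id_apply, smul_eq_mul]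
        rw [Finset.smul_sum]
        congr 1; funext t'
        rw [Finset.smul_sum]
        congr 1; funext l
        rw [smul_smul]
        congr 1
        ring }
  have hbind : LinearIndependent ℝ (fun t => (b t : ι → ℝ)) :=
    b.linearIndependent.map' U.subtype (Submodule.ker_subtype U)
  have hcind : LinearIndependent ℝ (fun l => (c l : N)) :=
    c.linearIndependent.map' Z.subtype (Submodule.ker_subtype Z)
  have hinj : Function.Injective ψ := by
    rw [injective_iff_map_eq_zero]
    intro a ha
    have ha0 : ψ₀ a = 0 := congrArg Subtype.val ha
    have h1 : ∀ i l, ∑ t, a t l * (b t : ι → ℝ) i = 0 := by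
      intro i l
      have := congrFun ha0 i
      rw [hψ₀'] at this
      have h2 := (Fintype.linearIndependent_iff.1 hcind)
        (fun l => ∑ t, a t l * (b t : ι → ℝ) i) this
      exact h2 l
    funext t l
    have h3 : ∑ t, a t l • (b t : ι → ℝ) = 0 := by
      funext i
      simpa [Finset.sum_apply] using h1 i l
    exact (Fintype.linearIndependent_iff.1 hbind) (fun t => a t l) h3 t
  have hsurj : Function.Surjective ψ := by
    rintro ⟨m, hm1, hm2⟩
    have hext : ∀ l, ∃ φ : N →ₗ[ℝ] ℝ, φ ∘ₗ Z.subtype = c.coord l := fun l =>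
      LinearMap.exists_extend (c.coord l)
    choose φ hφ using hext
    set f : Fin s → (ι → ℝ) := fun l i => φ l (m i) with hf
    have hfeq : ∀ l i, f l i = c.repr ⟨m i, hm2 i⟩ l := by
      intro l i
      have := congrFun (congrArg DFunLike.coe (hφ l)) ⟨m i, hm2 i⟩
      simpa [f] using this
    have hfU : ∀ l, f l ∈ U := fun l => hm1 (φ l)
    set a : Fin r → Fin s → ℝ := fun t l => b.repr ⟨f l, hfU l⟩ t with ha
    refine ⟨a, ?_⟩
    apply Subtype.ext
    funext i
    show ψ₀ a i = m i
    rw [hψ₀']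
    have hfl : ∀ l, ∑ t, a t l * (b t : ι → ℝ) i = f l i := by
      intro l
      have := b.sum_repr ⟨f l, hfU l⟩
      have h7 := congrFun (congrArg Subtype.val this) i
      calc ∑ t, a t l * (b t : ι → ℝ) i
          = (↑(∑ t, b.repr ⟨f l, hfU l⟩ t • b t) : ι → ℝ) i := by
            simp only [Submodule.coe_sum, Submodule.coe_smul, Finset.sum_apply, Pi.smul_apply,
              smul_eq_mul, a, mul_comm]
        _ = f l i := h7
    calc ∑ l, (∑ t, a t l * (b t : ι → ℝ) i) • (c l : N)
        = ∑ l, (c.repr ⟨m i, hm2 i⟩ l) • (c l : N) := by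
          congr 1; funext l; rw [hfl, hfeq]
      _ = ((∑ l, (c.repr ⟨m i, hm2 i⟩) l • c l : Z) : N) := by
          rw [Submodule.coe_sum]; simp only [Submodule.coe_smul]
      _ = m i := by rw [c.sum_repr ⟨m i, hm2 i⟩]
  have := LinearEquiv.finrank_eq (LinearEquiv.ofBijective ψ ⟨hinj, hsurj⟩)
  rw [← this]
  rw [finrank_pi_fintype ℝ]
  simp [finrank_pi]

lemma bridge₁ {κ : Type*} [Fintype κ] [DecidableEq κ]
    (U : Submodule ℝ (ι → ℝ)) (m : ι → κ → ℝ) (h : ∀ k, (fun i => m i k) ∈ U)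
    (φ : (κ → ℝ) →ₗ[ℝ] ℝ) : (fun i => φ (m i)) ∈ U := by
  have hd : (fun i => φ (m i)) = ∑ k, φ ((Pi.single k (1:ℝ) : κ → ℝ)) • (fun i => m i k) := by
    funext i
    have h1 : m i = ∑ k, (m i k) • (Pi.single k (1:ℝ) : κ → ℝ) := by
      funext x
      simp [Pi.single_apply]
    rw [h1]
    simp only [map_sum, map_smul, smul_eq_mul, Finset.sum_apply, Pi.smul_apply]
    congr 1; funext k; ring
  rw [hd]
  exact Submodule.sum_mem _ fun k _ => U.smul_mem _ (h k)

lemma bridge₂ {κ ρ : Type*} [Fintype κ] [Fintype ρ] [DecidableEq κ] [DecidableEq ρ]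
    (U : Submodule ℝ (ι → ℝ)) (m : ι → κ → ρ → ℝ) (h : ∀ k r, (fun i => m i k r) ∈ U)
    (φ : (κ → ρ → ℝ) →ₗ[ℝ] ℝ) : (fun i => φ (m i)) ∈ U := by
  have hd : (fun i => φ (m i)) =
      ∑ k, (fun i => (φ ∘ₗ LinearMap.single ℝ (fun _ : κ => ρ → ℝ) k) (m i k)) := by
    funext i
    have h1 : m i = ∑ k, Pi.single k (m i k) := (Finset.univ_sum_single (m i)).symm
    rw [h1]
    simp only [map_sum, Finset.sum_apply, LinearMap.coe_comp, Function.comp_apply,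
      LinearMap.coe_single]
  rw [hd]
  exact Submodule.sum_mem _ fun k _ =>
    bridge₁ U (fun i => m i k) (fun r => h k r) (φ ∘ₗ LinearMap.single ℝ (fun _ : κ => ρ → ℝ) k)

end Aux


section Spans

variable (v : Fin d₁ → Fin d₂ → Fin d₃ → ℝ)

/-- Span of the first-index fibers of `v`. -/
def Vone : Submodule ℝ (Fin d₁ → ℝ) :=
  Submodule.span ℝ (Set.range fun q : Fin d₂ × Fin d₃ => fun j₁ => v j₁ q.1 q.2)

/-- Span of the second-index fibers of `v`. -/
def Vtwo : Submodule ℝ (Fin d₂ → ℝ) :=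
  Submodule.span ℝ (Set.range fun q : Fin d₁ × Fin d₃ => fun j₂ => v q.1 j₂ q.2)

/-- Span of the third-index slices of `v`. -/
def Wsp : Submodule ℝ (Fin d₁ → Fin d₂ → ℝ) :=
  Submodule.span ℝ (Set.range fun j₃ => fun j₁ j₂ => v j₁ j₂ j₃)

def ellThree : (Fin d₃ → ℝ) →ₗ[ℝ] (Fin d₁ → Fin d₂ → ℝ) where
  toFun := fun y j₁ j₂ => ∑ j₃, v j₁ j₂ j₃ * y j₃
  map_add' := by
    intro a b; funext j₁ j₂
    simp [mul_add, Finset.sum_add_distrib]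
  map_smul' := by
    intro t a; funext j₁ j₂
    simp [Finset.mul_sum, mul_left_comm]

def ellOne : (Fin d₂ → Fin d₃ → ℝ) →ₗ[ℝ] (Fin d₁ → ℝ) where
  toFun := fun x j₁ => ∑ j₂, ∑ j₃, v j₁ j₂ j₃ * x j₂ j₃
  map_add' := by
    intro a b; funext j₁
    simp [mul_add, Finset.sum_add_distrib]
  map_smul' := by
    intro t a; funext j₁
    simp [Finset.mul_sum, mul_left_comm]

def ellTwo : (Fin d₁ → Fin d₃ → ℝ) →ₗ[ℝ] (Fin d₂ → ℝ) where
  toFun := fun x j₂ => ∑ j₁, ∑ j₃, v j₁ j₂ j₃ * x j₁ j₃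
  map_add' := by
    intro a b; funext j₂
    simp [mul_add, Finset.sum_add_distrib]
  map_smul' := by
    intro t a; funext j₂
    simp [Finset.mul_sum, mul_left_comm]

lemma finrank_Vone {k₁ : ℕ} (hk : k₁ ≤ d₁) (h₁ : finrank ℝ (S₁ v) = d₁ - k₁) :
    finrank ℝ (Vone v) = k₁ := by
  have hchar : ∀ w, w ∈ S₁ v ↔ ∀ u ∈ Vone v, ∑ i, u i * w i = 0 := by
    intro w
    constructor
    · intro hw u hu
      refine Submodule.span_induction ?_ ?_ ?_ ?_ hu
      · rintro x ⟨⟨j₂, j₃⟩, rfl⟩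
        simpa using hw j₂ j₃
      · simp
      · intro x y _ _ hx' hy'
        simp [add_mul, Finset.sum_add_distrib, hx', hy']
      · intro a x _ hx'
        have : ∑ i, (a • x) i * w i = a * ∑ i, x i * w i := by
          simp [Finset.mul_sum, mul_assoc]
        rw [this, hx', mul_zero]
    · intro h j₂ j₃
      exact h _ (Submodule.subset_span ⟨(j₂, j₃), rfl⟩)
  have hsum := finrank_add_finrank_dotOrth (Vone v) (S₁ v) hchar
  omega

lemma finrank_Wsp {k : ℕ} (hk : k ≤ d₃) (h₃ : finrank ℝ (S₃ v) = d₃ - k) :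
    finrank ℝ (Wsp v) = k := by
  have hker : LinearMap.ker (ellThree v) = S₃ v := by
    ext y
    constructor
    · intro hy j₁ j₂
      have := congrFun (congrFun (LinearMap.mem_ker.1 hy) j₁) j₂
      simpa [ellThree] using this
    · intro hy
      rw [LinearMap.mem_ker]
      funext j₁ j₂
      exact hy j₁ j₂
  have hrange : LinearMap.range (ellThree v) = Wsp v := by
    apply le_antisymm
    · rintro x ⟨y, rfl⟩
      have hexp : ellThree v y = ∑ j₃, y j₃ • (fun j₁ j₂ => v j₁ j₂ j₃) := by
        funext j₁ j₂
        simp [ellThree, Finset.sum_apply, mul_comm]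
      rw [hexp]
      exact Submodule.sum_mem _ fun j₃ _ =>
        Submodule.smul_mem _ _ (Submodule.subset_span ⟨j₃, rfl⟩)
    · rw [Wsp, Submodule.span_le]
      rintro x ⟨j₃, rfl⟩
      refine ⟨Pi.single j₃ 1, ?_⟩
      funext j₁ j₂
      simp [ellThree, Pi.single_apply]
  have hrn := LinearMap.finrank_range_add_finrank_ker (ellThree v)
  rw [hrange, hker, h₃] at hrn
  have hd : finrank ℝ (Fin d₃ → ℝ) = d₃ := by simp
  rw [hd] at hrn
  omega

lemma Wsp_le_funcBlock : Wsp v ≤ funcBlock (Vone v) (Vtwo v) := by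
  rw [Wsp, Submodule.span_le]
  rintro x ⟨j₃, rfl⟩
  constructor
  · intro φ
    apply bridge₁
    intro j₂
    exact Submodule.subset_span ⟨(j₂, j₃), rfl⟩
  · intro j₁
    exact Submodule.subset_span ⟨(j₁, j₃), rfl⟩

end Spans

section Spans2
variable (v : Fin d₁ → Fin d₂ → Fin d₃ → ℝ)

lemma finrank_Vtwo {k₂ : ℕ} (hk : k₂ ≤ d₂) (h₂ : finrank ℝ (S₂ v) = d₂ - k₂) :
    finrank ℝ (Vtwo v) = k₂ := by
  have hchar : ∀ w, w ∈ S₂ v ↔ ∀ u ∈ Vtwo v, ∑ i, u i * w i = 0 := by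
    intro w
    constructor
    · intro hw u hu
      refine Submodule.span_induction ?_ ?_ ?_ ?_ hu
      · rintro x ⟨⟨j₁, j₃⟩, rfl⟩
        simpa using hw j₁ j₃
      · simp
      · intro x y _ _ hx' hy'
        simp [add_mul, Finset.sum_add_distrib, hx', hy']
      · intro a x _ hx'
        have : ∑ i, (a • x) i * w i = a * ∑ i, x i * w i := by
          simp [Finset.mul_sum, mul_assoc]
        rw [this, hx', mul_zero]
    · intro h j₁ j₃
      exact h _ (Submodule.subset_span ⟨(j₁, j₃), rfl⟩)
  have hsum := finrank_add_finrank_dotOrth (Vtwo v) (S₂ v) hchar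
  omega

end Spans2

section Zdims
variable (v : Fin d₁ → Fin d₂ → Fin d₃ → ℝ)

lemma Z21_dim (p₂ : (Fin d₂ → ℝ) →ₗ[ℝ] (Fin d₂ → ℝ))
    (hp₂mem : ∀ x, p₂ x ∈ Vtwo v)
    (hp₂orth : ∀ x, ∀ u ∈ Vtwo v, ∑ i, u i * (x i - p₂ x i) = 0) :
    finrank ℝ ↥(funcBlock (Vtwo v) (⊤ : Submodule ℝ (Fin d₃ → ℝ)) ⊓ LinearMap.ker (ellOne v))
      + finrank ℝ (Vone v)
      = finrank ℝ (funcBlock (Vtwo v) (⊤ : Submodule ℝ (Fin d₃ → ℝ))) := by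
  classical
  set Y₂ := funcBlock (Vtwo v) (⊤ : Submodule ℝ (Fin d₃ → ℝ)) with hY₂def
  set LY := (ellOne v).comp Y₂.subtype with hLYdef
  have hrangeLY : LinearMap.range LY = Vone v := by
    apply le_antisymm
    · rintro x ⟨⟨y, hy⟩, rfl⟩
      show ellOne v y ∈ Vone v
      have hexp : ellOne v y = ∑ j₂, ∑ j₃, y j₂ j₃ • (fun j₁ => v j₁ j₂ j₃) := by
        funext j₁
        simp [ellOne, Finset.sum_apply, mul_comm]
      rw [hexp]
      exact Submodule.sum_mem _ fun j₂ _ => Submodule.sum_mem _ fun j₃ _ =>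
        Submodule.smul_mem _ _ (Submodule.subset_span ⟨(j₂, j₃), rfl⟩)
    · rw [Vone, Submodule.span_le]
      rintro x ⟨⟨j₂₀, j₃₀⟩, rfl⟩
      set e : Fin d₂ → Fin d₃ → ℝ :=
        fun a b => (if a = j₂₀ then (1:ℝ) else 0) * (if b = j₃₀ then 1 else 0) with he
      set wfn : Fin d₂ → Fin d₃ → ℝ := fun a b => p₂ (fun a' => e a' b) a with hwfn
      have hwY : wfn ∈ Y₂ := by
        constructor
        · intro φ
          apply bridge₁
          intro b
          exact hp₂mem _
        · intro a
          trivial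
      refine ⟨⟨wfn, hwY⟩, ?_⟩
      show ellOne v wfn = fun j₁ => v j₁ j₂₀ j₃₀
      funext j₁
      calc ellOne v wfn j₁ = ∑ b, ∑ a, v j₁ a b * p₂ (fun a' => e a' b) a := by
            show ∑ a, ∑ b, v j₁ a b * wfn a b = _
            rw [Finset.sum_comm]
        _ = ∑ b, ∑ a, v j₁ a b * e a b := by
            refine Finset.sum_congr rfl fun b _ => ?_
            exact dot_proj_eq hp₂orth _ _ (Submodule.subset_span ⟨(j₁, b), rfl⟩)
        _ = v j₁ j₂₀ j₃₀ := by
            simp [e, mul_ite, ite_mul, Finset.sum_ite_eq']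
  have hrn := LinearMap.finrank_range_add_finrank_ker LY
  rw [hrangeLY] at hrn
  have hkerLYeq : LinearMap.ker LY = Submodule.comap Y₂.subtype (Y₂ ⊓ LinearMap.ker (ellOne v)) := by
    ext ⟨y, hy⟩
    simp only [LinearMap.mem_ker, Submodule.mem_comap, Submodule.mem_inf, Submodule.coe_subtype]
    constructor
    · intro h
      exact ⟨hy, h⟩
    · intro h
      exact h.2
  have hequiv := Submodule.comapSubtypeEquivOfLe
    (inf_le_left : Y₂ ⊓ LinearMap.ker (ellOne v) ≤ Y₂)
  have hfr : finrank ℝ (LinearMap.ker LY) = finrank ℝ (Y₂ ⊓ LinearMap.ker (ellOne v) : Submodule ℝ _) := by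
    rw [hkerLYeq]
    exact LinearEquiv.finrank_eq hequiv
  rw [hfr] at hrn
  omega

lemma Z12_dim (p₁ : (Fin d₁ → ℝ) →ₗ[ℝ] (Fin d₁ → ℝ))
    (hp₁mem : ∀ x, p₁ x ∈ Vone v)
    (hp₁orth : ∀ x, ∀ u ∈ Vone v, ∑ i, u i * (x i - p₁ x i) = 0) :
    finrank ℝ ↥(funcBlock (Vone v) (⊤ : Submodule ℝ (Fin d₃ → ℝ)) ⊓ LinearMap.ker (ellTwo v))
      + finrank ℝ (Vtwo v)
      = finrank ℝ (funcBlock (Vone v) (⊤ : Submodule ℝ (Fin d₃ → ℝ))) := by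
  classical
  set Y₁ := funcBlock (Vone v) (⊤ : Submodule ℝ (Fin d₃ → ℝ)) with hY₁def
  set LY := (ellTwo v).comp Y₁.subtype with hLYdef
  have hrangeLY : LinearMap.range LY = Vtwo v := by
    apply le_antisymm
    · rintro x ⟨⟨y, hy⟩, rfl⟩
      show ellTwo v y ∈ Vtwo v
      have hexp : ellTwo v y = ∑ j₁, ∑ j₃, y j₁ j₃ • (fun j₂ => v j₁ j₂ j₃) := by
        funext j₂
        simp [ellTwo, Finset.sum_apply, mul_comm]
      rw [hexp]
      exact Submodule.sum_mem _ fun j₁ _ => Submodule.sum_mem _ fun j₃ _ =>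
        Submodule.smul_mem _ _ (Submodule.subset_span ⟨(j₁, j₃), rfl⟩)
    · rw [Vtwo, Submodule.span_le]
      rintro x ⟨⟨j₁₀, j₃₀⟩, rfl⟩
      set e : Fin d₁ → Fin d₃ → ℝ :=
        fun a b => (if a = j₁₀ then (1:ℝ) else 0) * (if b = j₃₀ then 1 else 0) with he
      set wfn : Fin d₁ → Fin d₃ → ℝ := fun a b => p₁ (fun a' => e a' b) a with hwfn
      have hwY : wfn ∈ Y₁ := by
        constructor
        · intro φ
          apply bridge₁
          intro b
          exact hp₁mem _
        · intro a
          trivial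
      refine ⟨⟨wfn, hwY⟩, ?_⟩
      show ellTwo v wfn = fun j₂ => v j₁₀ j₂ j₃₀
      funext j₂
      calc ellTwo v wfn j₂ = ∑ b, ∑ a, v a j₂ b * p₁ (fun a' => e a' b) a := by
            show ∑ a, ∑ b, v a j₂ b * wfn a b = _
            rw [Finset.sum_comm]
        _ = ∑ b, ∑ a, v a j₂ b * e a b := by
            refine Finset.sum_congr rfl fun b _ => ?_
            exact dot_proj_eq hp₁orth _ _ (Submodule.subset_span ⟨(j₂, b), rfl⟩)
        _ = v j₁₀ j₂ j₃₀ := by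
            simp [e, mul_ite, ite_mul, Finset.sum_ite_eq']
  have hrn := LinearMap.finrank_range_add_finrank_ker LY
  rw [hrangeLY] at hrn
  have hkerLYeq : LinearMap.ker LY = Submodule.comap Y₁.subtype (Y₁ ⊓ LinearMap.ker (ellTwo v)) := by
    ext ⟨y, hy⟩
    simp only [LinearMap.mem_ker, Submodule.mem_comap, Submodule.mem_inf, Submodule.coe_subtype]
    constructor
    · intro h
      exact ⟨hy, h⟩
    · intro h
      exact h.2
  have hequiv := Submodule.comapSubtypeEquivOfLe
    (inf_le_left : Y₁ ⊓ LinearMap.ker (ellTwo v) ≤ Y₁)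
  have hfr : finrank ℝ (LinearMap.ker LY) = finrank ℝ (Y₁ ⊓ LinearMap.ker (ellTwo v) : Submodule ℝ _) := by
    rw [hkerLYeq]
    exact LinearEquiv.finrank_eq hequiv
  rw [hfr] at hrn
  omega

end Zdims

section MainProof

theorem main_count
    (d₁ d₂ d₃ k₁ k₂ : ℕ)
    (hk₁d : k₁ ≤ d₁) (hk₂d : k₂ ≤ d₂) (hk₃d : k₁ * k₂ ≤ d₃)
    (v : Fin d₁ → Fin d₂ → Fin d₃ → ℝ)
    (h₁ : finrank ℝ (S₁ v) = d₁ - k₁) (h₂ : finrank ℝ (S₂ v) = d₂ - k₂)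
    (h₃ : finrank ℝ (S₃ v) = d₃ - k₁ * k₂) :
    (finrank ℝ (S₄ v) : ℤ) = (d₁ : ℤ) * d₂ * d₃ - k₁ * d₁ - k₂ * d₂ - k₁ * k₂ * d₃
      + (k₁ : ℤ) ^ 2 + (k₂ : ℤ) ^ 2 := by
  classical
  obtain ⟨p₁, hp₁mem, hp₁fix, hp₁orth⟩ := exists_dot_proj (Vone v)
  obtain ⟨p₂, hp₂mem, hp₂fix, hp₂orth⟩ := exists_dot_proj (Vtwo v)
  have hV₁ : finrank ℝ (Vone v) = k₁ := finrank_Vone v hk₁d h₁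
  have hV₂ : finrank ℝ (Vtwo v) = k₂ := finrank_Vtwo v hk₂d h₂
  have hW : finrank ℝ (Wsp v) = k₁ * k₂ := finrank_Wsp v hk₃d h₃
  have hP : finrank ℝ (funcBlock (Vone v) (Vtwo v)) = k₁ * k₂ := by
    rw [finrank_funcBlock, hV₁, hV₂]
  have hWP : Wsp v = funcBlock (Vone v) (Vtwo v) :=
    Submodule.eq_of_le_of_finrank_le (Wsp_le_funcBlock v) (by rw [hP, hW])
  -- kernels of the projections
  set K₁ := LinearMap.ker p₁ with hK₁def
  set K₂ := LinearMap.ker p₂ with hK₂def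
  have hrangep₁ : LinearMap.range p₁ = Vone v := by
    apply le_antisymm
    · rintro x ⟨y, rfl⟩; exact hp₁mem y
    · intro x hx; exact ⟨x, hp₁fix x hx⟩
  have hrangep₂ : LinearMap.range p₂ = Vtwo v := by
    apply le_antisymm
    · rintro x ⟨y, rfl⟩; exact hp₂mem y
    · intro x hx; exact ⟨x, hp₂fix x hx⟩
  have hK₁ : finrank ℝ K₁ + k₁ = d₁ := by
    have h := LinearMap.finrank_range_add_finrank_ker p₁
    rw [hrangep₁, hV₁] at h
    have hd : finrank ℝ (Fin d₁ → ℝ) = d₁ := by simp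
    rw [hd] at h
    rw [hK₁def]
    omega
  have hK₂ : finrank ℝ K₂ + k₂ = d₂ := by
    have h := LinearMap.finrank_range_add_finrank_ker p₂
    rw [hrangep₂, hV₂] at h
    have hd : finrank ℝ (Fin d₂ → ℝ) = d₂ := by simp
    rw [hd] at h
    rw [hK₂def]
    omega
  -- the Y and Z spaces
  set Y₂ := funcBlock (Vtwo v) (⊤ : Submodule ℝ (Fin d₃ → ℝ)) with hY₂def
  set Y₁ := funcBlock (Vone v) (⊤ : Submodule ℝ (Fin d₃ → ℝ)) with hY₁def
  have hY₂fr : finrank ℝ Y₂ = k₂ * d₃ := by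
    rw [hY₂def, finrank_funcBlock, hV₂, finrank_top]
    simp
  have hY₁fr : finrank ℝ Y₁ = k₁ * d₃ := by
    rw [hY₁def, finrank_funcBlock, hV₁, finrank_top]
    simp
  set Z₂₁ := Y₂ ⊓ LinearMap.ker (ellOne v) with hZ₂₁def
  set Z₁₂ := Y₁ ⊓ LinearMap.ker (ellTwo v) with hZ₁₂def
  have hZ₂₁fr : finrank ℝ Z₂₁ + k₁ = k₂ * d₃ := by
    have := Z21_dim v p₂ hp₂mem hp₂orth
    rw [hV₁, hY₂fr] at this
    exact this
  have hZ₁₂fr : finrank ℝ Z₁₂ + k₂ = k₁ * d₃ := by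
    have := Z12_dim v p₁ hp₁mem hp₁orth
    rw [hV₂, hY₁fr] at this
    exact this
  -- the X spaces
  set X₂₁ := funcBlock K₁ Z₂₁ with hX₂₁def
  set X₁₂ := funcBlock K₂ Z₁₂ with hX₁₂def
  set X₂₂ := funcBlock K₁ (funcBlock K₂ (⊤ : Submodule ℝ (Fin d₃ → ℝ))) with hX₂₂def
  have hX₂₁fr : finrank ℝ X₂₁ = finrank ℝ K₁ * finrank ℝ Z₂₁ := finrank_funcBlock _ _
  have hX₁₂fr : finrank ℝ X₁₂ = finrank ℝ K₂ * finrank ℝ Z₁₂ := finrank_funcBlock _ _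
  have hX₂₂fr : finrank ℝ X₂₂ = finrank ℝ K₁ * (finrank ℝ K₂ * d₃) := by
    rw [hX₂₂def, finrank_funcBlock, finrank_funcBlock, finrank_top]
    simp
  -- the projection endomorphisms on the tensor space
  set Q₁ : (Fin d₁ → Fin d₂ → Fin d₃ → ℝ) →ₗ[ℝ] (Fin d₁ → Fin d₂ → Fin d₃ → ℝ) :=
    { toFun := fun w j₁ j₂ j₃ => p₁ (fun i => w i j₂ j₃) j₁
      map_add' := by
        intro a b
        funext j₁ j₂ j₃
        show p₁ (fun i => (a + b) i j₂ j₃) j₁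
          = p₁ (fun i => a i j₂ j₃) j₁ + p₁ (fun i => b i j₂ j₃) j₁
        rw [show (fun i => (a + b) i j₂ j₃)
          = (fun i => a i j₂ j₃) + (fun i => b i j₂ j₃) from rfl, map_add]
        rfl
      map_smul' := by
        intro t a
        funext j₁ j₂ j₃
        show p₁ (fun i => (t • a) i j₂ j₃) j₁ = t * p₁ (fun i => a i j₂ j₃) j₁
        rw [show (fun i => (t • a) i j₂ j₃) = t • (fun i => a i j₂ j₃) from rfl, map_smul]
        rfl } with hQ₁def
  set Q₂ : (Fin d₁ → Fin d₂ → Fin d₃ → ℝ) →ₗ[ℝ] (Fin d₁ → Fin d₂ → Fin d₃ → ℝ) :=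
    { toFun := fun w j₁ j₂ j₃ => p₂ (fun i => w j₁ i j₃) j₂
      map_add' := by
        intro a b
        funext j₁ j₂ j₃
        show p₂ (fun i => (a + b) j₁ i j₃) j₂
          = p₂ (fun i => a j₁ i j₃) j₂ + p₂ (fun i => b j₁ i j₃) j₂
        rw [show (fun i => (a + b) j₁ i j₃)
          = (fun i => a j₁ i j₃) + (fun i => b j₁ i j₃) from rfl, map_add]
        rfl
      map_smul' := by
        intro t a
        funext j₁ j₂ j₃
        show p₂ (fun i => (t • a) j₁ i j₃) j₂ = t * p₂ (fun i => a j₁ i j₃) j₂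
        rw [show (fun i => (t • a) j₁ i j₃) = t • (fun i => a j₁ i j₃) from rfl, map_smul]
        rfl } with hQ₂def
  have hcomm : ∀ w j₁ j₂ j₃, Q₁ (Q₂ w) j₁ j₂ j₃ = Q₂ (Q₁ w) j₁ j₂ j₃ := by
    intro w j₁ j₂ j₃
    exact linmap_pi_comm p₁ p₂ (fun a b => w a b j₃) j₁ j₂
  -- the key vanishing property
  have hkey : ∀ w ∈ S₄ v, Q₁ (Q₂ w) = 0 := by
    intro w hw
    obtain ⟨hw1, hw2, hw3⟩ := hw
    have hslice : ∀ k₃, (fun j₁ j₂ => Q₁ (Q₂ w) j₁ j₂ k₃) = 0 := by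
      intro k₃
      set m : Fin d₁ → Fin d₂ → ℝ := fun j₁ j₂ => Q₁ (Q₂ w) j₁ j₂ k₃ with hm
      have hmP : m ∈ funcBlock (Vone v) (Vtwo v) := by
        constructor
        · apply bridge₁
          intro j₂
          exact hp₁mem _
        · intro j₁
          have hrow : m j₁ = p₂ (fun i => Q₁ w j₁ i k₃) := by
            funext j₂
            exact hcomm w j₁ j₂ k₃
          rw [hrow]
          exact hp₂mem _
      have hmW : m ∈ Wsp v := by rw [hWP]; exact hmP
      have hperp : ∀ x ∈ Wsp v, ∑ j₁, ∑ j₂, x j₁ j₂ * m j₁ j₂ = 0 := by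
        intro x hx
        refine Submodule.span_induction ?_ ?_ ?_ ?_ hx
        · rintro x ⟨j₃, rfl⟩
          calc ∑ j₁, ∑ j₂, v j₁ j₂ j₃ * m j₁ j₂
              = ∑ j₂, ∑ j₁, v j₁ j₂ j₃ * p₁ (fun i => Q₂ w i j₂ k₃) j₁ := by
                rw [Finset.sum_comm]
                rfl
            _ = ∑ j₂, ∑ j₁, v j₁ j₂ j₃ * Q₂ w j₁ j₂ k₃ := by
                refine Finset.sum_congr rfl fun j₂ _ => ?_
                exact dot_proj_eq hp₁orth _ _ (Submodule.subset_span ⟨(j₂, j₃), rfl⟩)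
            _ = ∑ j₁, ∑ j₂, v j₁ j₂ j₃ * p₂ (fun i => w j₁ i k₃) j₂ := by
                rw [Finset.sum_comm]
                rfl
            _ = ∑ j₁, ∑ j₂, v j₁ j₂ j₃ * w j₁ j₂ k₃ := by
                refine Finset.sum_congr rfl fun j₁ _ => ?_
                exact dot_proj_eq hp₂orth _ _ (Submodule.subset_span ⟨(j₁, j₃), rfl⟩)
            _ = 0 := hw1 j₃ k₃
        · simp
        · intro x y _ _ hx' hy'
          simp [add_mul, Finset.sum_add_distrib, hx', hy']
        · intro a x _ hx'
          have : ∑ j₁, ∑ j₂, (a • x) j₁ j₂ * m j₁ j₂ = a * ∑ j₁, ∑ j₂, x j₁ j₂ * m j₁ j₂ := by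
            simp [Finset.mul_sum, mul_assoc]
          rw [this, hx', mul_zero]
      exact sq_sum2_zero m (hperp m hmW)
    funext j₁ j₂ j₃
    exact congrFun (congrFun (hslice j₃) j₁) j₂
  have hcomm0 : Q₂ ∘ₗ Q₁ = Q₂ ∘ₗ Q₁ := rfl
  have hQQswap : ∀ w, Q₁ (Q₂ w) = 0 → Q₂ (Q₁ w) = 0 := by
    intro w h
    funext j₁ j₂ j₃
    rw [← hcomm]
    exact congrFun (congrFun (congrFun h j₁) j₂) j₃
  -- swap of the first two indices
  set σ : (Fin d₂ → Fin d₁ → Fin d₃ → ℝ) →ₗ[ℝ] (Fin d₁ → Fin d₂ → Fin d₃ → ℝ) :=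
    { toFun := fun w j₁ j₂ j₃ => w j₂ j₁ j₃
      map_add' := fun a b => rfl
      map_smul' := fun t a => rfl } with hσdef
  -- extraction of membership data
  have hextX₂₁ : ∀ a ∈ X₂₁, (∀ j₂ j₃, p₁ (fun i => a i j₂ j₃) = 0)
      ∧ (∀ j₁ j₃, (fun i => a j₁ i j₃) ∈ Vtwo v) ∧ (∀ k, ellOne v (a k) = 0) := by
    intro a ha
    obtain ⟨hcol, hrow⟩ := mem_funcBlock.1 ha
    refine ⟨fun j₂ j₃ => ?_, fun j₁ j₃ => ?_, fun k => ?_⟩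
    · have h9 := hcol (((LinearMap.proj j₃ : (Fin d₃ → ℝ) →ₗ[ℝ] ℝ)).comp
        (LinearMap.proj j₂ : (Fin d₂ → Fin d₃ → ℝ) →ₗ[ℝ] (Fin d₃ → ℝ)))
      exact LinearMap.mem_ker.1 h9
    · exact (Submodule.mem_inf.1 (hrow j₁)).1.1 (LinearMap.proj j₃)
    · exact LinearMap.mem_ker.1 (Submodule.mem_inf.1 (hrow k)).2
  have hextX₁₂ : ∀ b ∈ X₁₂, (∀ j₁ j₃, p₂ (fun i => b i j₁ j₃) = 0)
      ∧ (∀ j₂ j₃, (fun i => b j₂ i j₃) ∈ Vone v) ∧ (∀ k, ellTwo v (b k) = 0) := by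
    intro b hb
    obtain ⟨hcol, hrow⟩ := mem_funcBlock.1 hb
    refine ⟨fun j₁ j₃ => ?_, fun j₂ j₃ => ?_, fun k => ?_⟩
    · have h9 := hcol (((LinearMap.proj j₃ : (Fin d₃ → ℝ) →ₗ[ℝ] ℝ)).comp
        (LinearMap.proj j₁ : (Fin d₁ → Fin d₃ → ℝ) →ₗ[ℝ] (Fin d₃ → ℝ)))
      exact LinearMap.mem_ker.1 h9
    · exact (Submodule.mem_inf.1 (hrow j₂)).1.1 (LinearMap.proj j₃)
    · exact LinearMap.mem_ker.1 (Submodule.mem_inf.1 (hrow k)).2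
  have hextX₂₂ : ∀ c ∈ X₂₂, (∀ j₂ j₃, p₁ (fun i => c i j₂ j₃) = 0)
      ∧ (∀ j₁ j₃, p₂ (fun i => c j₁ i j₃) = 0) := by
    intro c hc
    obtain ⟨hcol, hrow⟩ := mem_funcBlock.1 hc
    refine ⟨fun j₂ j₃ => ?_, fun j₁ j₃ => ?_⟩
    · have h9 := hcol (((LinearMap.proj j₃ : (Fin d₃ → ℝ) →ₗ[ℝ] ℝ)).comp
        (LinearMap.proj j₂ : (Fin d₂ → Fin d₃ → ℝ) →ₗ[ℝ] (Fin d₃ → ℝ)))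
      exact LinearMap.mem_ker.1 h9
    · exact LinearMap.mem_ker.1 ((mem_funcBlock.1 (hrow j₁)).1 (LinearMap.proj j₃))
  -- the three spaces are inside S₄
  have hX₂₁S : ∀ a ∈ X₂₁, a ∈ S₄ v := by
    intro a ha
    obtain ⟨ha1, haY, haℓ⟩ := hextX₂₁ a ha
    refine ⟨fun j₃ k₃ => ?_, fun j₂ k₂ => ?_, fun j₁ k => ?_⟩
    · rw [Finset.sum_comm]
      refine Finset.sum_eq_zero fun j₂ _ => ?_
      exact dot_eq_zero_of_proj_zero hp₁orth (ha1 j₂ k₃) _ (Submodule.subset_span ⟨(j₂, j₃), rfl⟩)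
    · rw [Finset.sum_comm]
      refine Finset.sum_eq_zero fun j₃ _ => ?_
      exact dot_eq_zero_of_proj_zero hp₁orth (ha1 k₂ j₃) _ (Submodule.subset_span ⟨(j₂, j₃), rfl⟩)
    · exact congrFun (haℓ k) j₁
  have hX₁₂S : ∀ b ∈ X₁₂, σ b ∈ S₄ v := by
    intro b hb
    obtain ⟨hb1, hbY, hbℓ⟩ := hextX₁₂ b hb
    refine ⟨fun j₃ k₃ => ?_, fun j₂ k₂ => ?_, fun j₁ k => ?_⟩
    · refine Finset.sum_eq_zero fun j₁ _ => ?_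
      exact dot_eq_zero_of_proj_zero hp₂orth (hb1 j₁ k₃) _ (Submodule.subset_span ⟨(j₁, j₃), rfl⟩)
    · exact congrFun (hbℓ k₂) j₂
    · rw [Finset.sum_comm]
      refine Finset.sum_eq_zero fun j₃ _ => ?_
      exact dot_eq_zero_of_proj_zero hp₂orth (hb1 k j₃) _ (Submodule.subset_span ⟨(j₁, j₃), rfl⟩)
  have hX₂₂S : ∀ c ∈ X₂₂, c ∈ S₄ v := by
    intro c hc
    obtain ⟨hc1, hc2⟩ := hextX₂₂ c hc
    refine ⟨fun j₃ k₃ => ?_, fun j₂ k₂ => ?_, fun j₁ k => ?_⟩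
    · rw [Finset.sum_comm]
      refine Finset.sum_eq_zero fun j₂ _ => ?_
      exact dot_eq_zero_of_proj_zero hp₁orth (hc1 j₂ k₃) _ (Submodule.subset_span ⟨(j₂, j₃), rfl⟩)
    · rw [Finset.sum_comm]
      refine Finset.sum_eq_zero fun j₃ _ => ?_
      exact dot_eq_zero_of_proj_zero hp₁orth (hc1 k₂ j₃) _ (Submodule.subset_span ⟨(j₂, j₃), rfl⟩)
    · rw [Finset.sum_comm]
      refine Finset.sum_eq_zero fun j₃ _ => ?_
      exact dot_eq_zero_of_proj_zero hp₂orth (hc2 k j₃) _ (Submodule.subset_span ⟨(j₁, j₃), rfl⟩)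
  -- Q-action on members
  have hQ₂X₂₁ : ∀ a ∈ X₂₁, Q₂ a = a := by
    intro a ha
    obtain ⟨_, haY, _⟩ := hextX₂₁ a ha
    funext j₁ j₂ j₃
    show p₂ (fun i => a j₁ i j₃) j₂ = a j₁ j₂ j₃
    rw [hp₂fix _ (haY j₁ j₃)]
  have hQ₁X₂₁ : ∀ a ∈ X₂₁, Q₁ a = 0 := by
    intro a ha
    obtain ⟨ha1, _, _⟩ := hextX₂₁ a ha
    funext j₁ j₂ j₃
    show p₁ (fun i => a i j₂ j₃) j₁ = 0
    rw [ha1 j₂ j₃]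
    rfl
  have hQ₁X₁₂ : ∀ b ∈ X₁₂, Q₁ (σ b) = σ b := by
    intro b hb
    obtain ⟨_, hbY, _⟩ := hextX₁₂ b hb
    funext j₁ j₂ j₃
    show p₁ (fun i => b j₂ i j₃) j₁ = b j₂ j₁ j₃
    rw [hp₁fix _ (hbY j₂ j₃)]
  have hQ₂X₁₂ : ∀ b ∈ X₁₂, Q₂ (σ b) = 0 := by
    intro b hb
    obtain ⟨hb1, _, _⟩ := hextX₁₂ b hb
    funext j₁ j₂ j₃
    show p₂ (fun i => b i j₁ j₃) j₂ = 0
    rw [hb1 j₁ j₃]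
    rfl
  have hQ₁X₂₂ : ∀ c ∈ X₂₂, Q₁ c = 0 := by
    intro c hc
    obtain ⟨hc1, _⟩ := hextX₂₂ c hc
    funext j₁ j₂ j₃
    show p₁ (fun i => c i j₂ j₃) j₁ = 0
    rw [hc1 j₂ j₃]
    rfl
  have hQ₂X₂₂ : ∀ c ∈ X₂₂, Q₂ c = 0 := by
    intro c hc
    obtain ⟨_, hc2⟩ := hextX₂₂ c hc
    funext j₁ j₂ j₃
    show p₂ (fun i => c j₁ i j₃) j₂ = 0
    rw [hc2 j₁ j₃]
    rfl
  -- the sum map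
  set Fr : (X₂₁ × X₁₂ × X₂₂) →ₗ[ℝ] (Fin d₁ → Fin d₂ → Fin d₃ → ℝ) :=
    { toFun := fun x => (x.1 : Fin d₁ → Fin d₂ → Fin d₃ → ℝ) + σ (x.2.1 : Fin d₂ → Fin d₁ → Fin d₃ → ℝ)
        + (x.2.2 : Fin d₁ → Fin d₂ → Fin d₃ → ℝ)
      map_add' := by
        intro x y
        simp only [Prod.fst_add, Prod.snd_add, Submodule.coe_add, map_add]
        abel
      map_smul' := by
        intro t x
        simp only [Prod.smul_fst, Prod.smul_snd, Submodule.coe_smul, map_smul, RingHom.id_apply,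
          smul_add] } with hFrdef
  have hFmem : ∀ x, Fr x ∈ S₄ v := by
    intro x
    exact Submodule.add_mem _ (Submodule.add_mem _ (hX₂₁S _ (SetLike.coe_mem x.1))
      (hX₁₂S _ (SetLike.coe_mem x.2.1))) (hX₂₂S _ (SetLike.coe_mem x.2.2))
  set F := Fr.codRestrict (S₄ v) hFmem with hFdef
  have hinjF : Function.Injective F := by
    rw [injective_iff_map_eq_zero]
    rintro ⟨a, b, c⟩ hzero
    have hz : (a : Fin d₁ → Fin d₂ → Fin d₃ → ℝ) + σ (b : Fin d₂ → Fin d₁ → Fin d₃ → ℝ)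
        + (c : Fin d₁ → Fin d₂ → Fin d₃ → ℝ) = 0 := congrArg Subtype.val hzero
    have haz : (a : Fin d₁ → Fin d₂ → Fin d₃ → ℝ) = 0 := by
      have h6 := congrArg Q₂ hz
      rw [map_zero, map_add, map_add, hQ₂X₂₁ _ a.2, hQ₂X₁₂ _ b.2, hQ₂X₂₂ _ c.2] at h6
      simpa using h6
    have hbz : σ (b : Fin d₂ → Fin d₁ → Fin d₃ → ℝ) = 0 := by
      have h6 := congrArg Q₁ hz
      rw [map_zero, map_add, map_add, hQ₁X₂₁ _ a.2, hQ₁X₁₂ _ b.2, hQ₁X₂₂ _ c.2] at h6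
      simpa using h6
    have hbz' : (b : Fin d₂ → Fin d₁ → Fin d₃ → ℝ) = 0 := by
      funext j₂ j₁ j₃
      exact congrFun (congrFun (congrFun hbz j₁) j₂) j₃
    have hcz : (c : Fin d₁ → Fin d₂ → Fin d₃ → ℝ) = 0 := by
      rw [haz, hbz] at hz
      simpa using hz
    rw [Prod.ext_iff]
    refine ⟨Subtype.ext haz, ?_⟩
    rw [Prod.ext_iff]
    exact ⟨Subtype.ext hbz', Subtype.ext hcz⟩
  have hsurjF : Function.Surjective F := by
    rintro ⟨w, hw⟩
    obtain ⟨hw1, hw2, hw3⟩ := hw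
    have hQQ : Q₁ (Q₂ w) = 0 := hkey w ⟨hw1, hw2, hw3⟩
    have hQQ' : Q₂ (Q₁ w) = 0 := hQQswap w hQQ
    have haX : Q₂ w ∈ X₂₁ := by
      refine mem_funcBlock.2 ⟨?_, ?_⟩
      · intro φ
        apply bridge₂
        intro j₂ j₃
        show (fun i => Q₂ w i j₂ j₃) ∈ K₁
        rw [hK₁def, LinearMap.mem_ker]
        funext j₁
        exact congrFun (congrFun (congrFun hQQ j₁) j₂) j₃
      · intro k
        rw [hZ₂₁def]
        refine Submodule.mem_inf.2 ⟨mem_funcBlock.2 ⟨?_, fun _ => trivial⟩, ?_⟩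
        · intro φ
          apply bridge₁
          intro j₃
          show (fun j₂ => Q₂ w k j₂ j₃) ∈ Vtwo v
          exact hp₂mem _
        · rw [LinearMap.mem_ker]
          funext j₁
          show ∑ j₂, ∑ j₃, v j₁ j₂ j₃ * Q₂ w k j₂ j₃ = 0
          calc ∑ j₂, ∑ j₃, v j₁ j₂ j₃ * Q₂ w k j₂ j₃
              = ∑ j₃, ∑ j₂, v j₁ j₂ j₃ * p₂ (fun i => w k i j₃) j₂ := by
                rw [Finset.sum_comm]
                rfl
            _ = ∑ j₃, ∑ j₂, v j₁ j₂ j₃ * w k j₂ j₃ := by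
                refine Finset.sum_congr rfl fun j₃ _ => ?_
                exact dot_proj_eq hp₂orth _ _ (Submodule.subset_span ⟨(j₁, j₃), rfl⟩)
            _ = ∑ j₂, ∑ j₃, v j₁ j₂ j₃ * w k j₂ j₃ := by
                rw [Finset.sum_comm]
            _ = 0 := hw3 j₁ k
    have hbX : (fun j₂ j₁ j₃ => Q₁ w j₁ j₂ j₃) ∈ X₁₂ := by
      refine mem_funcBlock.2 ⟨?_, ?_⟩
      · intro φ
        apply bridge₂
        intro j₁ j₃
        show (fun i => Q₁ w j₁ i j₃) ∈ K₂
        rw [hK₂def, LinearMap.mem_ker]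
        funext j₂
        exact congrFun (congrFun (congrFun hQQ' j₁) j₂) j₃
      · intro k
        rw [hZ₁₂def]
        refine Submodule.mem_inf.2 ⟨mem_funcBlock.2 ⟨?_, fun _ => trivial⟩, ?_⟩
        · intro φ
          apply bridge₁
          intro j₃
          show (fun j₁ => Q₁ w j₁ k j₃) ∈ Vone v
          exact hp₁mem _
        · rw [LinearMap.mem_ker]
          funext j₂
          show ∑ j₁, ∑ j₃, v j₁ j₂ j₃ * Q₁ w j₁ k j₃ = 0
          calc ∑ j₁, ∑ j₃, v j₁ j₂ j₃ * Q₁ w j₁ k j₃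
              = ∑ j₃, ∑ j₁, v j₁ j₂ j₃ * p₁ (fun i => w i k j₃) j₁ := by
                rw [Finset.sum_comm]
                rfl
            _ = ∑ j₃, ∑ j₁, v j₁ j₂ j₃ * w j₁ k j₃ := by
                refine Finset.sum_congr rfl fun j₃ _ => ?_
                exact dot_proj_eq hp₁orth _ _ (Submodule.subset_span ⟨(j₂, j₃), rfl⟩)
            _ = ∑ j₁, ∑ j₃, v j₁ j₂ j₃ * w j₁ k j₃ := by
                rw [Finset.sum_comm]
            _ = 0 := hw2 j₂ k
    have hcX : w - Q₁ w - Q₂ w ∈ X₂₂ := by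
      refine mem_funcBlock.2 ⟨?_, ?_⟩
      · intro φ
        apply bridge₂
        intro j₂ j₃
        show (fun i => (w - Q₁ w - Q₂ w) i j₂ j₃) ∈ K₁
        rw [hK₁def, LinearMap.mem_ker]
        have hsplit : (fun i => (w - Q₁ w - Q₂ w) i j₂ j₃)
            = (fun i => w i j₂ j₃) - (fun i => Q₁ w i j₂ j₃) - (fun i => Q₂ w i j₂ j₃) := rfl
        rw [hsplit, map_sub, map_sub]
        have h7 : (fun i => Q₁ w i j₂ j₃) = p₁ (fun i => w i j₂ j₃) := rfl
        have h8 : p₁ (fun i => Q₂ w i j₂ j₃) = 0 := by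
          funext j₁
          exact congrFun (congrFun (congrFun hQQ j₁) j₂) j₃
        rw [h7, hp₁fix _ (hp₁mem _), h8]
        simp
      · intro j₁
        refine mem_funcBlock.2 ⟨?_, fun _ => trivial⟩
        intro φ
        apply bridge₁
        intro j₃
        show (fun i => (w - Q₁ w - Q₂ w) j₁ i j₃) ∈ K₂
        rw [hK₂def, LinearMap.mem_ker]
        have hsplit : (fun i => (w - Q₁ w - Q₂ w) j₁ i j₃)
            = (fun i => w j₁ i j₃) - (fun i => Q₁ w j₁ i j₃) - (fun i => Q₂ w j₁ i j₃) := rfl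
        rw [hsplit, map_sub, map_sub]
        have h7 : (fun i => Q₂ w j₁ i j₃) = p₂ (fun i => w j₁ i j₃) := rfl
        have h8 : p₂ (fun i => Q₁ w j₁ i j₃) = 0 := by
          funext j₂
          exact congrFun (congrFun (congrFun hQQ' j₁) j₂) j₃
        rw [h7, hp₂fix _ (hp₂mem _), h8]
        simp
    refine ⟨⟨⟨Q₂ w, haX⟩, ⟨(fun j₂ j₁ j₃ => Q₁ w j₁ j₂ j₃), hbX⟩, ⟨w - Q₁ w - Q₂ w, hcX⟩⟩, ?_⟩
    apply Subtype.ext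
    show Q₂ w + σ (fun j₂ j₁ j₃ => Q₁ w j₁ j₂ j₃) + (w - Q₁ w - Q₂ w) = w
    have hσb : σ (fun j₂ j₁ j₃ => Q₁ w j₁ j₂ j₃) = Q₁ w := rfl
    rw [hσb]
    abel
  -- assemble the dimension count
  have hfrS₄ : finrank ℝ (S₄ v) = finrank ℝ X₂₁ + (finrank ℝ X₁₂ + finrank ℝ X₂₂) := by
    rw [← LinearEquiv.finrank_eq (LinearEquiv.ofBijective F ⟨hinjF, hsurjF⟩)]
    rw [Module.finrank_prod, Module.finrank_prod]
  have hcast : (finrank ℝ (S₄ v) : ℤ)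
      = (finrank ℝ K₁ : ℤ) * finrank ℝ Z₂₁
        + ((finrank ℝ K₂ : ℤ) * finrank ℝ Z₁₂
        + (finrank ℝ K₁ : ℤ) * (finrank ℝ K₂ * d₃)) := by
    rw [hfrS₄, hX₂₁fr, hX₁₂fr, hX₂₂fr]
    push_cast
    ring
  rw [hcast]
  have e1 : (finrank ℝ K₁ : ℤ) = (d₁ : ℤ) - k₁ := by
    have := hK₁
    push_cast [← this]
    ring
  have e2 : (finrank ℝ K₂ : ℤ) = (d₂ : ℤ) - k₂ := by
    have := hK₂
    push_cast [← this]
    ring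
  have e3 : (finrank ℝ Z₂₁ : ℤ) = (k₂ : ℤ) * d₃ - k₁ := by
    have h9 : ((finrank ℝ Z₂₁ + k₁ : ℕ) : ℤ) = ((k₂ * d₃ : ℕ) : ℤ) := by
      exact_mod_cast congrArg (Nat.cast : ℕ → ℤ) hZ₂₁fr
    push_cast at h9
    linarith
  have e4 : (finrank ℝ Z₁₂ : ℤ) = (k₁ : ℤ) * d₃ - k₂ := by
    have h9 : ((finrank ℝ Z₁₂ + k₂ : ℕ) : ℤ) = ((k₁ * d₃ : ℕ) : ℤ) := by
      exact_mod_cast congrArg (Nat.cast : ℕ → ℤ) hZ₁₂fr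
    push_cast at h9
    linarith
  rw [e1, e2, e3, e4]
  ring

end MainProof



/-- **The intersection invariant when `(k₁, k₂, k₃) = (k₁, k₂, k₁k₂)`.**
If a tripartite state `v` of dimensions `(d₁, d₂, d₃)` has nullities
`n₁(v) = d₁ − k₁`, `n₂(v) = d₂ − k₂`, `n₃(v) = d₃ − k₁k₂`, then
`ñ₄(v) = d₁d₂d₃ − k₁d₁ − k₂d₂ − k₁k₂d₃ + k₁² + k₂²`, i.e. the set
`M_{k₁,k₂,k₁k₂} = (k₁² + k₂²)` is a singleton. -/
theorem intersection_invariant_of_k3_eq_k1_mul_k2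
    (d₁ d₂ d₃ k₁ k₂ : ℕ)
    (hd₁ : 0 < d₁) (hd₂ : 0 < d₂) (hd₃ : 0 < d₃)
    (hk₁ : 0 < k₁) (hk₂ : 0 < k₂)
    (hk₁d : k₁ ≤ d₁) (hk₂d : k₂ ≤ d₂) (hk₃d : k₁ * k₂ ≤ d₃)
    (v : Fin d₁ → Fin d₂ → Fin d₃ → ℝ)
    (h₁ : n₁ v = d₁ - k₁) (h₂ : n₂ v = d₂ - k₂) (h₃ : n₃ v = d₃ - k₁ * k₂) :
    (n₄ v : ℤ) = (d₁ : ℤ) * d₂ * d₃ - k₁ * d₁ - k₂ * d₂ - k₁ * k₂ * d₃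
      + (k₁ : ℤ) ^ 2 + (k₂ : ℤ) ^ 2 := by
  have h₁' : Module.finrank ℝ (S₁ v) = d₁ - k₁ := h₁
  have h₂' : Module.finrank ℝ (S₂ v) = d₂ - k₂ := h₂
  have h₃' : Module.finrank ℝ (S₃ v) = d₃ - k₁ * k₂ := h₃
  exact main_count d₁ d₂ d₃ k₁ k₂ hk₁d hk₂d hk₃d v h₁' h₂' h₃'
end
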